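/- arXiv:1601.07307 — 6 statements merged into one kernel-verified Lean document; each statement's English description precedes it below -/
import Mathlib

section
/- Let M be a countably infinite graph that is ≥k-homogeneous but not 1-homogeneous, with K_∞ embeddable in M, and let p be the infinite vertex orbit and q the finite vertex orbit. Then every vertex a in p is non-adjacent to at most k + |q| − 1 vertices of M. -/
open SimpleGraph

/-- `M` is `n`-homogeneous: every isomorphism between induced subgraphs on
finite vertex sets of size `n` extends to an automorphism of `M`. -/
def IsNHom {V : Type*} (M : SimpleGraph V) (n : ℕ) : Prop :=
  ∀ (s t : Set V), s.Finite → t.Finite → s.ncard = n → t.ncard = n →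
    ∀ f : M.induce s ≃g M.induce t, ∃ g : M ≃g M, ∀ x : s, g x.val = (f x).val

/-- `M` is `≥k`-homogeneous: `n`-homogeneous for all `n ≥ k`. -/
def GeqHom {V : Type*} (M : SimpleGraph V) (k : ℕ) : Prop :=
  ∀ n, k ≤ n → IsNHom M n

/-- `M` is homogeneous: `n`-homogeneous for all `n`. -/
def IsHomogeneous {V : Type*} (M : SimpleGraph V) : Prop :=
  ∀ n, IsNHom M n

/-- The countably infinite complete graph embeds into `M` as an induced subgraph. -/
def HasKInf {V : Type*} (M : SimpleGraph V) : Prop :=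
  Nonempty ((⊤ : SimpleGraph ℕ) ↪g M)

/-- `a` and `b` lie in the same orbit of vertices under `Aut(M)`. -/
def SameOrbit {V : Type*} (M : SimpleGraph V) (a b : V) : Prop :=
  ∃ g : M ≃g M, g a = b

/-- `s` is an orbit of vertices under `Aut(M)`. -/
def IsOrbit {V : Type*} (M : SimpleGraph V) (s : Set V) : Prop :=
  ∃ a, s = {b | SameOrbit M a b}

/-- The ordered pairs `(a,b)` and `(c,d)` lie in the same orbit under `Aut(M)`. -/
def SamePairOrbit {V : Type*} (M : SimpleGraph V) (a b c d : V) : Prop :=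
  ∃ g : M ≃g M, g a = c ∧ g b = d

/-- `a` and `b` lie in a common induced copy of `K_∞`. -/
def InCommonKInf {V : Type*} (M : SimpleGraph V) (a b : V) : Prop :=
  ∃ f : (⊤ : SimpleGraph ℕ) ↪g M, a ∈ Set.range f ∧ b ∈ Set.range f

/-- The 2-orbit `q₁`: adjacent pairs lying in a common induced `K_∞`. -/
def Q1Rel {V : Type*} (M : SimpleGraph V) (a b : V) : Prop :=
  M.Adj a b ∧ InCommonKInf M a b

/-- The 2-orbit `q₂`: adjacent pairs not lying in a common induced `K_∞`. -/
def Q2Rel {V : Type*} (M : SimpleGraph V) (a b : V) : Prop :=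
  M.Adj a b ∧ ¬ InCommonKInf M a b

/-- The 2-orbit `p₁`: non-adjacent pairs `(a,b)` such that `b` is adjacent to at
most `k-1` vertices of any induced `K_∞` containing `a`. -/
def P1Rel {V : Type*} (M : SimpleGraph V) (k : ℕ) (a b : V) : Prop :=
  a ≠ b ∧ ¬ M.Adj a b ∧
    ∀ f : (⊤ : SimpleGraph ℕ) ↪g M, a ∈ Set.range f →
      {c | c ∈ Set.range f ∧ M.Adj b c}.Finite ∧
      {c | c ∈ Set.range f ∧ M.Adj b c}.ncard ≤ k - 1

/-- The 2-orbit `p₂`: the remaining non-adjacent pairs of distinct vertices. -/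
def P2Rel {V : Type*} (M : SimpleGraph V) (k : ℕ) (a b : V) : Prop :=
  a ≠ b ∧ ¬ M.Adj a b ∧ ¬ P1Rel M k a b

/-- The graph `G_t` on `ℤ × {1,…,t}`, with `(a,i)` adjacent to `(b,j)` iff `a ≠ b`. -/
def Gt (t : ℕ) : SimpleGraph (ℤ × Fin t) where
  Adj x y := x.1 ≠ y.1
  symm := ⟨fun _ _ h => Ne.symm h⟩
  loopless := ⟨fun _ h => h rfl⟩

/-- The graph `H_{t,2}`: two copies of `G_t`, with `(a,i)` in the first copy
adjacent to `(b,j)` in the second copy iff `a = b`. -/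
def Ht2 (t : ℕ) : SimpleGraph ((ℤ × Fin t) ⊕ (ℤ × Fin t)) where
  Adj x y := match x, y with
    | .inl a, .inl b => a.1 ≠ b.1
    | .inr a, .inr b => a.1 ≠ b.1
    | .inl a, .inr b => a.1 = b.1
    | .inr a, .inl b => a.1 = b.1
  symm := by
    constructor
    rintro (a | a) (b | b) h <;> simp_all <;> omega
  loopless := by
    constructor
    rintro (a | a) h <;> exact h rfl

/-- The graph `H_{1,2}`: two disjoint copies of `K_∞` joined by a perfect matching. -/
def H12 : SimpleGraph (ℤ × Fin 2) where
  Adj x y := (x.2 = y.2 ∧ x.1 ≠ y.1) ∨ (x.1 = y.1 ∧ x.2 ≠ y.2)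
  symm := by
    constructor
    rintro x y (⟨h1, h2⟩ | ⟨h1, h2⟩)
    · exact Or.inl ⟨h1.symm, h2.symm⟩
    · exact Or.inr ⟨h1.symm, h2.symm⟩
  loopless := by
    constructor
    rintro x (⟨_, h⟩ | ⟨_, h⟩) <;> exact h rfl

section Aux

variable {V : Type*} {M : SimpleGraph V}

lemma sameOrbit_refl (a : V) : SameOrbit M a a := ⟨Iso.refl, rfl⟩

lemma sameOrbit_symm {a b : V} (h : SameOrbit M a b) : SameOrbit M b a := by
  obtain ⟨g, hg⟩ := h
  exact ⟨g.symm, by rw [← hg]; exact g.symm_apply_apply a⟩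

lemma sameOrbit_trans {a b c : V} (h1 : SameOrbit M a b) (h2 : SameOrbit M b c) :
    SameOrbit M a c := by
  obtain ⟨g, hg⟩ := h1
  obtain ⟨g', hg'⟩ := h2
  exact ⟨g.trans g', by show g' (g a) = c; rw [hg, hg']⟩

/-- If `x` lies in a `k`-clique `s` and `y` lies in a `k`-clique `t`, and `M` is
`k`-homogeneous, then `x` and `y` are in the same orbit. -/
lemma clique_orbit {k : ℕ} (hk : IsNHom M k) {s t : Set V} (hs : s.Finite) (ht : t.Finite)
    (hsk : s.ncard = k) (htk : t.ncard = k)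
    (hsc : ∀ x ∈ s, ∀ y ∈ s, x ≠ y → M.Adj x y)
    (htc : ∀ x ∈ t, ∀ y ∈ t, x ≠ y → M.Adj x y)
    {x y : V} (hx : x ∈ s) (hy : y ∈ t) : SameOrbit M x y := by
  classical
  have hfs : Finite s := hs.to_subtype
  have hft : Finite t := ht.to_subtype
  have hcard : Nat.card s = Nat.card t := by
    rw [Nat.card_coe_set_eq, Nat.card_coe_set_eq, hsk, htk]
  obtain ⟨e0⟩ := Finite.card_eq.mp hcard
  set e : s ≃ t := (Equiv.swap ⟨x, hx⟩ (e0.symm ⟨y, hy⟩)).trans e0 with he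
  have hex : e ⟨x, hx⟩ = ⟨y, hy⟩ := by
    simp [he, Equiv.swap_apply_left]
  have hadj : ∀ a b : s, M.Adj ((e a : t) : V) ((e b : t) : V) ↔ M.Adj a b := by
    intro a b
    constructor
    · intro h
      have hne : (a : V) ≠ (b : V) := by
        intro hab
        have : a = b := Subtype.ext hab
        subst this
        exact M.irrefl h
      exact hsc a a.2 b b.2 hne
    · intro h
      have hne : a ≠ b := by
        intro hab
        subst hab
        exact M.irrefl h
      have h2 : ((e a : t) : V) ≠ ((e b : t) : V) := by
        intro hc
        exact hne (e.injective (Subtype.ext hc))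
      exact htc _ (e a).2 _ (e b).2 h2
  obtain ⟨g, hg⟩ := hk s t hs ht hsk htk ⟨e, hadj _ _⟩
  refine ⟨g, ?_⟩
  have := hg ⟨x, hx⟩
  rw [this]
  show ((e ⟨x, hx⟩ : t) : V) = y
  rw [hex]

end Aux

theorem stmt2 {V : Type} [Countable V] [Infinite V] (M : SimpleGraph V) (k : ℕ)
    (hM : GeqHom M k) (h1 : ¬ IsNHom M 1) (hK : HasKInf M)
    (p q : Set V) (hp : IsOrbit M p) (hq : IsOrbit M q)
    (hpi : p.Infinite) (hqf : q.Finite) (hcover : p ∪ q = Set.univ) :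
    ∀ a ∈ p, {b | b ≠ a ∧ ¬ M.Adj a b}.Finite ∧
      {b | b ≠ a ∧ ¬ M.Adj a b}.ncard ≤ k + q.ncard - 1 := by
  classical
  have hk2 : 2 ≤ k := by
    by_contra hcon
    exact h1 (hM 1 (by omega))
  obtain ⟨a₀, hp'⟩ := hp
  obtain ⟨b₀, hq'⟩ := hq
  have hmp : ∀ x, x ∈ p ↔ SameOrbit M a₀ x := fun x => by rw [hp']; exact Iff.rfl
  have hmq : ∀ x, x ∈ q ↔ SameOrbit M b₀ x := fun x => by rw [hq']; exact Iff.rfl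
  have hpq : ∀ x, x ∈ p → x ∈ q → False := by
    intro x hxp hxq
    have hpe : p = q := by
      ext y
      rw [hmp, hmq]
      constructor
      · intro h
        exact sameOrbit_trans
          (sameOrbit_trans ((hmq x).mp hxq) (sameOrbit_symm ((hmp x).mp hxp))) h
      · intro h
        exact sameOrbit_trans
          (sameOrbit_trans ((hmp x).mp hxp) (sameOrbit_symm ((hmq x).mp hxq))) h
    exact hpi (hpe ▸ hqf)
  have hp_closed : ∀ x y, x ∈ p → SameOrbit M x y → y ∈ p := fun x y hx hxy =>
    (hmp y).mpr (sameOrbit_trans ((hmp x).mp hx) hxy)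
  have hq_closed : ∀ x y, x ∈ q → SameOrbit M x y → y ∈ q := fun x y hx hxy =>
    (hmq y).mpr (sameOrbit_trans ((hmq x).mp hx) hxy)
  have hpp : ∀ x y, x ∈ p → y ∈ p → SameOrbit M x y := fun x y hx hy =>
    sameOrbit_trans (sameOrbit_symm ((hmp x).mp hx)) ((hmp y).mp hy)
  obtain ⟨f₀⟩ := hK
  set K : Set V := Set.range f₀ with hKdef
  have hKinf : K.Infinite := Set.infinite_range_of_injective f₀.injective
  have hKcl : ∀ x ∈ K, ∀ y ∈ K, x ≠ y → M.Adj x y := by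
    rintro x ⟨i, rfl⟩ y ⟨j, rfl⟩ hxy
    have hij : i ≠ j := fun h => hxy (congrArg _ h)
    exact f₀.map_adj_iff.mpr ((SimpleGraph.top_adj i j).mpr hij)
  -- build a k-clique inside K containing any given element of K
  have hccl : ∀ x ∈ K, ∃ s : Set V, x ∈ s ∧ s ⊆ K ∧ s.Finite ∧ s.ncard = k ∧
      (∀ u ∈ s, ∀ v ∈ s, u ≠ v → M.Adj u v) := by
    intro x hx
    obtain ⟨C, hCsub, hCfin, hCcard⟩ :=
      (hKinf.diff (Set.finite_singleton x)).exists_subset_ncard_eq (k-1)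
    have hxC : x ∉ C := fun h => (hCsub h).2 rfl
    have hsubK : insert x C ⊆ K := by
      intro y hy
      rcases Set.mem_insert_iff.mp hy with rfl | hy'
      · exact hx
      · exact (hCsub hy').1
    refine ⟨insert x C, Set.mem_insert _ _, hsubK, hCfin.insert x, ?_, ?_⟩
    · rw [Set.ncard_insert_of_notMem hxC hCfin, hCcard]; omega
    · intro u hu v hv huv
      exact hKcl u (hsubK hu) v (hsubK hv) huv
  -- any member of a k-clique is in the same orbit as any member of K
  have hclK : ∀ (s : Set V), s.Finite → s.ncard = k →
      (∀ u ∈ s, ∀ v ∈ s, u ≠ v → M.Adj u v) → ∀ x ∈ s, ∀ y ∈ K, SameOrbit M x y := by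
    intro s hsf hsk hscl x hx y hy
    obtain ⟨t, hyt, _, htfin, htk, htcl⟩ := hccl y hy
    exact clique_orbit (hM k le_rfl) hsf htfin hsk htk hscl htcl hx hyt
  have hKp : K ⊆ p := by
    intro x hx
    have hx' : x ∈ p ∪ q := by rw [hcover]; exact Set.mem_univ x
    rcases hx' with h | h
    · exact h
    · exfalso
      obtain ⟨s, hxs, _, hsf, hsk, hscl⟩ := hccl x hx
      have horb : ∀ y ∈ K, SameOrbit M x y := fun y hy => hclK s hsf hsk hscl x hxs y hy
      have hKq : K ⊆ q := fun y hy => hq_closed x y h (horb y hy)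
      exact hKinf (hqf.subset hKq)
  -- no edges between q and p
  have hE : ∀ u ∈ q, ∀ v ∈ p, ¬ M.Adj u v := by
    intro u hu v hv hadj
    have hnbr : ∀ w ∈ p, ∃ u' ∈ q, M.Adj u' w := by
      intro w hw
      obtain ⟨g, hg⟩ := hpp v w hv hw
      refine ⟨g u, hq_closed u (g u) hu ⟨g, rfl⟩, ?_⟩
      have h2 : M.Adj (g u) (g v) := g.map_adj_iff.mpr hadj
      rwa [hg] at h2
    have hex : ∃ u₀ ∈ q, {x ∈ K | M.Adj u₀ x}.Infinite := by
      by_contra hcon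
      push_neg at hcon
      have hfin : ∀ u₀ ∈ q, {x ∈ K | M.Adj u₀ x}.Finite := fun u₀ h =>
        hcon u₀ h
      have hsub : K ⊆ ⋃ u₀ ∈ q, {x ∈ K | M.Adj u₀ x} := by
        intro x hx
        obtain ⟨u', hu', hadj'⟩ := hnbr x (hKp hx)
        exact Set.mem_biUnion hu' ⟨hx, hadj'⟩
      exact hKinf ((hqf.biUnion hfin).subset hsub)
    obtain ⟨u₀, hu₀, hA⟩ := hex
    obtain ⟨C, hCsub, hCfin, hCcard⟩ := hA.exists_subset_ncard_eq (k-1)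
    have hu₀C : u₀ ∉ C := fun h => hpq u₀ (hKp (hCsub h).1) hu₀
    have hscl : ∀ x ∈ insert u₀ C, ∀ y ∈ insert u₀ C, x ≠ y → M.Adj x y := by
      intro x hx y hy hxy
      rcases Set.mem_insert_iff.mp hx with rfl | hx' <;>
        rcases Set.mem_insert_iff.mp hy with rfl | hy'
      · exact absurd rfl hxy
      · exact (hCsub hy').2
      · exact ((hCsub hx').2).symm
      · exact hKcl x (hCsub hx').1 y (hCsub hy').1 hxy
    have hscard : (insert u₀ C).ncard = k := by
      rw [Set.ncard_insert_of_notMem hu₀C hCfin]; omega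
    have horb : SameOrbit M u₀ (f₀ 0) :=
      hclK _ (hCfin.insert u₀) hscard hscl u₀ (Set.mem_insert _ _) (f₀ 0) ⟨0, rfl⟩
    exact hpq u₀ (hp_closed (f₀ 0) u₀ (hKp ⟨0, rfl⟩) (sameOrbit_symm horb)) hu₀
  -- main argument
  intro a ha
  have hb₀q : b₀ ∈ q := (hmq b₀).mpr (sameOrbit_refl b₀)
  set X : Set V := {b | b ≠ a ∧ ¬ M.Adj a b} with hX
  have hkey : (X ∩ p).Finite ∧ (X ∩ p).ncard ≤ k - 1 := by
    by_contra hcon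
    have hB : ∃ B, B ⊆ X ∩ p ∧ B.Finite ∧ B.ncard = k := by
      rcases (X ∩ p).finite_or_infinite with hfin | hinf
      · have h1' : k ≤ (X ∩ p).ncard := by
          by_contra h2
          exact hcon ⟨hfin, by omega⟩
        obtain ⟨B, hBs, hBc⟩ := Set.exists_subset_card_eq h1'
        exact ⟨B, hBs, hfin.subset hBs, hBc⟩
      · obtain ⟨B, h1', h2', h3'⟩ := hinf.exists_subset_ncard_eq k
        exact ⟨B, h1', h2', h3'⟩
    obtain ⟨B, hBsub, hBfin, hBcard⟩ := hB
    have haB : a ∉ B := fun h => (hBsub h).1.1 rfl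
    have hbB : b₀ ∉ B := fun h => hpq b₀ (hBsub h).2 hb₀q
    have hab : a ≠ b₀ := fun h => hpq a ha (h ▸ hb₀q)
    have hmem : ∀ z, z ∈ insert a B ↔ (Equiv.swap a b₀) z ∈ insert b₀ B := by
      intro z
      rcases eq_or_ne z a with rfl | hz1
      · rw [Equiv.swap_apply_left]
        simp
      rcases eq_or_ne z b₀ with rfl | hz2
      · rw [Equiv.swap_apply_right]
        simp only [Set.mem_insert_iff]
        constructor
        · rintro (h | h)
          · exact absurd h (Ne.symm hab)
          · exact absurd h hbB
        · rintro (h | h)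
          · exact absurd h hab
          · exact absurd h haB
      · rw [Equiv.swap_apply_of_ne_of_ne hz1 hz2]
        simp [Set.mem_insert_iff, hz1, hz2]
    have key : ∀ z w : V, z ∈ insert a B → w ∈ insert a B →
        (M.Adj ((Equiv.swap a b₀) z) ((Equiv.swap a b₀) w) ↔ M.Adj z w) := by
      intro z w hz hw
      rcases Set.mem_insert_iff.mp hz with hz0 | hz' <;>
        rcases Set.mem_insert_iff.mp hw with hw0 | hw'
      · rw [hz0, hw0]
        rw [Equiv.swap_apply_left]
        exact iff_of_false (M.irrefl) (M.irrefl)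
      · have hwa : w ≠ a := (hBsub hw').1.1
        have hwb : w ≠ b₀ := fun h => hbB (h ▸ hw')
        rw [hz0, Equiv.swap_apply_left, Equiv.swap_apply_of_ne_of_ne hwa hwb]
        exact iff_of_false (hE b₀ hb₀q w (hBsub hw').2) (hBsub hw').1.2
      · have hza : z ≠ a := (hBsub hz').1.1
        have hzb : z ≠ b₀ := fun h => hbB (h ▸ hz')
        rw [hw0, Equiv.swap_apply_left, Equiv.swap_apply_of_ne_of_ne hza hzb]
        exact iff_of_false (fun h => hE b₀ hb₀q z (hBsub hz').2 h.symm)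
          (fun h => (hBsub hz').1.2 h.symm)
      · have hza : z ≠ a := (hBsub hz').1.1
        have hzb : z ≠ b₀ := fun h => hbB (h ▸ hz')
        have hwa : w ≠ a := (hBsub hw').1.1
        have hwb : w ≠ b₀ := fun h => hbB (h ▸ hw')
        rw [Equiv.swap_apply_of_ne_of_ne hza hzb, Equiv.swap_apply_of_ne_of_ne hwa hwb]
    have hscard : (insert a B).ncard = k + 1 := by
      rw [Set.ncard_insert_of_notMem haB hBfin, hBcard]
    have htcard : (insert b₀ B).ncard = k + 1 := by
      rw [Set.ncard_insert_of_notMem hbB hBfin, hBcard]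
    set e : ↥(insert a B) ≃ ↥(insert b₀ B) := (Equiv.swap a b₀).subtypeEquiv hmem with he
    obtain ⟨g, hg⟩ := hM (k+1) (by omega) (insert a B) (insert b₀ B)
      (hBfin.insert a) (hBfin.insert b₀) hscard htcard
      ⟨e, @fun x y => key x.1 y.1 x.2 y.2⟩
    have hga : g a = b₀ := by
      have h2 := hg ⟨a, Set.mem_insert a B⟩
      rw [h2]
      show ((e ⟨a, Set.mem_insert a B⟩ : ↥(insert b₀ B)) : V) = b₀
      simp [he, Equiv.swap_apply_left]
    exact hpq b₀ (hp_closed a b₀ ha ⟨g, hga⟩) hb₀q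
  obtain ⟨hfinp, hlep⟩ := hkey
  have hXsub : X ⊆ (X ∩ p) ∪ q := by
    intro b hb
    have hb' : b ∈ p ∪ q := by rw [hcover]; exact Set.mem_univ b
    rcases hb' with h | h
    · exact Or.inl ⟨hb, h⟩
    · exact Or.inr h
  have hXfin : X.Finite := (hfinp.union hqf).subset hXsub
  refine ⟨hXfin, ?_⟩
  have h2 : X.ncard ≤ ((X ∩ p) ∪ q).ncard :=
    Set.ncard_le_ncard hXsub (hfinp.union hqf)
  have h3 : ((X ∩ p) ∪ q).ncard ≤ (X ∩ p).ncard + q.ncard := Set.ncard_union_le _ _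
  omega
end

section
/- Let M be a countably infinite graph that is ≥k-homogeneous but not 1-homogeneous with K_∞ ⊆ M, and let p be the infinite vertex orbit. If a, b, c ∈ p are such that a is not adjacent to b and a is not adjacent to c, then b is not adjacent to c. In other words, non-adjacency restricted to p is a transitive relation on distinct vertices. -/
open SimpleGraph

namespace Stmt3Aux

variable {V : Type} {M : SimpleGraph V}

/-- Nonneighbours of `x` (excluding `x`). -/
def Nbar (M : SimpleGraph V) (x : V) : Set V := {v | v ≠ x ∧ ¬ M.Adj x v}

def IsCliqueSet (M : SimpleGraph V) (S : Set V) : Prop :=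
  ∀ u ∈ S, ∀ v ∈ S, u ≠ v → M.Adj u v

lemma clique_mono {S T : Set V} (h : S ⊆ T) (hT : IsCliqueSet M T) : IsCliqueSet M S :=
  fun u hu v hv huv => hT u (h hu) v (h hv) huv

lemma so_refl (a : V) : SameOrbit M a a := ⟨RelIso.refl _, rfl⟩

lemma so_symm {a b : V} (h : SameOrbit M a b) : SameOrbit M b a := by
  obtain ⟨g, rfl⟩ := h
  exact ⟨g.symm, g.symm_apply_apply a⟩

lemma so_trans {a b c : V} (h : SameOrbit M a b) (h' : SameOrbit M b c) :
    SameOrbit M a c := by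
  obtain ⟨g, rfl⟩ := h
  obtain ⟨g', rfl⟩ := h'
  exact ⟨g.trans g', rfl⟩

lemma orbit_map {p : Set V} (hp : IsOrbit M p) {v : V} (hv : v ∈ p) (g : M ≃g M) :
    g v ∈ p := by
  obtain ⟨a, rfl⟩ := hp
  exact so_trans hv ⟨g, rfl⟩

lemma orbit_rel {p : Set V} (hp : IsOrbit M p) {u v : V} (hu : u ∈ p) (hv : v ∈ p) :
    SameOrbit M u v := by
  obtain ⟨a, rfl⟩ := hp
  exact so_trans (so_symm hu) hv

lemma orbit_disjoint {p q : Set V} (hp : IsOrbit M p) (hq : IsOrbit M q)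
    (hpi : p.Infinite) (hqf : q.Finite) : ∀ v, v ∈ p → v ∈ q → False := by
  intro v hvp hvq
  obtain ⟨a, rfl⟩ := hp
  obtain ⟨a', rfl⟩ := hq
  apply hpi
  apply hqf.subset
  intro w hw
  exact so_trans (so_trans hvq (so_symm hvp)) hw

lemma infinite_of_cover {A T R : Set V} (hA : A.Infinite) (hsub : A ⊆ T ∪ R)
    (hR : R.Finite) : T.Infinite :=
  fun hT => hA ((hT.union hR).subset hsub)

noncomputable def setEquivOfNcard {s t : Set V} (hs : s.Finite) (ht : t.Finite)
    (h : s.ncard = t.ncard) : s ≃ t :=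
  (Equiv.subtypeEquivRight (fun v => (Set.Finite.mem_toFinset hs).symm)).trans
    ((Finset.equivOfCardEq (by
        rw [← Set.ncard_eq_toFinset_card s hs, ← Set.ncard_eq_toFinset_card t ht, h])).trans
      (Equiv.subtypeEquivRight (fun v => Set.Finite.mem_toFinset ht)))

lemma clique_adj_iff {S T : Set V}
    (hS : ∀ u ∈ S, ∀ v ∈ S, u ≠ v → M.Adj u v)
    (hT : ∀ u ∈ T, ∀ v ∈ T, u ≠ v → M.Adj u v)
    (ψ : S ≃ T) : ∀ u v : S, M.Adj u v ↔ M.Adj (ψ u) (ψ v) := by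
  intro u v
  constructor
  · intro h
    refine hT _ (ψ u).2 _ (ψ v).2 ?_
    intro hc
    exact h.ne (congrArg Subtype.val (ψ.injective (Subtype.ext hc)))
  · intro h
    refine hS _ u.2 _ v.2 ?_
    intro hc
    exact h.ne (congrArg (fun z => ((ψ z : T) : V)) (Subtype.ext hc : u = v))

def insEquiv [DecidableEq V] (x y : V) (F F' : Set V) (hx : x ∉ F) (hy : y ∉ F')
    (φ : F ≃ F') : (insert x F : Set V) ≃ (insert y F' : Set V) where
  toFun v := if h : v.val = x then ⟨y, Set.mem_insert _ _⟩
    else ⟨(φ ⟨v.val, ((Set.mem_insert_iff.mp v.2).resolve_left h)⟩).val,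
      Set.mem_insert_of_mem _ (φ _).2⟩
  invFun w := if h : w.val = y then ⟨x, Set.mem_insert _ _⟩
    else ⟨(φ.symm ⟨w.val, ((Set.mem_insert_iff.mp w.2).resolve_left h)⟩).val,
      Set.mem_insert_of_mem _ (φ.symm _).2⟩
  left_inv := by
    rintro ⟨v, hv⟩
    by_cases h : v = x
    · simp only [h, dif_pos]
    · simp only [dif_neg h]
      have hne : (φ ⟨v, (Set.mem_insert_iff.mp hv).resolve_left h⟩).val ≠ y := by
        intro hc
        exact hy (hc ▸ (φ _).2)
      simp only [dif_neg hne]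
      apply Subtype.ext
      simp only
      have : (⟨(φ ⟨v, (Set.mem_insert_iff.mp hv).resolve_left h⟩).val,
          (Set.mem_insert_iff.mp (Set.mem_insert_of_mem y (φ _).2)).resolve_left hne⟩ : F') =
          φ ⟨v, (Set.mem_insert_iff.mp hv).resolve_left h⟩ := Subtype.ext rfl
      rw [this, Equiv.symm_apply_apply]
  right_inv := by
    rintro ⟨w, hw⟩
    by_cases h : w = y
    · simp only [h, dif_pos]
    · simp only [dif_neg h]
      have hne : (φ.symm ⟨w, (Set.mem_insert_iff.mp hw).resolve_left h⟩).val ≠ x := by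
        intro hc
        exact hx (hc ▸ (φ.symm _).2)
      simp only [dif_neg hne]
      apply Subtype.ext
      simp only
      have : (⟨(φ.symm ⟨w, (Set.mem_insert_iff.mp hw).resolve_left h⟩).val,
          (Set.mem_insert_iff.mp (Set.mem_insert_of_mem x (φ.symm _).2)).resolve_left hne⟩ : F) =
          φ.symm ⟨w, (Set.mem_insert_iff.mp hw).resolve_left h⟩ := Subtype.ext rfl
      rw [this, Equiv.apply_symm_apply]

lemma insEquiv_apply_left [DecidableEq V] (x y : V) (F F' : Set V) (hx : x ∉ F) (hy : y ∉ F')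
    (φ : F ≃ F') (v : (insert x F : Set V)) (hv : v.val = x) :
    (insEquiv x y F F' hx hy φ v).val = y := by
  simp only [insEquiv, Equiv.coe_fn_mk, hv, dif_pos]

lemma insEquiv_apply_mem [DecidableEq V] (x y : V) (F F' : Set V) (hx : x ∉ F) (hy : y ∉ F')
    (φ : F ≃ F') (v : (insert x F : Set V)) (hv : v.val ∈ F) :
    (insEquiv x y F F' hx hy φ v).val = (φ ⟨v.val, hv⟩).val := by
  have h : v.val ≠ x := fun hc => hx (hc ▸ hv)
  simp only [insEquiv, Equiv.coe_fn_mk, dif_neg h]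

def adjIso (s t : Set V) (ψ : s ≃ t) (h : ∀ u v : s, M.Adj u v ↔ M.Adj (ψ u) (ψ v)) :
    M.induce s ≃g M.induce t :=
  { ψ with
    map_rel_iff' := by
      intro u v
      simp only [SimpleGraph.induce, comap_adj, Equiv.toFun_as_coe]
      exact (h u v).symm }

lemma adjIso_apply (s t : Set V) (ψ : s ≃ t)
    (h : ∀ u v : s, M.Adj u v ↔ M.Adj (ψ u) (ψ v)) (u : s) :
    (adjIso s t ψ h) u = ψ u := rfl

/-- The central collision lemma: a `p`-vertex and a `q`-vertex which look alike
over a base of size `≥ k - 1` would be in the same orbit, a contradiction. -/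
lemma collision {k : ℕ} {p q : Set V} (hM : GeqHom M k) (hp : IsOrbit M p)
    (hpq : ∀ v, v ∈ p → v ∈ q → False)
    {x y : V} (hxp : x ∈ p) (hyq : y ∈ q)
    (F F' : Set V) (hF : F.Finite) (hF' : F'.Finite)
    (hx : x ∉ F) (hy : y ∉ F') (hcard : F.ncard = F'.ncard) (hk : k ≤ F.ncard + 1)
    (φ : F ≃ F')
    (hφ : ∀ u v : F, M.Adj u v ↔ M.Adj (φ u) (φ v))
    (hpat : ∀ v : F, M.Adj x v ↔ M.Adj y (φ v)) : False := by
  classical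
  set ψ := insEquiv x y F F' hx hy φ with hψ
  have hadj : ∀ u v : (insert x F : Set V), M.Adj u v ↔ M.Adj (ψ u) (ψ v) := by
    intro u v
    rcases Set.mem_insert_iff.mp u.2 with hu | hu <;>
      rcases Set.mem_insert_iff.mp v.2 with hv | hv
    · have h1 : (ψ u).val = y := insEquiv_apply_left x y F F' hx hy φ u hu
      have h2 : (ψ v).val = y := insEquiv_apply_left x y F F' hx hy φ v hv
      rw [hu, hv, h1, h2]
      exact ⟨fun h => absurd h (M.irrefl), fun h => absurd h (M.irrefl)⟩
    · have h1 : (ψ u).val = y := insEquiv_apply_left x y F F' hx hy φ u hu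
      have h2 : (ψ v).val = (φ ⟨v.val, hv⟩).val := insEquiv_apply_mem x y F F' hx hy φ v hv
      rw [hu, h1, h2]
      exact hpat ⟨v.val, hv⟩
    · have h1 : (ψ u).val = (φ ⟨u.val, hu⟩).val := insEquiv_apply_mem x y F F' hx hy φ u hu
      have h2 : (ψ v).val = y := insEquiv_apply_left x y F F' hx hy φ v hv
      rw [hv, h1, h2, M.adj_comm (u : V) x, M.adj_comm _ y]
      exact hpat ⟨u.val, hu⟩
    · have h1 : (ψ u).val = (φ ⟨u.val, hu⟩).val := insEquiv_apply_mem x y F F' hx hy φ u hu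
      have h2 : (ψ v).val = (φ ⟨v.val, hv⟩).val := insEquiv_apply_mem x y F F' hx hy φ v hv
      rw [h1, h2]
      exact hφ ⟨u.val, hu⟩ ⟨v.val, hv⟩
  have hfin1 : (insert x F : Set V).Finite := hF.insert x
  have hfin2 : (insert y F' : Set V).Finite := hF'.insert y
  have hn1 : (insert x F : Set V).ncard = F.ncard + 1 := Set.ncard_insert_of_notMem hx hF
  have hn2 : (insert y F' : Set V).ncard = F.ncard + 1 := by
    rw [Set.ncard_insert_of_notMem hy hF', hcard]
  obtain ⟨g, hg⟩ := hM (F.ncard + 1) hk (insert x F) (insert y F') hfin1 hfin2 hn1 hn2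
    (adjIso _ _ ψ hadj)
  have hgx : g x = y := by
    have h := hg ⟨x, Set.mem_insert _ _⟩
    rw [h, adjIso_apply]
    exact insEquiv_apply_left x y F F' hx hy φ _ rfl
  exact hpq y (hgx ▸ orbit_map hp hxp g) hyq

end Stmt3Aux

namespace Stmt3Aux

variable {V : Type} {M : SimpleGraph V}

lemma range_infinite (f : (⊤ : SimpleGraph ℕ) ↪g M) : (Set.range f).Infinite :=
  Set.infinite_range_of_injective f.injective

lemma range_clique (f : (⊤ : SimpleGraph ℕ) ↪g M) : IsCliqueSet M (Set.range f) := by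
  rintro u ⟨i, rfl⟩ v ⟨j, rfl⟩ huv
  have hij : i ≠ j := fun h => huv (congrArg f h)
  rw [f.map_adj_iff]
  simpa using hij

lemma exists_clique_containing {p : Set V} (hp : IsOrbit M p) {v : V} (hv : v ∈ p)
    {A : Set V} (hAinf : A.Infinite) (hAcl : IsCliqueSet M A) (hApinf : (A ∩ p).Infinite) :
    ∃ B : Set V, B.Infinite ∧ IsCliqueSet M B ∧ v ∈ B := by
  obtain ⟨w, hwA, hwp⟩ := hApinf.nonempty
  obtain ⟨g, hg⟩ := orbit_rel hp hwp hv
  refine ⟨g '' A, hAinf.image (g.injective.injOn), ?_, ⟨w, hwA, hg⟩⟩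
  rintro _ ⟨u, hu, rfl⟩ _ ⟨u', hu', rfl⟩ hne
  have huu : u ≠ u' := fun h => hne (by rw [h])
  exact g.map_rel_iff.mpr (hAcl u hu u' hu' huu)

/-- A `q`-vertex is adjacent to only finitely many vertices of an infinite clique. -/
lemma q_nbhd_finite {k : ℕ} {p q : Set V} (hM : GeqHom M k) (hp : IsOrbit M p)
    (hpq : ∀ v, v ∈ p → v ∈ q → False)
    {A : Set V} (hAcl : IsCliqueSet M A) (hApinf : (A ∩ p).Infinite)
    {y : V} (hyq : y ∈ q) : (A ∩ {v | M.Adj y v}).Finite := by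
  by_contra hinf
  have hinf' : (A ∩ {v | M.Adj y v}).Infinite := hinf
  obtain ⟨D, hDsub, hDcard⟩ := hinf'.exists_subset_card_eq k
  obtain ⟨x', hx'⟩ := (hApinf.diff D.finite_toSet).nonempty
  refine collision hM hp hpq hx'.1.2 hyq (↑D) (↑D) D.finite_toSet D.finite_toSet
    hx'.2 (fun h => M.irrefl (hDsub h).2) rfl ?_ (Equiv.refl _) (fun u v => Iff.rfl) ?_
  · rw [Set.ncard_coe_finset, hDcard]
    omega
  · intro v
    refine iff_of_true ?_ (hDsub v.2).2
    exact hAcl x' hx'.1.1 v (hDsub v.2).1 (fun h => hx'.2 (h ▸ v.2))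

/-- No `(k-1)`-clique inside the non-neighbourhood of a `p`-vertex. -/
lemma no_clique_in_nbar {k : ℕ} {p q : Set V} (hM : GeqHom M k) (hp : IsOrbit M p)
    (hq : IsOrbit M q) (hpq : ∀ v, v ∈ p → v ∈ q → False) (hk2 : 2 ≤ k)
    {A : Set V} (hAinf : A.Infinite) (hAcl : IsCliqueSet M A) (hApinf : (A ∩ p).Infinite)
    {x : V} (hxp : x ∈ p) {C : Set V} (hCfin : C.Finite) (hCsub : C ⊆ Nbar M x)
    (hCcl : IsCliqueSet M C) (hCcard : C.ncard = k - 1) : False := by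
  obtain ⟨aq, hqE⟩ := hq
  have hy : aq ∈ q := by rw [hqE]; exact so_refl aq
  have hNyfin := q_nbhd_finite hM hp hpq hAcl hApinf hy
  have hTinf : (A \ ((A ∩ {v | M.Adj aq v}) ∪ {aq})).Infinite := by
    refine infinite_of_cover hAinf ?_ (hNyfin.union (Set.finite_singleton aq))
    intro v hv
    by_cases h : v ∈ (A ∩ {w | M.Adj aq w}) ∪ {aq}
    · exact Or.inr h
    · exact Or.inl ⟨hv, h⟩
  obtain ⟨C', hC'sub, hC'card⟩ := hTinf.exists_subset_card_eq (k - 1)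
  have hcard : C.ncard = (↑C' : Set V).ncard := by
    rw [Set.ncard_coe_finset, hC'card, hCcard]
  refine collision hM hp hpq hxp hy C (↑C') hCfin C'.finite_toSet
    (fun h => (hCsub h).1 rfl) (fun h => (hC'sub h).2 (Or.inr rfl)) hcard ?_
    (setEquivOfNcard hCfin C'.finite_toSet hcard) ?_ ?_
  · rw [hCcard]; omega
  · exact clique_adj_iff hCcl (clique_mono (fun v hv => (hC'sub hv).1) hAcl) _
  · intro v
    refine iff_of_false (hCsub v.2).2 ?_
    intro h
    have hmem := ((setEquivOfNcard hCfin C'.finite_toSet hcard) v).2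
    exact (hC'sub hmem).2 (Or.inl ⟨(hC'sub hmem).1, h⟩)

end Stmt3Aux

namespace Stmt3Aux

variable {V : Type} {M : SimpleGraph V}

/-- Growth lemma: given a "bad triple" `(a; b, c)`, the non-neighbourhood
(within `p`) of any `p`-vertex `d₀` of the clique `A` is infinite. -/
lemma growth {k : ℕ} {p : Set V} (hM : GeqHom M k) (hp : IsOrbit M p) (hk2 : 2 ≤ k)
    (caseB : ∀ x ∈ p, ∀ C : Set V, C.Finite → C ⊆ Nbar M x → IsCliqueSet M C →
      C.ncard ≠ k - 1)
    {A : Set V} (hAcl : IsCliqueSet M A) (hApinf : (A ∩ p).Infinite)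
    {a b c : V} (hap : a ∈ p) (hcp : c ∈ p)
    {B : Set V} (hBinf : B.Infinite) (hBcl : IsCliqueSet M B) (hbB : b ∈ B)
    (hnab : ¬ M.Adj a b) (hnac : ¬ M.Adj a c) (hbc : M.Adj b c)
    (hne_ab : a ≠ b) (hne_ac : a ≠ c)
    {d₀ : V} (hd₀ : d₀ ∈ A ∩ p) :
    (Nbar M d₀ ∩ p).Infinite := by
  classical
  by_contra hfin0
  have hfin : (Nbar M d₀ ∩ p).Finite := Set.not_infinite.mp hfin0
  set N := (Nbar M d₀ ∩ p).ncard with hN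
  have hfinBa : (B ∩ Nbar M a).Finite := by
    by_contra hi
    have hi' : (B ∩ Nbar M a).Infinite := hi
    obtain ⟨C, hCsub, hCcard⟩ := hi'.exists_subset_card_eq (k - 1)
    exact caseB a hap ↑C C.finite_toSet (fun v hv => (hCsub hv).2)
      (clique_mono (fun v hv => (hCsub hv).1) hBcl)
      (by rw [Set.ncard_coe_finset, hCcard])
  have hfinBc : (B ∩ Nbar M c).Finite := by
    by_contra hi
    have hi' : (B ∩ Nbar M c).Infinite := hi
    obtain ⟨C, hCsub, hCcard⟩ := hi'.exists_subset_card_eq (k - 1)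
    exact caseB c hcp ↑C C.finite_toSet (fun v hv => (hCsub hv).2)
      (clique_mono (fun v hv => (hCsub hv).1) hBcl)
      (by rw [Set.ncard_coe_finset, hCcard])
  set L := max k (N + 2) with hL
  have hLk : k ≤ L := le_max_left _ _
  have hLN : N + 2 ≤ L := le_max_right _ _
  have hL2 : 2 ≤ L := le_trans hk2 hLk
  -- choose the padding clique E
  have hSEinf : (B \ (((B ∩ Nbar M a) ∪ (B ∩ Nbar M c)) ∪ {a, b, c})).Infinite :=
    hBinf.diff ((hfinBa.union hfinBc).union
      (((Set.finite_singleton c).insert b).insert a))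
  obtain ⟨E, hEsub, hEcard⟩ := hSEinf.exists_subset_card_eq (L - 2)
  have hEprop : ∀ e ∈ (↑E : Set V), e ∈ B ∧ M.Adj a e ∧ M.Adj c e ∧ M.Adj b e ∧
      e ≠ a ∧ e ≠ b ∧ e ≠ c := by
    intro e he
    obtain ⟨heB, hnot⟩ := hEsub he
    have hea : e ≠ a := by
      intro h
      exact hnot (Or.inr (by simp [h]))
    have heb : e ≠ b := by
      intro h
      exact hnot (Or.inr (by simp [h]))
    have hec : e ≠ c := by
      intro h
      exact hnot (Or.inr (by simp [h]))
    have hadj_a : M.Adj a e := by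
      by_contra hn
      exact hnot (Or.inl (Or.inl ⟨heB, hea, hn⟩))
    have hadj_c : M.Adj c e := by
      by_contra hn
      exact hnot (Or.inl (Or.inr ⟨heB, hec, hn⟩))
    exact ⟨heB, hadj_a, hadj_c, hBcl b hbB e heB (fun h => heb h.symm), hea, heb, hec⟩
  -- choose the target clique Q
  obtain ⟨Q, hQsub, hQcard⟩ :=
    (hApinf.diff (Set.finite_singleton d₀)).exists_subset_card_eq (L - 1)
  have hd₀Q : d₀ ∉ (↑Q : Set V) := fun h => (hQsub h).2 rfl
  -- the key construction
  have key : ∀ s' ∈ Q, ∃ x : V, x ∈ Nbar M d₀ ∩ p ∧ ¬ M.Adj x s' ∧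
      ∀ w ∈ Q.erase s', M.Adj x w := by
    intro s' hs'
    set W := Q.erase s' with hWdef
    have hWcard : W.card = L - 2 := by
      rw [hWdef, Finset.card_erase_of_mem hs', hQcard]
      omega
    have hs'Ap : s' ∈ A ∩ p := (hQsub (Finset.mem_coe.mpr hs')).1
    have hs'd₀ : s' ≠ d₀ := fun h => (hQsub (Finset.mem_coe.mpr hs')).2 h
    have hWsubQ : (↑W : Set V) ⊆ (↑Q : Set V) := fun w hw =>
      Finset.mem_coe.mpr (Finset.mem_of_mem_erase (Finset.mem_coe.mp hw))
    have hcE : c ∉ (↑E : Set V) := fun h => (hEprop c h).2.2.2.2.2.2 rfl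
    have hs'W : s' ∉ (↑W : Set V) := fun h => Finset.notMem_erase s' Q (Finset.mem_coe.mp h)
    have hEWcard : (↑E : Set V).ncard = (↑W : Set V).ncard := by
      rw [Set.ncard_coe_finset, Set.ncard_coe_finset, hEcard, hWcard]
    have hbIn : b ∉ (insert c (↑E : Set V)) := by
      rintro (h | h)
      · exact hbc.ne h
      · exact (hEprop b h).2.2.2.2.2.1 rfl
    have hd₀In : d₀ ∉ (insert s' (↑W : Set V)) := by
      rintro (h | h)
      · exact hs'd₀ h.symm
      · exact hd₀Q (hWsubQ h)
    obtain ⟨σ, hσb, hσc⟩ :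
        ∃ σ : ((insert b (insert c (↑E : Set V)) : Set V) ≃
          (insert d₀ (insert s' (↑W : Set V)) : Set V)),
          (σ ⟨b, Set.mem_insert _ _⟩).val = d₀ ∧
          (σ ⟨c, Set.mem_insert_of_mem _ (Set.mem_insert _ _)⟩).val = s' := by
      refine ⟨insEquiv b d₀ (insert c (↑E)) (insert s' (↑W)) hbIn hd₀In
        (insEquiv c s' (↑E) (↑W) hcE hs'W
          (setEquivOfNcard E.finite_toSet W.finite_toSet hEWcard)), ?_, ?_⟩
      · exact insEquiv_apply_left b d₀ (insert c (↑E)) (insert s' (↑W)) hbIn hd₀In _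
          ⟨b, Set.mem_insert _ _⟩ rfl
      · have h1 := insEquiv_apply_mem b d₀ (insert c (↑E)) (insert s' (↑W)) hbIn hd₀In
          (insEquiv c s' (↑E) (↑W) hcE hs'W
            (setEquivOfNcard E.finite_toSet W.finite_toSet hEWcard))
          ⟨c, Set.mem_insert_of_mem _ (Set.mem_insert _ _)⟩ (Set.mem_insert _ _)
        have h2 := insEquiv_apply_left c s' (↑E) (↑W) hcE hs'W
          (setEquivOfNcard E.finite_toSet W.finite_toSet hEWcard) ⟨c, Set.mem_insert _ _⟩ rfl
        exact h1.trans h2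
    have hS₀cl : IsCliqueSet M (insert b (insert c (↑E : Set V))) := by
      rintro u hu v hv huv
      rcases Set.mem_insert_iff.mp hu with rfl | hu'
      · rcases Set.mem_insert_iff.mp hv with rfl | hv'
        · exact absurd rfl huv
        · rcases Set.mem_insert_iff.mp hv' with rfl | hv''
          · exact hbc
          · exact (hEprop v hv'').2.2.2.1
      · rcases Set.mem_insert_iff.mp hu' with rfl | hu''
        · rcases Set.mem_insert_iff.mp hv with rfl | hv'
          · exact M.adj_symm hbc
          · rcases Set.mem_insert_iff.mp hv' with rfl | hv''
            · exact absurd rfl huv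
            · exact (hEprop v hv'').2.2.1
        · rcases Set.mem_insert_iff.mp hv with rfl | hv'
          · exact M.adj_symm ((hEprop u hu'').2.2.2.1)
          · rcases Set.mem_insert_iff.mp hv' with rfl | hv''
            · exact M.adj_symm ((hEprop u hu'').2.2.1)
            · exact hBcl u (hEprop u hu'').1 v (hEprop v hv'').1 huv
    have hT₀sub : (insert d₀ (insert s' (↑W : Set V))) ⊆ A := by
      rintro w (rfl | hw)
      · exact hd₀.1
      · rcases hw with rfl | hw'
        · exact hs'Ap.1
        · exact (hQsub (hWsubQ hw')).1.1
    have hT₀cl : IsCliqueSet M (insert d₀ (insert s' (↑W : Set V))) := clique_mono hT₀sub hAcl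
    have hadj := clique_adj_iff hS₀cl hT₀cl σ
    have hfinS : (insert b (insert c (↑E : Set V))).Finite := (E.finite_toSet.insert c).insert b
    have hfinT : (insert d₀ (insert s' (↑W : Set V))).Finite := (W.finite_toSet.insert s').insert d₀
    have hncS : (insert b (insert c (↑E : Set V))).ncard = L := by
      rw [Set.ncard_insert_of_notMem hbIn (E.finite_toSet.insert c),
        Set.ncard_insert_of_notMem hcE E.finite_toSet, Set.ncard_coe_finset, hEcard]
      omega
    have hncT : (insert d₀ (insert s' (↑W : Set V))).ncard = L := by
      rw [Set.ncard_insert_of_notMem hd₀In (W.finite_toSet.insert s'),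
        Set.ncard_insert_of_notMem hs'W W.finite_toSet, Set.ncard_coe_finset, hWcard]
      omega
    obtain ⟨g, hg⟩ := hM L hLk _ _ hfinS hfinT hncS hncT (adjIso _ _ σ hadj)
    have hgb : g b = d₀ := by
      have h := hg ⟨b, Set.mem_insert _ _⟩
      rw [h, adjIso_apply]
      exact hσb
    have hgc : g c = s' := by
      have h := hg ⟨c, Set.mem_insert_of_mem _ (Set.mem_insert _ _)⟩
      rw [h, adjIso_apply]
      exact hσc
    refine ⟨g a, ⟨⟨?_, ?_⟩, orbit_map hp hap g⟩, ?_, ?_⟩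
    · rw [← hgb]
      exact fun h => hne_ab (g.injective h)
    · rw [← hgb]
      intro h
      exact hnab (M.adj_symm (g.map_rel_iff.mp h))
    · rw [← hgc]
      intro h
      exact hnac (g.map_rel_iff.mp h)
    · intro w hw
      have hwW : w ∈ (↑W : Set V) := Finset.mem_coe.mpr hw
      have hwT : w ∈ (insert d₀ (insert s' (↑W : Set V))) := Set.mem_insert_of_mem _ (Set.mem_insert_of_mem _ hwW)
      set u := σ.symm ⟨w, hwT⟩ with hu
      have hσu : ((σ u : (insert d₀ (insert s' (↑W : Set V)) : Set V)) : V) = w := by rw [hu, Equiv.apply_symm_apply]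
      have hgu : g u.val = w := by rw [hg u, adjIso_apply, hσu]
      rcases Set.mem_insert_iff.mp u.2 with h1 | h1
      · exfalso
        rw [h1, hgb] at hgu
        exact hd₀Q (hWsubQ (hgu ▸ hwW))
      · rcases Set.mem_insert_iff.mp h1 with h2 | h2
        · exfalso
          rw [h2, hgc] at hgu
          exact Finset.notMem_erase w Q (hgu ▸ hw)
        · have hadj_au : M.Adj a u.val := (hEprop _ h2).2.1
          have h3 := g.map_rel_iff.mpr hadj_au
          rwa [hgu] at h3
  choose! ξ hξ using key
  have hcount : Q.card ≤ hfin.toFinset.card := by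
    apply Finset.card_le_card_of_injOn ξ
    · intro s' hs'
      rw [Finset.mem_coe, Set.Finite.mem_toFinset]
      exact (hξ s' hs').1
    · intro s₁ h₁ s₂ h₂ he
      by_contra hne
      have h₁' : s₁ ∈ Q.erase s₂ :=
        Finset.mem_erase.mpr ⟨hne, Finset.mem_coe.mp h₁⟩
      have hadj12 := (hξ s₂ (Finset.mem_coe.mp h₂)).2.2 s₁ h₁'
      rw [← he] at hadj12
      exact (hξ s₁ (Finset.mem_coe.mp h₁)).2.1 hadj12
  rw [hQcard, ← Set.ncard_eq_toFinset_card _ hfin] at hcount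
  omega

end Stmt3Aux

theorem stmt3 {V : Type} [Countable V] [Infinite V] (M : SimpleGraph V) (k : ℕ)
    (hM : GeqHom M k) (h1 : ¬ IsNHom M 1) (hK : HasKInf M)
    (p q : Set V) (hp : IsOrbit M p) (hq : IsOrbit M q)
    (hpi : p.Infinite) (hqf : q.Finite) (hcover : p ∪ q = Set.univ) :
    ∀ a ∈ p, ∀ b ∈ p, ∀ c ∈ p, a ≠ b → a ≠ c →
      ¬ M.Adj a b → ¬ M.Adj a c → ¬ M.Adj b c := by
  classical
  intro a ha b hb c hc hneab hneac hnab hnac hbc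
  rcases Nat.lt_or_ge k 2 with hklt | hk2
  · exact h1 (hM 1 (by omega))
  have hpq : ∀ v, v ∈ p → v ∈ q → False := Stmt3Aux.orbit_disjoint hp hq hpi hqf
  obtain ⟨f⟩ := hK
  have hAinf : (Set.range f).Infinite := Stmt3Aux.range_infinite f
  have hAcl := Stmt3Aux.range_clique f
  have hApinf : (Set.range f ∩ p).Infinite := by
    refine Stmt3Aux.infinite_of_cover hAinf ?_ hqf
    intro v hv
    have hvpq : v ∈ p ∪ q := by rw [hcover]; trivial
    rcases hvpq with h | h
    · exact Or.inl ⟨hv, h⟩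
    · exact Or.inr h
  by_cases hcase : ∃ x ∈ p, ∃ C : Set V, C.Finite ∧ C ⊆ Stmt3Aux.Nbar M x ∧
      Stmt3Aux.IsCliqueSet M C ∧ C.ncard = k - 1
  · obtain ⟨x, hxp, C, hCf, hCs, hCc, hCn⟩ := hcase
    exact Stmt3Aux.no_clique_in_nbar hM hp hq hpq hk2 hAinf hAcl hApinf hxp hCf hCs hCc hCn
  · push_neg at hcase
    obtain ⟨B, hBinf, hBcl, hbB⟩ := Stmt3Aux.exists_clique_containing hp hb hAinf hAcl hApinf
    obtain ⟨d₀, hd₀⟩ := hApinf.nonempty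
    have hgrow : (Stmt3Aux.Nbar M d₀ ∩ p).Infinite :=
      Stmt3Aux.growth hM hp hk2 hcase hAcl hApinf ha hc hBinf hBcl hbB hnab hnac hbc
        hneab hneac hd₀
    by_cases hB1 : ∃ y ∈ q, ∃ F : Finset V,
        (↑F : Set V) ⊆ Stmt3Aux.Nbar M y ∩ (Stmt3Aux.Nbar M d₀ ∩ p) ∧ F.card = k - 1
    · obtain ⟨y, hyq, F, hFsub, hFcard⟩ := hB1
      refine Stmt3Aux.collision hM hp hpq hd₀.2 hyq (↑F) (↑F) F.finite_toSet F.finite_toSet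
        ?_ ?_ rfl ?_ (Equiv.refl _) (fun u v => Iff.rfl) ?_
      · exact fun h => ((hFsub h).2.1).1 rfl
      · exact fun h => hpq y ((hFsub h).2.2) hyq
      · rw [Set.ncard_coe_finset, hFcard]
        omega
      · intro v
        exact iff_of_false ((hFsub v.2).2.1).2 ((hFsub v.2).1).2
    · push_neg at hB1
      have hfins : ∀ y ∈ q, (Stmt3Aux.Nbar M y ∩ (Stmt3Aux.Nbar M d₀ ∩ p)).Finite := by
        intro y hy
        by_contra hi
        have hi' : (Stmt3Aux.Nbar M y ∩ (Stmt3Aux.Nbar M d₀ ∩ p)).Infinite := hi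
        obtain ⟨F, hFs, hFc⟩ := hi'.exists_subset_card_eq (k - 1)
        exact hB1 y hy F hFs hFc
      have hU : (⋃ y ∈ q, (Stmt3Aux.Nbar M y ∩ (Stmt3Aux.Nbar M d₀ ∩ p))).Finite :=
        hqf.biUnion hfins
      obtain ⟨r, hr⟩ := (hgrow.diff hU).nonempty
      have hradj : ∀ y ∈ q, M.Adj y r := by
        intro y hy
        by_contra hn
        apply hr.2
        exact Set.mem_biUnion hy ⟨⟨fun h => hpq y (h ▸ hr.1.2) hy, hn⟩, hr.1⟩
      have hall : ∀ v ∈ p, ∀ y ∈ q, M.Adj v y := by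
        intro v hv y hy
        obtain ⟨g, hg⟩ := Stmt3Aux.orbit_rel hp hr.1.2 hv
        have hy' : g.symm y ∈ q := Stmt3Aux.orbit_map hq hy g.symm
        have h2 : M.Adj r (g.symm y) := M.adj_symm (hradj _ hy')
        have h3 := g.map_rel_iff.mpr h2
        rw [hg] at h3
        rwa [g.apply_symm_apply] at h3
      obtain ⟨aq, hqE⟩ := hq
      have hy₀ : aq ∈ q := by rw [hqE]; exact Stmt3Aux.so_refl aq
      obtain ⟨D, hDsub, hDcard⟩ := hApinf.exists_subset_card_eq k
      obtain ⟨x', hx'⟩ := (hApinf.diff D.finite_toSet).nonempty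
      refine Stmt3Aux.collision hM hp hpq hx'.1.2 hy₀ (↑D) (↑D) D.finite_toSet D.finite_toSet
        hx'.2 (fun h => hpq aq (hDsub h).2 hy₀) rfl ?_ (Equiv.refl _) (fun u v => Iff.rfl) ?_
      · rw [Set.ncard_coe_finset, hDcard]
        omega
      · intro v
        refine iff_of_true ?_ ?_
        · exact hAcl x' hx'.1.1 v (hDsub v.2).1 (fun h => hx'.2 (h ▸ v.2))
        · exact M.adj_symm (hall v (hDsub v.2).2 aq hy₀)
end

section
/- Let M be a countably infinite graph that is ≥k-homogeneous and 1-homogeneous but not 2-homogeneous, with K_∞ ⊆ M. Then M has at most two orbits (under Aut(M) acting on pairs) of ordered pairs of adjacent vertices, and at most two orbits of ordered pairs of distinct non-adjacent vertices. -/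
open SimpleGraph

section Aux

variable {V : Type} {M : SimpleGraph V} {k : ℕ}

lemma myextend (hM : GeqHom M k) (n : ℕ) (hn : k ≤ n) (u v : Fin n → V)
    (hu : Function.Injective u) (hv : Function.Injective v)
    (hadj : ∀ i j, M.Adj (u i) (u j) ↔ M.Adj (v i) (v j)) :
    ∃ g : M ≃g M, ∀ i, g (u i) = v i := by
  have hcard : ∀ (w : Fin n → V), Function.Injective w → (Set.range w).ncard = n := by
    intro w hw
    rw [← Nat.card_coe_set_eq]
    rw [Nat.card_congr (Equiv.ofInjective w hw).symm, Nat.card_eq_fintype_card, Fintype.card_fin]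
  have he : ∀ i : Fin n,
      ((Equiv.ofInjective u hu).symm.trans (Equiv.ofInjective v hv)) ⟨u i, Set.mem_range_self i⟩
        = ⟨v i, Set.mem_range_self i⟩ := by
    intro i
    have : ((Equiv.ofInjective u hu).symm ⟨u i, Set.mem_range_self i⟩) = i :=
      Equiv.ofInjective_symm_apply hu i
    simp [Equiv.trans_apply, this, Equiv.ofInjective_apply]
  have hrel : ∀ x y : (Set.range u : Set V),
      (M.induce (Set.range v)).Adj
        (((Equiv.ofInjective u hu).symm.trans (Equiv.ofInjective v hv)) x)
        (((Equiv.ofInjective u hu).symm.trans (Equiv.ofInjective v hv)) y)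
      ↔ (M.induce (Set.range u)).Adj x y := by
    intro x y
    obtain ⟨i, hi⟩ := x.2
    obtain ⟨j, hj⟩ := y.2
    have hx : x = ⟨u i, Set.mem_range_self i⟩ := Subtype.ext hi.symm
    have hy : y = ⟨u j, Set.mem_range_self j⟩ := Subtype.ext hj.symm
    subst hx; subst hy
    rw [he i, he j]
    simpa [comap_adj] using (hadj i j).symm
  obtain ⟨g, hg⟩ := hM n hn (Set.range u) (Set.range v)
    (Set.finite_range u) (Set.finite_range v) (hcard u hu) (hcard v hv)
    ⟨(Equiv.ofInjective u hu).symm.trans (Equiv.ofInjective v hv), hrel _ _⟩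
  refine ⟨g, fun i => ?_⟩
  have := hg ⟨u i, Set.mem_range_self i⟩
  exact this.trans (congrArg Subtype.val (he i))

lemma choosew (f : (⊤ : SimpleGraph ℕ) ↪g M) (B : Set V) (hB : B.Finite) (m : ℕ) :
    ∃ w : Fin m → V, Function.Injective w ∧ (∀ p, w p ∈ Set.range f) ∧ ∀ p, w p ∉ B := by
  have hT : {n : ℕ | f n ∈ B}.Finite := by
    have : {n : ℕ | f n ∈ B} = f ⁻¹' B := rfl
    rw [this]
    exact Set.Finite.preimage f.injective.injOn hB
  have emb := hT.infinite_compl.natEmbedding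
  refine ⟨fun p => f ((emb p.val).val), ?_, ?_, ?_⟩
  · intro p q h
    exact Fin.val_injective (emb.injective (Subtype.val_injective (f.injective h)))
  · exact fun p => Set.mem_range_self _
  · intro p hp
    exact (emb p.val).2 hp

lemma myparam (s : Set V) (hs : s.Finite) (m : ℕ) (hm : s.ncard = m) :
    ∃ w : Fin m → V, Function.Injective w ∧ Set.range w = s := by
  have : Fintype s := hs.fintype
  have hc : hs.toFinset.card = m := by
    rw [← Set.ncard_eq_toFinset_card s hs, hm]
  have e := hs.toFinset.equivFinOfCardEq hc
  refine ⟨fun p => (e.symm p).val, ?_, ?_⟩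
  · intro p q h
    exact e.symm.injective (Subtype.val_injective h)
  · ext x
    constructor
    · rintro ⟨p, rfl⟩
      exact hs.mem_toFinset.mp (e.symm p).2
    · intro hx
      exact ⟨e ⟨x, hs.mem_toFinset.mpr hx⟩, by simp⟩

lemma rangeAdj (f : (⊤ : SimpleGraph ℕ) ↪g M) {x y : V} (hx : x ∈ Set.range f)
    (hy : y ∈ Set.range f) (hxy : x ≠ y) : M.Adj x y := by
  obtain ⟨i, rfl⟩ := hx
  obtain ⟨j, rfl⟩ := hy
  exact f.map_adj_iff.mpr (by simpa using fun h => hxy (congrArg f h))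

lemma buildpat (f : (⊤ : SimpleGraph ℕ) ↪g M) (a b : V) (ha : a ∈ Set.range f)
    (hab : a ≠ b) (m : ℕ) (w : Fin m → V) (hw : Function.Injective w)
    (hwf : ∀ p, w p ∈ Set.range f) (hwa : ∀ p, w p ≠ a) (hwb : ∀ p, w p ≠ b)
    (c₁ c₂ : Prop) (hba : M.Adj b a ↔ c₁) (hbw : ∀ p, M.Adj b (w p) ↔ c₂) :
    ∃ u : Fin (m+2) → V, Function.Injective u ∧ u 0 = b ∧ u 1 = a ∧
      ∀ p q : Fin (m+2), M.Adj (u p) (u q) ↔ (p ≠ q ∧ ((p.val = 0 ∨ q.val = 0) →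
        ((p.val = 1 ∨ q.val = 1) → c₁) ∧ (¬(p.val = 1 ∨ q.val = 1) → c₂))) := by
  refine ⟨fun p => if h0 : p.val = 0 then b else if h1 : p.val = 1 then a else
    w ⟨p.val - 2, by omega⟩, ?_, by simp, by simp, ?_⟩
  · intro p q h
    by_cases hp0 : p.val = 0 <;> by_cases hq0 : q.val = 0 <;>
      by_cases hp1 : p.val = 1 <;> by_cases hq1 : q.val = 1 <;>
      simp [hp0, hq0, hp1, hq1] at h ⊢ <;>
      first
        | omega
        | (exact absurd h.symm hab)
        | (exact absurd h hab)
        | (exact absurd h.symm (hwb _))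
        | (exact absurd h (hwb _))
        | (exact absurd h.symm (hwa _))
        | (exact absurd h (hwa _))
        | (have := hw (Subtype.ext_iff.mp (Subtype.ext h)); omega)
        | (have : (⟨p.val - 2, by omega⟩ : Fin m) = ⟨q.val - 2, by omega⟩ := hw h
           have := Fin.val_eq_val _ _ |>.mpr this
           simp at this; omega)
  · intro p q
    by_cases hp0 : p.val = 0
    · by_cases hq0 : q.val = 0
      · have hpq : p = q := Fin.ext (hp0.trans hq0.symm)
        simp only [dif_pos hp0, dif_pos hq0]
        exact iff_of_false (M.irrefl) (by simp [hpq])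
      · by_cases hq1 : q.val = 1
        · have hpq : p ≠ q := by intro hh; rw [Fin.ext_iff] at hh; omega
          simp only [dif_pos hp0, dif_neg hq0, dif_pos hq1]
          rw [hba]
          constructor
          · intro h
            exact ⟨hpq, fun _ => ⟨fun _ => h, fun hc => absurd (Or.inr hq1) hc⟩⟩
          · rintro ⟨-, h⟩
            exact (h (Or.inl hp0)).1 (Or.inr hq1)
        · have hpq : p ≠ q := by intro hh; rw [Fin.ext_iff] at hh; omega
          simp only [dif_pos hp0, dif_neg hq0, dif_neg hq1]
          rw [hbw]
          constructor
          · intro h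
            exact ⟨hpq, fun _ => ⟨fun hc => by omega, fun _ => h⟩⟩
          · rintro ⟨-, h⟩
            exact (h (Or.inl hp0)).2 (by omega)
    · by_cases hp1 : p.val = 1
      · by_cases hq0 : q.val = 0
        · have hpq : p ≠ q := by intro hh; rw [Fin.ext_iff] at hh; omega
          simp only [dif_neg hp0, dif_pos hp1, dif_pos hq0]
          rw [M.adj_comm, hba]
          constructor
          · intro h
            exact ⟨hpq, fun _ => ⟨fun _ => h, fun hc => absurd (Or.inl hp1) hc⟩⟩
          · rintro ⟨-, h⟩
            exact (h (Or.inr hq0)).1 (Or.inl hp1)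
        · by_cases hq1 : q.val = 1
          · have hpq : p = q := Fin.ext (hp1.trans hq1.symm)
            simp only [dif_neg hp0, dif_pos hp1, dif_neg hq0, dif_pos hq1]
            exact iff_of_false (M.irrefl) (by simp [hpq])
          · have hpq : p ≠ q := by intro hh; rw [Fin.ext_iff] at hh; omega
            simp only [dif_neg hp0, dif_pos hp1, dif_neg hq0, dif_neg hq1]
            refine iff_of_true ?_ ⟨hpq, fun hc => by omega⟩
            exact (rangeAdj f (hwf _) ha (hwa _)).symm
      · by_cases hq0 : q.val = 0
        · have hpq : p ≠ q := by intro hh; rw [Fin.ext_iff] at hh; omega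
          simp only [dif_neg hp0, dif_neg hp1, dif_pos hq0]
          rw [M.adj_comm, hbw]
          constructor
          · intro h
            exact ⟨hpq, fun _ => ⟨fun hc => by omega, fun _ => h⟩⟩
          · rintro ⟨-, h⟩
            exact (h (Or.inr hq0)).2 (by omega)
        · by_cases hq1 : q.val = 1
          · have hpq : p ≠ q := by intro hh; rw [Fin.ext_iff] at hh; omega
            simp only [dif_neg hp0, dif_neg hp1, dif_neg hq0, dif_pos hq1]
            refine iff_of_true ?_ ⟨hpq, fun hc => by omega⟩
            exact rangeAdj f (hwf _) ha (hwa _)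
          · simp only [dif_neg hp0, dif_neg hp1, dif_neg hq0, dif_neg hq1]
            constructor
            · intro h
              refine ⟨fun hc => ?_, fun hc => by omega⟩
              subst hc
              exact M.irrefl h
            · rintro ⟨hpq, -⟩
              refine rangeAdj f (hwf _) (hwf _) ?_
              intro hc
              have h2 : (p.val - 2) = (q.val - 2) := congrArg Fin.val (hw hc)
              exact hpq (Fin.val_injective (by omega))

lemma memK (h1 : IsNHom M 1) (hK : HasKInf M) (a : V) :
    ∃ f : (⊤ : SimpleGraph ℕ) ↪g M, a ∈ Set.range f := by
  obtain ⟨f⟩ := hK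
  have hsing : ∀ x : V, ({x} : Set V).ncard = 1 := fun x => Set.ncard_singleton x
  have e : ({f 0} : Set V) ≃ ({a} : Set V) :=
    ⟨fun _ => ⟨a, rfl⟩, fun _ => ⟨f 0, rfl⟩,
     fun x => Subtype.ext x.2.symm, fun x => Subtype.ext x.2.symm⟩
  have hrel : ∀ x y : ({f 0} : Set V),
      (M.induce {a}).Adj (e x) (e y) ↔ (M.induce {f 0}).Adj x y := by
    intro x y
    have hx : x = y := Subtype.ext (x.2.trans y.2.symm)
    subst hx
    exact iff_of_false (M.irrefl) (M.irrefl)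
  obtain ⟨g, hg⟩ := h1 {f 0} {a} (Set.finite_singleton _) (Set.finite_singleton _)
    (hsing _) (hsing _) ⟨e, hrel _ _⟩
  refine ⟨f.trans g.toEmbedding, ?_⟩
  refine ⟨0, ?_⟩
  have := hg ⟨f 0, rfl⟩
  have h2 : ((⟨e, hrel _ _⟩ : M.induce {f 0} ≃g M.induce {a}) ⟨f 0, rfl⟩ : V) = a :=
    ((⟨e, hrel _ _⟩ : M.induce {f 0} ≃g M.induce {a}) ⟨f 0, rfl⟩).2
  simp only [Embedding.coe_comp, Function.comp_apply]
  exact this.trans h2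

lemma buildK (a b : V) (hab : M.Adj a b) (S : Set V) (hS : S.Infinite)
    (haS : a ∉ S) (hbS : b ∉ S)
    (hSa : ∀ x ∈ S, M.Adj a x) (hSb : ∀ x ∈ S, M.Adj b x)
    (hclq : ∀ x ∈ S, ∀ y ∈ S, x ≠ y → M.Adj x y) :
    InCommonKInf M a b := by
  have emb := hS.natEmbedding
  set F : ℕ → V := fun p => if p = 0 then a else if p = 1 then b else (emb (p-2)).val with hF
  have hmem : ∀ p : ℕ, p ≠ 0 → p ≠ 1 → F p ∈ S := by
    intro p h0 h1
    simp only [hF, if_neg h0, if_neg h1]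
    exact (emb (p-2)).2
  have hF0 : F 0 = a := by simp [hF]
  have hF1 : F 1 = b := by simp [hF]
  have hFadj : ∀ p q : ℕ, p ≠ q → M.Adj (F p) (F q) := by
    intro p q hpq
    by_cases hp0 : p = 0
    · by_cases hq0 : q = 0
      · omega
      · by_cases hq1 : q = 1
        · rw [hp0, hq1, hF0, hF1]; exact hab
        · rw [hp0, hF0]; exact hSa _ (hmem q hq0 hq1)
    · by_cases hp1 : p = 1
      · by_cases hq0 : q = 0
        · rw [hp1, hq0, hF0, hF1]; exact hab.symm
        · by_cases hq1 : q = 1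
          · omega
          · rw [hp1, hF1]; exact hSb _ (hmem q hq0 hq1)
      · by_cases hq0 : q = 0
        · rw [hq0, hF0]; exact (hSa _ (hmem p hp0 hp1)).symm
        · by_cases hq1 : q = 1
          · rw [hq1, hF1]; exact (hSb _ (hmem p hp0 hp1)).symm
          · refine hclq _ (hmem p hp0 hp1) _ (hmem q hq0 hq1) ?_
            simp only [hF, if_neg hp0, if_neg hp1, if_neg hq0, if_neg hq1]
            intro hc
            have := emb.injective (Subtype.val_injective hc)
            omega
  have Finj : Function.Injective F := by
    intro p q h
    by_contra hpq
    exact (hFadj p q hpq).ne h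
  refine ⟨⟨⟨F, Finj⟩, ?_⟩, ⟨0, hF0⟩, ⟨1, hF1⟩⟩
  · intro p q
    simp only [top_adj, Function.Embedding.coeFn_mk]
    exact ⟨fun h hc => M.irrefl (hc ▸ h), hFadj p q⟩


lemma q2fin (f : (⊤ : SimpleGraph ℕ) ↪g M) {a b : V} (haf : a ∈ Set.range f)
    (hadj : M.Adj a b) (hno : ¬ InCommonKInf M a b) :
    {x | x ∈ Set.range f ∧ M.Adj b x}.Finite := by
  by_contra hinf
  have hinf' : {x | x ∈ Set.range ⇑f ∧ M.Adj b x}.Infinite := hinf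
  apply hno
  refine buildK a b hadj ({x | x ∈ Set.range f ∧ M.Adj b x} \ {a})
    (hinf'.diff (Set.finite_singleton a)) ?_ ?_ ?_ ?_ ?_
  · simp
  · rintro ⟨⟨-, hb⟩, -⟩
    exact M.irrefl hb
  · rintro x ⟨⟨hxf, -⟩, hxa⟩
    exact rangeAdj f haf hxf (fun h => hxa (by simp [← h]))
  · rintro x ⟨⟨-, hbx⟩, -⟩
    exact hbx
  · rintro x ⟨⟨hxf, -⟩, -⟩ y ⟨⟨hyf, -⟩, -⟩ hxy
    exact rangeAdj f hxf hyf hxy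

lemma pairconc (hM : GeqHom M k) {m : ℕ} (hm : k ≤ m + 2) {a b c d : V}
    (u v : Fin (m+2) → V) (hu : Function.Injective u) (hv : Function.Injective v)
    (hu0 : u 0 = b) (hu1 : u 1 = a) (hv0 : v 0 = d) (hv1 : v 1 = c)
    (hadj : ∀ p q, M.Adj (u p) (u q) ↔ M.Adj (v p) (v q)) :
    SamePairOrbit M a b c d := by
  obtain ⟨g, hg⟩ := myextend hM (m+2) hm u v hu hv hadj
  refine ⟨g, ?_, ?_⟩
  · have h := hg 1
    rw [hu1, hv1] at h
    exact h
  · have h := hg 0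
    rw [hu0, hv0] at h
    exact h

lemma q1trans (hM : GeqHom M k) (hk : 3 ≤ k) {a b c d : V}
    (hab : Q1Rel M a b) (hcd : Q1Rel M c d) : SamePairOrbit M a b c d := by
  obtain ⟨hadj, f, haf, hbf⟩ := hab
  obtain ⟨hadj', f', hcf, hdf⟩ := hcd
  obtain ⟨w, hw, hwf, hwB⟩ := choosew (M := M) f {a, b}
    ((Set.finite_singleton b).insert a) (k - 2)
  obtain ⟨w', hw', hwf', hwB'⟩ := choosew (M := M) f' {c, d}
    ((Set.finite_singleton d).insert c) (k - 2)
  obtain ⟨u, hu, hu0, hu1, hupat⟩ := buildpat f a b haf hadj.ne (k-2) w hw hwf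
    (fun p h => hwB p (by simp [h])) (fun p h => hwB p (by simp [h])) True True
    (iff_of_true hadj.symm trivial)
    (fun p => iff_of_true (rangeAdj f hbf (hwf p) (fun h => hwB p (by simp [← h]))) trivial)
  obtain ⟨v, hv, hv0, hv1, hvpat⟩ := buildpat f' c d hcf hadj'.ne (k-2) w' hw' hwf'
    (fun p h => hwB' p (by simp [h])) (fun p h => hwB' p (by simp [h])) True True
    (iff_of_true hadj'.symm trivial)
    (fun p => iff_of_true (rangeAdj f' hdf (hwf' p) (fun h => hwB' p (by simp [← h]))) trivial)
  exact pairconc hM (by omega) u v hu hv hu0 hu1 hv0 hv1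
    (fun p q => (hupat p q).trans (hvpat p q).symm)

lemma q2trans (hM : GeqHom M k) (h1 : IsNHom M 1) (hK : HasKInf M) (hk : 3 ≤ k)
    {a b c d : V} (hab : Q2Rel M a b) (hcd : Q2Rel M c d) : SamePairOrbit M a b c d := by
  obtain ⟨hadj, hno⟩ := hab
  obtain ⟨hadj', hno'⟩ := hcd
  obtain ⟨f, haf⟩ := memK h1 hK a
  obtain ⟨f', hcf⟩ := memK h1 hK c
  have hbf : b ∉ Set.range f := fun hb => hno ⟨f, haf, hb⟩
  have hdf : d ∉ Set.range f' := fun hd => hno' ⟨f', hcf, hd⟩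
  have hfin := q2fin f haf hadj hno
  have hfin' := q2fin f' hcf hadj' hno'
  obtain ⟨w, hw, hwf, hwB⟩ := choosew (M := M) f
    ({x | x ∈ Set.range f ∧ M.Adj b x} ∪ {a, b})
    (hfin.union ((Set.finite_singleton b).insert a)) (k - 1)
  obtain ⟨w', hw', hwf', hwB'⟩ := choosew (M := M) f'
    ({x | x ∈ Set.range f' ∧ M.Adj d x} ∪ {c, d})
    (hfin'.union ((Set.finite_singleton d).insert c)) (k - 1)
  obtain ⟨u, hu, hu0, hu1, hupat⟩ := buildpat f a b haf hadj.ne (k-1) w hw hwf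
    (fun p h => hwB p (by simp [h])) (fun p h => hwB p (by simp [h])) True False
    (iff_of_true hadj.symm trivial)
    (fun p => iff_of_false (fun hc => hwB p (Or.inl ⟨hwf p, hc⟩)) not_false)
  obtain ⟨v, hv, hv0, hv1, hvpat⟩ := buildpat f' c d hcf hadj'.ne (k-1) w' hw' hwf'
    (fun p h => hwB' p (by simp [h])) (fun p h => hwB' p (by simp [h])) True False
    (iff_of_true hadj'.symm trivial)
    (fun p => iff_of_false (fun hc => hwB' p (Or.inl ⟨hwf' p, hc⟩)) not_false)
  exact pairconc hM (by omega) u v hu hv hu0 hu1 hv0 hv1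
    (fun p q => (hupat p q).trans (hvpat p q).symm)

lemma p1trans (hM : GeqHom M k) (h1 : IsNHom M 1) (hK : HasKInf M) (hk : 3 ≤ k)
    {a b c d : V} (hab : P1Rel M k a b) (hcd : P1Rel M k c d) :
    SamePairOrbit M a b c d := by
  obtain ⟨hne, hnadj, hcnt⟩ := hab
  obtain ⟨hne', hnadj', hcnt'⟩ := hcd
  obtain ⟨f, haf⟩ := memK h1 hK a
  obtain ⟨f', hcf⟩ := memK h1 hK c
  have hbf : b ∉ Set.range f := fun hb => hnadj (rangeAdj f haf hb hne)
  have hdf : d ∉ Set.range f' := fun hd => hnadj' (rangeAdj f' hcf hd hne')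
  obtain ⟨w, hw, hwf, hwB⟩ := choosew (M := M) f
    ({x | x ∈ Set.range f ∧ M.Adj b x} ∪ {a, b})
    ((hcnt f haf).1.union ((Set.finite_singleton b).insert a)) (k - 1)
  obtain ⟨w', hw', hwf', hwB'⟩ := choosew (M := M) f'
    ({x | x ∈ Set.range f' ∧ M.Adj d x} ∪ {c, d})
    ((hcnt' f' hcf).1.union ((Set.finite_singleton d).insert c)) (k - 1)
  obtain ⟨u, hu, hu0, hu1, hupat⟩ := buildpat f a b haf hne (k-1) w hw hwf
    (fun p h => hwB p (by simp [h])) (fun p h => hwB p (by simp [h])) False False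
    (iff_of_false (fun hc => hnadj hc.symm) not_false)
    (fun p => iff_of_false (fun hc => hwB p (Or.inl ⟨hwf p, hc⟩)) not_false)
  obtain ⟨v, hv, hv0, hv1, hvpat⟩ := buildpat f' c d hcf hne' (k-1) w' hw' hwf'
    (fun p h => hwB' p (by simp [h])) (fun p h => hwB' p (by simp [h])) False False
    (iff_of_false (fun hc => hnadj' hc.symm) not_false)
    (fun p => iff_of_false (fun hc => hwB' p (Or.inl ⟨hwf' p, hc⟩)) not_false)
  exact pairconc hM (by omega) u v hu hv hu0 hu1 hv0 hv1
    (fun p q => (hupat p q).trans (hvpat p q).symm)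

lemma p2half (hk : 3 ≤ k) {a b : V} (hab : P2Rel M k a b) :
    ∃ (f : (⊤ : SimpleGraph ℕ) ↪g M) (w : Fin (k-1) → V),
      a ∈ Set.range f ∧ Function.Injective w ∧ (∀ p, w p ∈ Set.range f) ∧
      (∀ p, M.Adj b (w p)) := by
  obtain ⟨hne, hnadj, hnp1⟩ := hab
  have hex : ∃ f : (⊤ : SimpleGraph ℕ) ↪g M, a ∈ Set.range f ∧
      ¬({c | c ∈ Set.range f ∧ M.Adj b c}.Finite ∧
        {c | c ∈ Set.range f ∧ M.Adj b c}.ncard ≤ k - 1) := by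
    by_contra hc
    push_neg at hc
    exact hnp1 ⟨hne, hnadj, hc⟩
  obtain ⟨f, haf, hbad⟩ := hex
  have hN : ∃ N ⊆ {c | c ∈ Set.range f ∧ M.Adj b c}, N.Finite ∧ N.ncard = k - 1 := by
    rcases Set.finite_or_infinite {c | c ∈ Set.range f ∧ M.Adj b c} with hfin | hinf
    · have hge : k - 1 ≤ {c | c ∈ Set.range f ∧ M.Adj b c}.ncard := by
        by_contra h
        exact hbad ⟨hfin, by omega⟩
      obtain ⟨N, hNS, hcard⟩ := Set.exists_subset_card_eq hge
      exact ⟨N, hNS, hfin.subset hNS, hcard⟩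
    · exact hinf.exists_subset_ncard_eq (k - 1)
  obtain ⟨N, hNS, hNfin, hNcard⟩ := hN
  obtain ⟨w, hwinj, hwr⟩ := myparam N hNfin (k-1) hNcard
  refine ⟨f, w, haf, hwinj, ?_, ?_⟩
  · intro p
    exact (hNS (by rw [← hwr]; exact Set.mem_range_self p)).1
  · intro p
    exact (hNS (by rw [← hwr]; exact Set.mem_range_self p)).2

lemma p2trans (hM : GeqHom M k) (hk : 3 ≤ k) {a b c d : V}
    (hab : P2Rel M k a b) (hcd : P2Rel M k c d) : SamePairOrbit M a b c d := by
  obtain ⟨f, w, haf, hw, hwf, hwadj⟩ := p2half hk hab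
  obtain ⟨f', w', hcf, hw', hwf', hwadj'⟩ := p2half hk hcd
  obtain ⟨u, hu, hu0, hu1, hupat⟩ := buildpat f a b haf hab.1 (k-1) w hw hwf
    (fun p h => (hab.2.1 ((h ▸ hwadj p).symm)).elim)
    (fun p h => (M.irrefl (h ▸ hwadj p)).elim)
    False True
    (iff_of_false (fun hc => hab.2.1 hc.symm) not_false)
    (fun p => iff_of_true (hwadj p) trivial)
  obtain ⟨v, hv, hv0, hv1, hvpat⟩ := buildpat f' c d hcf hcd.1 (k-1) w' hw' hwf'
    (fun p h => (hcd.2.1 ((h ▸ hwadj' p).symm)).elim)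
    (fun p h => (M.irrefl (h ▸ hwadj' p)).elim)
    False True
    (iff_of_false (fun hc => hcd.2.1 hc.symm) not_false)
    (fun p => iff_of_true (hwadj' p) trivial)
  exact pairconc hM (by omega) u v hu hv hu0 hu1 hv0 hv1
    (fun p q => (hupat p q).trans (hvpat p q).symm)


end Aux

theorem stmt7 {V : Type} [Countable V] [Infinite V] (M : SimpleGraph V) (k : ℕ)
    (hM : GeqHom M k) (h1 : IsNHom M 1) (h2 : ¬ IsNHom M 2) (hK : HasKInf M) :
    (∃ a₁ b₁ a₂ b₂ : V, ∀ c d : V, M.Adj c d →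
      SamePairOrbit M c d a₁ b₁ ∨ SamePairOrbit M c d a₂ b₂) ∧
    (∃ a₁ b₁ a₂ b₂ : V, ∀ c d : V, c ≠ d → ¬ M.Adj c d →
      SamePairOrbit M c d a₁ b₁ ∨ SamePairOrbit M c d a₂ b₂) := by
  have hk : 3 ≤ k := by
    by_contra h
    exact h2 (hM 2 (by omega))
  have hne : Nonempty V := inferInstance
  obtain ⟨v0⟩ := hne
  constructor
  · by_cases hq1 : ∃ x y, Q1Rel M x y
    · obtain ⟨x1, y1, hxy1⟩ := hq1
      by_cases hq2 : ∃ x y, Q2Rel M x y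
      · obtain ⟨x2, y2, hxy2⟩ := hq2
        refine ⟨x1, y1, x2, y2, fun c d hcd => ?_⟩
        by_cases hic : InCommonKInf M c d
        · exact Or.inl (q1trans hM hk ⟨hcd, hic⟩ hxy1)
        · exact Or.inr (q2trans hM h1 hK hk ⟨hcd, hic⟩ hxy2)
      · refine ⟨x1, y1, x1, y1, fun c d hcd => ?_⟩
        by_cases hic : InCommonKInf M c d
        · exact Or.inl (q1trans hM hk ⟨hcd, hic⟩ hxy1)
        · exact absurd ⟨c, d, hcd, hic⟩ hq2
    · by_cases hq2 : ∃ x y, Q2Rel M x y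
      · obtain ⟨x2, y2, hxy2⟩ := hq2
        refine ⟨x2, y2, x2, y2, fun c d hcd => ?_⟩
        by_cases hic : InCommonKInf M c d
        · exact absurd ⟨c, d, hcd, hic⟩ hq1
        · exact Or.inl (q2trans hM h1 hK hk ⟨hcd, hic⟩ hxy2)
      · refine ⟨v0, v0, v0, v0, fun c d hcd => ?_⟩
        by_cases hic : InCommonKInf M c d
        · exact absurd ⟨c, d, hcd, hic⟩ hq1
        · exact absurd ⟨c, d, hcd, hic⟩ hq2
  · by_cases hp1 : ∃ x y, P1Rel M k x y
    · obtain ⟨x1, y1, hxy1⟩ := hp1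
      by_cases hp2 : ∃ x y, P2Rel M k x y
      · obtain ⟨x2, y2, hxy2⟩ := hp2
        refine ⟨x1, y1, x2, y2, fun c d hne hnadj => ?_⟩
        by_cases hic : P1Rel M k c d
        · exact Or.inl (p1trans hM h1 hK hk hic hxy1)
        · exact Or.inr (p2trans hM hk ⟨hne, hnadj, hic⟩ hxy2)
      · refine ⟨x1, y1, x1, y1, fun c d hne hnadj => ?_⟩
        by_cases hic : P1Rel M k c d
        · exact Or.inl (p1trans hM h1 hK hk hic hxy1)
        · exact absurd ⟨c, d, hne, hnadj, hic⟩ hp2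
    · by_cases hp2 : ∃ x y, P2Rel M k x y
      · obtain ⟨x2, y2, hxy2⟩ := hp2
        refine ⟨x2, y2, x2, y2, fun c d hne hnadj => ?_⟩
        by_cases hic : P1Rel M k c d
        · exact absurd ⟨c, d, hic⟩ hp1
        · exact Or.inl (p2trans hM hk ⟨hne, hnadj, hic⟩ hxy2)
      · refine ⟨v0, v0, v0, v0, fun c d hne hnadj => ?_⟩
        by_cases hic : P1Rel M k c d
        · exact absurd ⟨c, d, hic⟩ hp1
        · exact absurd ⟨c, d, hne, hnadj, hic⟩ hp2
end

section
/- Let M be a countably infinite graph that is ≥k-homogeneous, 1-homogeneous but not 2-homogeneous, with K_∞ ⊆ M. Let q_1 be the 2-orbit of pairs of adjacent vertices lying in a common induced K_∞, and q_2 the other 2-orbit of adjacent pairs (if it exists). Then for each vertex a, there are only finitely many vertices b with (a,b) ∈ q_2. -/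
open SimpleGraph

section Aux
open Classical

variable {V : Type} {M : SimpleGraph V}

/-- A pairwise-adjacent sequence gives an embedding of `K_∞`. -/
lemma cliqueEmbedding (e : ℕ → V) (hadj : ∀ i j, i ≠ j → M.Adj (e i) (e j)) :
    ∃ f : (⊤ : SimpleGraph ℕ) ↪g M, ∀ i, f i = e i := by
  have hinj : Function.Injective e := by
    intro i j hij
    by_contra h
    exact M.loopless.irrefl (e j) (hij ▸ hadj i j h)
  refine ⟨⟨⟨e, hinj⟩, ?_⟩, fun i => rfl⟩
  intro i j
  simp only [Function.Embedding.coeFn_mk, top_adj]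
  exact ⟨fun h hij => M.loopless.irrefl (e j) (hij ▸ h), fun h => hadj i j h⟩

/-- 1-homogeneity gives vertex transitivity. -/
lemma vertexTrans (h1 : IsNHom M 1) (u v : V) : ∃ g : M ≃g M, g u = v := by
  have f : M.induce {u} ≃g M.induce {v} := by
    refine ⟨Equiv.ofUnique _ _, ?_⟩
    rintro ⟨x, hx⟩ ⟨y, hy⟩
    simp only [Set.mem_singleton_iff] at hx hy
    subst hx; subst hy
    simp [SimpleGraph.irrefl]
  obtain ⟨g, hg⟩ := h1 {u} {v} (Set.finite_singleton u) (Set.finite_singleton v)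
    (Set.ncard_singleton u) (Set.ncard_singleton v) f
  refine ⟨g, ?_⟩
  have := hg ⟨u, rfl⟩
  rw [this]
  exact (f ⟨u, rfl⟩).2

/-- `a` lies in some induced `K_∞`. -/
lemma aInKInf (h1 : IsNHom M 1) (hK : HasKInf M) (a : V) :
    ∃ F : (⊤ : SimpleGraph ℕ) ↪g M, F 0 = a := by
  obtain ⟨F0⟩ := hK
  obtain ⟨g, hg⟩ := vertexTrans h1 (F0 0) a
  exact ⟨g.toEmbedding.comp F0, hg⟩

/-- A q2-neighbor of `a` is adjacent to only finitely many vertices of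
a `K_∞` through `a`. -/
lemma finAdjKInf (F : (⊤ : SimpleGraph ℕ) ↪g M) {i₀ : ℕ} {a b : V} (hFa : F i₀ = a)
    (hab : M.Adj a b) (hnc : ¬ InCommonKInf M a b) : {j | M.Adj b (F j)}.Finite := by
  by_contra hinf
  have hinf0 : {j | M.Adj b (F j)}.Infinite := hinf
  have hinf' : ({j | M.Adj b (F j)} \ {i₀}).Infinite := hinf0.diff (Set.finite_singleton i₀)
  set S := {j | M.Adj b (F j)} \ {i₀} with hS
  let σ : ℕ ↪ S := hinf'.natEmbedding _
  -- build the clique sequence  a, b, F (σ 0), F (σ 1), ...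
  let e : ℕ → V := fun n => match n with
    | 0 => a
    | 1 => b
    | (m + 2) => F (σ m)
  have hFadj : ∀ m : ℕ, M.Adj a (F (σ m).1) := by
    intro m
    have h1 : (σ m).1 ≠ i₀ := (σ m).2.2
    have : (⊤ : SimpleGraph ℕ).Adj i₀ (σ m).1 := by simpa using (Ne.symm h1)
    simpa [hFa] using F.map_rel_iff.mpr this
  have hbadj : ∀ m : ℕ, M.Adj b (F (σ m).1) := fun m => (σ m).2.1
  have hadj : ∀ i j, i ≠ j → M.Adj (e i) (e j) := by
    intro i j hij
    match i, j with
    | 0, 0 => exact absurd rfl hij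
    | 1, 1 => exact absurd rfl hij
    | 0, 1 => exact hab
    | 1, 0 => exact hab.symm
    | 0, (m+2) => exact hFadj m
    | (m+2), 0 => exact (hFadj m).symm
    | 1, (m+2) => exact hbadj m
    | (m+2), 1 => exact (hbadj m).symm
    | (m+2), (n+2) =>
      have hmn : m ≠ n := by omega
      have hσ : (σ m).1 ≠ (σ n).1 := by
        intro h
        exact hmn (σ.injective (Subtype.ext h))
      exact F.map_rel_iff.mpr (by simpa using hσ)
  obtain ⟨f, hf⟩ := cliqueEmbedding e hadj
  exact hnc ⟨f, ⟨0, hf 0⟩, ⟨1, hf 1⟩⟩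

/-- Automorphic images of a clique-with-apex `a` inside the q2-neighborhood
give a contradiction. -/
lemma noCliqueApex {a : V} (e : ℕ → V) (hadjA : ∀ i, M.Adj a (e i))
    (hnc : ¬ InCommonKInf M a (e 0)) (hadj : ∀ i j, i ≠ j → M.Adj (e i) (e j)) : False := by
  let e' : ℕ → V := fun n => match n with
    | 0 => a
    | (m + 1) => e m
  have hadj' : ∀ i j, i ≠ j → M.Adj (e' i) (e' j) := by
    intro i j hij
    match i, j with
    | 0, 0 => exact absurd rfl hij
    | 0, (m+1) => exact hadjA m
    | (m+1), 0 => exact (hadjA m).symm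
    | (m+1), (n+1) => exact hadj m n (by omega)
  obtain ⟨f, hf⟩ := cliqueEmbedding e' hadj'
  exact hnc ⟨f, ⟨0, hf 0⟩, ⟨1, hf 1⟩⟩

/-- Case B: if every q2-neighbor of `a` has only finitely many q2-non-neighbors,
we can greedily build an infinite clique of q2-neighbors of `a`, a contradiction. -/
lemma caseB {a : V} (hN : {b | Q2Rel M a b}.Infinite)
    (hB : ∀ b, Q2Rel M a b → {x | Q2Rel M a x ∧ ¬M.Adj b x ∧ x ≠ b}.Finite) : False := by
  classical
  let T : V → Set V := fun b => {x | Q2Rel M a x ∧ ¬M.Adj b x ∧ x ≠ b}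
  let bad : V → Set V := fun b => if h : (T b).Finite then T b ∪ {b} else {b}
  have badFin : ∀ b, (bad b).Finite := by
    intro b
    by_cases h : (T b).Finite
    · simp only [bad, dif_pos h]; exact h.union (Set.finite_singleton b)
    · simp only [bad, dif_neg h]; exact Set.finite_singleton b
  have hpick : ∀ s : Finset V, ∃ x, Q2Rel M a x ∧ ∀ b ∈ s, x ∉ bad b := by
    intro s
    have hfin : (⋃ b ∈ s, bad b).Finite :=
      Set.Finite.biUnion s.finite_toSet (fun b _ => badFin b)
    obtain ⟨x, hx⟩ := (hN.diff hfin).nonempty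
    exact ⟨x, hx.1, fun b hb hxb => hx.2 (Set.mem_biUnion hb hxb)⟩
  choose pick hpickQ hpickB using hpick
  let F : ℕ → Finset V := fun n => Nat.rec ∅ (fun _ Fn => insert (pick Fn) Fn) n
  let e : ℕ → V := fun n => pick (F n)
  have hFsucc : ∀ n, F (n+1) = insert (e n) (F n) := fun n => rfl
  have hFmono : ∀ m n, m ≤ n → F m ⊆ F n := by
    intro m n h
    induction h with
    | refl => exact subset_rfl
    | step h ih =>
      exact ih.trans (by rw [hFsucc]; exact Finset.subset_insert _ _)
  have hmem : ∀ m n, m < n → e m ∈ F n := by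
    intro m n h
    exact hFmono (m+1) n h (by rw [hFsucc]; exact Finset.mem_insert_self _ _)
  have hQ : ∀ n, Q2Rel M a (e n) := fun n => hpickQ (F n)
  have hadjlt : ∀ m n, m < n → M.Adj (e m) (e n) := by
    intro m n h
    have hnb : e n ∉ bad (e m) := hpickB (F n) (e m) (hmem m n h)
    have hTfin : (T (e m)).Finite := hB (e m) (hQ m)
    rw [show bad (e m) = T (e m) ∪ {e m} from dif_pos hTfin] at hnb
    have hne : e n ≠ e m := fun heq => hnb (Or.inr heq)
    by_contra hadj'
    exact hnb (Or.inl ⟨hQ n, hadj', hne⟩)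
  exact noCliqueApex e (fun i => (hQ i).1) (hQ 0).2
    (fun i j hij => by
      rcases lt_or_gt_of_ne hij with h | h
      · exact hadjlt i j h
      · exact (hadjlt j i h).symm)

end Aux

theorem stmt8 {V : Type} [Countable V] [Infinite V] (M : SimpleGraph V) (k : ℕ)
    (hM : GeqHom M k) (h1 : IsNHom M 1) (h2 : ¬ IsNHom M 2) (hK : HasKInf M) :
    ∀ a : V, {b | Q2Rel M a b}.Finite := by
  classical
  intro a
  by_contra hfin
  have hN : {b | Q2Rel M a b}.Infinite := hfin
  rcases le_or_gt k 2 with hk | hk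
  · exact absurd (hM 2 hk) h2
  by_cases hA : ∃ bs, Q2Rel M a bs ∧ {x | Q2Rel M a x ∧ ¬M.Adj bs x ∧ x ≠ bs}.Infinite
  case neg =>
    push_neg at hA
    exact caseB hN (fun b hb => hA b hb)
  obtain ⟨bs, hbs, hI⟩ := hA
  obtain ⟨B, hBsub, hBfin, hBcard⟩ := hI.exists_subset_ncard_eq (k - 2)
  obtain ⟨F, hF0⟩ := aInKInf h1 hK a
  -- facts about members of B
  have hBQ : ∀ x ∈ B, Q2Rel M a x := fun x hx => (hBsub hx).1
  have hBnadj : ∀ x ∈ B, ¬M.Adj bs x := fun x hx => (hBsub hx).2.1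
  have hBnbs : ∀ x ∈ B, x ≠ bs := fun x hx => (hBsub hx).2.2
  have hBna : ∀ x ∈ B, x ≠ a := fun x hx => fun h => M.loopless.irrefl a (h ▸ (hBQ x hx).1)
  -- choose c = F j avoiding bad indices
  have hbadJ : ((⋃ x ∈ B, {j | M.Adj x (F j)}) ∪ (F ⁻¹' (insert a (insert bs B)))).Finite := by
    refine Set.Finite.union ?_ ?_
    · exact Set.Finite.biUnion hBfin
        (fun x hx => finAdjKInf F hF0 (hBQ x hx).1 (hBQ x hx).2)
    · exact Set.Finite.preimage F.injective.injOn
        (((hBfin.insert bs).insert a))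
  obtain ⟨j, hj⟩ := hbadJ.infinite_compl.nonempty
  rw [Set.mem_compl_iff, Set.mem_union, not_or] at hj
  obtain ⟨hj1, hj2⟩ := hj
  set c := F j with hc
  have hcB : ∀ x ∈ B, ¬M.Adj x c := fun x hx hadj =>
    hj1 (Set.mem_biUnion hx hadj)
  have hcnot : c ∉ insert a (insert bs B) := hj2
  have hca : c ≠ a := fun h => hcnot (h ▸ Set.mem_insert _ _)
  have hcbs : c ≠ bs := fun h => hcnot (by rw [h]; exact Set.mem_insert_iff.mpr (Or.inr (Set.mem_insert _ _)))
  have hcBmem : c ∉ B := fun h => hcnot (Set.mem_insert_iff.mpr (Or.inr (Set.mem_insert_iff.mpr (Or.inr h))))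
  have hadj_ac : M.Adj a c := by
    have hj0 : j ≠ 0 := fun h => hca (by rw [hc, h, hF0])
    have := F.map_rel_iff.mpr (show (⊤ : SimpleGraph ℕ).Adj 0 j by simpa using (Ne.symm hj0))
    rwa [hF0] at this
  have hadj_abs : M.Adj a bs := hbs.1
  have habs : a ≠ bs := hadj_abs.ne
  have haB : a ∉ B := fun h => hBna a h rfl
  have hbsB : bs ∉ B := fun h => hBnbs bs h rfl
  -- the two sets
  set s := insert a (insert c B) with hsdef
  set t := insert a (insert bs B) with htdef
  have hsfin : s.Finite := (hBfin.insert c).insert a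
  have htfin : t.Finite := (hBfin.insert bs).insert a
  have hanotins : a ∉ insert c B := by
    simp only [Set.mem_insert_iff]
    push_neg
    exact ⟨fun h => hca h.symm, haB⟩
  have hanotint : a ∉ insert bs B := by
    simp only [Set.mem_insert_iff]
    push_neg
    exact ⟨habs, haB⟩
  have hscard : s.ncard = k := by
    rw [hsdef, Set.ncard_insert_of_notMem hanotins (hBfin.insert c),
      Set.ncard_insert_of_notMem hcBmem hBfin, hBcard]
    omega
  have htcard : t.ncard = k := by
    rw [htdef, Set.ncard_insert_of_notMem hanotint (hBfin.insert bs),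
      Set.ncard_insert_of_notMem hbsB hBfin, hBcard]
    omega
  -- the swap
  set φ : V ≃ V := Equiv.swap c bs with hφ
  have hφa : φ a = a := Equiv.swap_apply_of_ne_of_ne (fun h => hca h.symm) habs
  have hφc : φ c = bs := Equiv.swap_apply_left _ _
  have hφB : ∀ x ∈ B, φ x = x := fun x hx =>
    Equiv.swap_apply_of_ne_of_ne (fun h => hcBmem (h ▸ hx)) (hBnbs x hx)
  have himgB : φ '' B = B := by
    rw [Set.image_congr hφB, Set.image_id']
  have himg : φ '' s = t := by
    rw [hsdef, Set.image_insert_eq, Set.image_insert_eq, himgB, hφa, hφc]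
  have hswapfix : ∀ x ∈ s, x ≠ c → φ x = x := by
    intro x hx hxc
    rcases hx with h | h | h
    · rw [h]; exact hφa
    · exact absurd h hxc
    · exact hφB x h
  have hpat : ∀ x ∈ s, x ≠ c → (M.Adj x bs ↔ M.Adj x c) := by
    intro x hx hxc
    rcases hx with h | h | h
    · subst h; exact ⟨fun _ => hadj_ac, fun _ => hadj_abs⟩
    · exact absurd h hxc
    · constructor
      · intro had; exact absurd had.symm (hBnadj x h)
      · intro had; exact absurd had (hcB x h)
  have hkey : ∀ x ∈ s, ∀ y ∈ s, (M.Adj (φ x) (φ y) ↔ M.Adj x y) := by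
    intro x hx y hy
    by_cases hxc : x = c <;> by_cases hyc : y = c
    · subst hxc; subst hyc; simp [SimpleGraph.irrefl]
    · subst hxc
      rw [hφc, hswapfix y hy hyc, M.adj_comm bs y, M.adj_comm c y]
      exact hpat y hy hyc
    · subst hyc
      rw [hφc, hswapfix x hx hxc]
      exact hpat x hx hxc
    · rw [hswapfix x hx hxc, hswapfix y hy hyc]
  -- build the isomorphism of induced subgraphs
  let eqv : s ≃ t := (Equiv.Set.image φ s φ.injective).trans (Equiv.setCongr himg)
  have heqv : ∀ x : s, ((eqv x : V)) = φ x := fun x => rfl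
  let iso : M.induce s ≃g M.induce t := by
    refine ⟨eqv, ?_⟩
    intro x y
    show M.Adj ((eqv x : V)) ((eqv y : V)) ↔ M.Adj (x : V) (y : V)
    rw [heqv x, heqv y]
    exact hkey x x.2 y y.2
  obtain ⟨g, hg⟩ := hM k le_rfl s t hsfin htfin hscard htcard iso
  have hamem : a ∈ s := Set.mem_insert _ _
  have hcmem : c ∈ s := Set.mem_insert_iff.mpr (Or.inr (Set.mem_insert _ _))
  have hga : g a = a := by
    have := hg ⟨a, hamem⟩
    rw [this]
    show ((eqv ⟨a, hamem⟩ : V)) = a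
    rw [heqv]; exact hφa
  have hgc : g c = bs := by
    have := hg ⟨c, hcmem⟩
    rw [this]
    show ((eqv ⟨c, hcmem⟩ : V)) = bs
    rw [heqv]; exact hφc
  -- transport the K_∞ through a and c by g
  refine absurd ?_ hbs.2
  refine ⟨g.toEmbedding.comp F, ⟨0, ?_⟩, ⟨j, ?_⟩⟩
  · show g (F 0) = a
    rw [hF0, hga]
  · show g (F j) = bs
    rw [← hc, hgc]
end

section
/- Let M be a countably infinite graph that is ≥k-homogeneous, 1-homogeneous but not 2-homogeneous, with K_∞ ⊆ M. With 2-orbits q_1 (edges in a common K_∞), p_1 (non-adjacent pairs (a,b) where b is adjacent to at most k−1 vertices of K_∞(a)), and p_2 (the remaining non-adjacent pairs): for each vertex a there are only finitely many vertices b with (a,b) ∈ p_2. -/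
open SimpleGraph

namespace StmtNine

variable {V : Type} (M : SimpleGraph V) (k : ℕ)

/-- set of vertices agreeing about x and y -/
def Agr (x y : V) : Set V := {w | M.Adj w x ↔ M.Adj w y}

/-- set of vertices disagreeing about x and y -/
def Dis (x y : V) : Set V := {w | ¬ (M.Adj w x ↔ M.Adj w y)}

/-- near-twins -/
def NT (x y : V) : Prop := (Dis M x y).Finite

/-- anti-twins (⋈) -/
def Bw (x y : V) : Prop := (Agr M x y).Finite

/-- good pair: non-adjacent with a common adjacent k-clique -/
def Good (a b : V) : Prop :=
  a ≠ b ∧ ¬ M.Adj a b ∧ ∃ C : Finset V, C.card = k ∧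
    (∀ c ∈ C, ∀ c' ∈ C, c ≠ c' → M.Adj c c') ∧
    (∀ c ∈ C, M.Adj a c) ∧ (∀ c ∈ C, M.Adj b c)

variable {M} {k}

lemma nt_refl (x : V) : NT M x x := by
  have : Dis M x x = ∅ := by ext w; simp [Dis]
  rw [NT, this]; exact Set.finite_empty

lemma dis_symm (x y : V) : Dis M x y = Dis M y x := by
  ext w; simp only [Dis, Set.mem_setOf_eq]; tauto

lemma agr_symm (x y : V) : Agr M x y = Agr M y x := by
  ext w; simp only [Agr, Set.mem_setOf_eq]; tauto

lemma nt_symm {x y : V} (h : NT M x y) : NT M y x := by rwa [NT, ← dis_symm]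

lemma bw_symm {x y : V} (h : Bw M x y) : Bw M y x := by rwa [Bw, ← agr_symm]

lemma nt_trans {x y z : V} (h1 : NT M x y) (h2 : NT M y z) : NT M x z := by
  refine Set.Finite.subset (h1.union h2) ?_
  intro w hw
  simp only [Dis, Set.mem_setOf_eq, Set.mem_union] at *
  tauto

/-- FACT1 : two ⋈-partners of a common vertex are near-twins -/
lemma fact1 {y b b' : V} (h1 : Bw M y b) (h2 : Bw M y b') : NT M b b' := by
  refine Set.Finite.subset (h1.union h2) ?_
  intro w hw
  simp only [Dis, Agr, Set.mem_setOf_eq, Set.mem_union] at *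
  tauto

/-- FACT2 : near-twins are never anti-twins (V infinite) -/
lemma fact2 [Infinite V] {x y : V} (h1 : NT M x y) (h2 : Bw M x y) : False := by
  have : (Set.univ : Set V) ⊆ Agr M x y ∪ Dis M x y := by
    intro w _
    by_cases h : M.Adj w x ↔ M.Adj w y
    · exact Or.inl h
    · exact Or.inr h
  have hfin : (Set.univ : Set V).Finite := Set.Finite.subset (h2.union h1) this
  exact Set.infinite_univ hfin

/-- FACT4 : NT b v ∧ Bw u v → Bw u b -/
lemma fact4 {u v b : V} (hnt : NT M b v) (hbw : Bw M u v) : Bw M u b := by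
  refine Set.Finite.subset (hbw.union hnt) ?_
  intro w hw
  simp only [Agr, Dis, Set.mem_setOf_eq, Set.mem_union] at *
  tauto

lemma not_nt_of_bw [Infinite V] {x y : V} (h : Bw M x y) : ¬ NT M x y :=
  fun hnt => fact2 hnt h

section Maps

variable (g : M ≃g M)

lemma adj_map_iff (x y : V) : M.Adj (g x) (g y) ↔ M.Adj x y := g.map_adj_iff

lemma adj_symm_transfer (w x : V) : M.Adj w (g x) ↔ M.Adj (g.symm w) x := by
  conv_lhs => rw [← g.apply_symm_apply w]
  exact adj_map_iff g _ _

lemma dis_map (x y : V) : Dis M (g x) (g y) = g.symm ⁻¹' (Dis M x y) := by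
  ext w
  simp only [Dis, Set.mem_setOf_eq, Set.mem_preimage]
  rw [adj_symm_transfer g w x, adj_symm_transfer g w y]

lemma agr_map (x y : V) : Agr M (g x) (g y) = g.symm ⁻¹' (Agr M x y) := by
  ext w
  simp only [Agr, Set.mem_setOf_eq, Set.mem_preimage]
  rw [adj_symm_transfer g w x, adj_symm_transfer g w y]

lemma nt_map {x y : V} (h : NT M x y) : NT M (g x) (g y) := by
  unfold NT
  rw [dis_map g x y]
  exact h.preimage (g.symm.injective.injOn)

lemma nt_map_iff (x y : V) : NT M (g x) (g y) ↔ NT M x y := by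
  constructor
  · intro h
    have := nt_map g.symm h
    simpa using this
  · exact nt_map g

lemma bw_map {x y : V} (h : Bw M x y) : Bw M (g x) (g y) := by
  unfold Bw
  rw [agr_map g x y]
  exact h.preimage (g.symm.injective.injOn)

lemma bw_map_iff (x y : V) : Bw M (g x) (g y) ↔ Bw M x y := by
  constructor
  · intro h
    have := bw_map g.symm h
    simpa using this
  · exact bw_map g

lemma good_map {a b : V} (h : Good M k a b) : Good M k (g a) (g b) := by
  classical
  obtain ⟨hne, hadj, C, hcard, hcl, haC, hbC⟩ := h
  refine ⟨fun hc => hne (g.injective hc), fun hc => hadj ((adj_map_iff g a b).1 hc),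
    C.image g, ?_, ?_, ?_, ?_⟩
  · rw [Finset.card_image_of_injective _ g.injective]; exact hcard
  · intro c hc c' hc' hne'
    simp only [Finset.mem_image] at hc hc'
    obtain ⟨d, hd, rfl⟩ := hc
    obtain ⟨d', hd', rfl⟩ := hc'
    exact (adj_map_iff g d d').2 (hcl d hd d' hd' (fun h => hne' (by rw [h])))
  · intro c hc
    simp only [Finset.mem_image] at hc
    obtain ⟨d, hd, rfl⟩ := hc
    exact (adj_map_iff g a d).2 (haC d hd)
  · intro c hc
    simp only [Finset.mem_image] at hc
    obtain ⟨d, hd, rfl⟩ := hc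
    exact (adj_map_iff g b d).2 (hbC d hd)

end Maps

lemma good_symm {a b : V} (h : Good M k a b) : Good M k b a := by
  obtain ⟨hne, hadj, C, hc⟩ := h
  exact ⟨hne.symm, fun hc' => hadj hc'.symm, C, hc.1, hc.2.1, hc.2.2.2, hc.2.2.1⟩


/-- Workhorse: an adjacency-preserving injection on a finite set of size ≥ k
extends to an automorphism. -/
theorem extend_iso (hM : GeqHom M k) (s : Set V) (hs : s.Finite)
    (hcard : k ≤ s.ncard) (φ : V → V) (hinj : Set.InjOn φ s)
    (hadj : ∀ a ∈ s, ∀ b ∈ s, M.Adj (φ a) (φ b) ↔ M.Adj a b) :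
    ∃ g : M ≃g M, ∀ x ∈ s, g x = φ x := by
  have ht : (φ '' s).Finite := hs.image φ
  have htc : (φ '' s).ncard = s.ncard := Set.ncard_image_of_injOn hinj
  set e : s ≃ (φ '' s) := Equiv.Set.imageOfInjOn φ s hinj with he
  have hadj' : ∀ a b : s, (M.induce (φ '' s)).Adj (e a) (e b) ↔ (M.induce s).Adj a b := by
    intro a b
    exact hadj a.1 a.2 b.1 b.2
  let f : M.induce s ≃g M.induce (φ '' s) := ⟨e, by intro a b; exact hadj' a b⟩
  obtain ⟨g, hg⟩ := hM s.ncard hcard s (φ '' s) hs ht rfl htc f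
  exact ⟨g, fun x hx => hg ⟨x, hx⟩⟩

/-- 1-homogeneity gives vertex transitivity -/
theorem vertex_trans (h1 : IsNHom M 1) (a b : V) : ∃ g : M ≃g M, g a = b := by
  have hs : ({a} : Set V).Finite := Set.finite_singleton a
  have ht : ({b} : Set V).Finite := Set.finite_singleton b
  have hsc : ({a} : Set V).ncard = 1 := Set.ncard_singleton a
  have htc : ({b} : Set V).ncard = 1 := Set.ncard_singleton b
  let e : ({a} : Set V) ≃ ({b} : Set V) :=
    ⟨fun _ => ⟨b, rfl⟩, fun _ => ⟨a, rfl⟩,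
     fun x => by ext; exact x.2.symm, fun x => by ext; exact x.2.symm⟩
  have hadj : ∀ x y : ({a} : Set V),
      (M.induce {b}).Adj (e x) (e y) ↔ (M.induce {a}).Adj x y := by
    intro x y
    have hx : (x : V) = a := x.2
    have hy : (y : V) = a := y.2
    have h1' : ¬ M.Adj b b := M.loopless.irrefl b
    have h2' : ¬ M.Adj (x : V) (y : V) := by rw [hx, hy]; exact M.loopless.irrefl a
    constructor
    · intro h; exact absurd h h1'
    · intro h; exact absurd h h2'
  let f : M.induce ({a} : Set V) ≃g M.induce ({b} : Set V) := ⟨e, by intro x y; exact hadj x y⟩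
  obtain ⟨g, hg⟩ := h1 {a} {b} hs ht hsc htc f
  refine ⟨g, ?_⟩
  have := hg ⟨a, rfl⟩
  exact this

/-- members of the range of a K∞-embedding are pairwise adjacent -/
lemma kinf_adj (f : (⊤ : SimpleGraph ℕ) ↪g M) {c c' : V}
    (hc : c ∈ Set.range f) (hc' : c' ∈ Set.range f) (hne : c ≠ c') : M.Adj c c' := by
  obtain ⟨i, rfl⟩ := hc
  obtain ⟨j, rfl⟩ := hc'
  have hij : i ≠ j := fun h => hne (by rw [h])
  exact f.map_adj_iff.mpr (by simpa using hij)

/-- the range of a K∞-embedding is infinite -/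
lemma kinf_range_infinite (f : (⊤ : SimpleGraph ℕ) ↪g M) : (Set.range f).Infinite :=
  Set.infinite_range_of_injective f.injective

/-- every vertex is in some K∞ -/
theorem exists_kinf_mem (hK : HasKInf M) (h1 : IsNHom M 1) (v : V) :
    ∃ f : (⊤ : SimpleGraph ℕ) ↪g M, v ∈ Set.range f := by
  obtain ⟨f0⟩ := hK
  obtain ⟨g, hg⟩ := vertex_trans h1 (f0 0) v
  refine ⟨f0.trans g.toRelEmbedding, ?_⟩
  exact ⟨0, hg⟩

/-- every finite clique of size ≥ k is contained in a K∞ -/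
theorem clique_in_kinf (hM : GeqHom M k) (hK : HasKInf M) (D : Finset V)
    (hcl : ∀ c ∈ D, ∀ c' ∈ D, c ≠ c' → M.Adj c c') (hcard : k ≤ D.card) :
    ∃ f : (⊤ : SimpleGraph ℕ) ↪g M, (D : Set V) ⊆ Set.range f := by
  classical
  obtain ⟨f0⟩ := hK
  set T : Finset V := (Finset.range D.card).image f0 with hT
  have hTcard : T.card = D.card := by
    rw [hT, Finset.card_image_of_injective _ f0.injective, Finset.card_range]
  have e : D ≃ T := Finset.equivOfCardEq hTcard.symm
  set φ : V → V := fun z => if h : z ∈ D then (e ⟨z, h⟩ : V) else z with hφ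
  have hφD : ∀ z (h : z ∈ D), φ z = (e ⟨z, h⟩ : V) := by
    intro z h; simp only [hφ, dif_pos h]
  have hφT : ∀ z ∈ D, φ z ∈ T := by
    intro z h; rw [hφD z h]; exact (e ⟨z, h⟩).2
  have hinj : Set.InjOn φ (D : Set V) := by
    intro a ha b hb hab
    have ha' : a ∈ D := ha
    have hb' : b ∈ D := hb
    rw [hφD a ha', hφD b hb'] at hab
    have := e.injective (Subtype.ext hab)
    exact congrArg Subtype.val this
  have hTadj : ∀ c ∈ T, ∀ c' ∈ T, c ≠ c' → M.Adj c c' := by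
    intro c hc c' hc' hne
    rw [hT] at hc hc'
    simp only [Finset.mem_image] at hc hc'
    obtain ⟨i, _, rfl⟩ := hc
    obtain ⟨j, _, rfl⟩ := hc'
    exact f0.map_adj_iff.mpr (by simpa using (fun h => hne (by rw [h]) : ¬ i = j))
  have hadj : ∀ a ∈ (D : Set V), ∀ b ∈ (D : Set V), M.Adj (φ a) (φ b) ↔ M.Adj a b := by
    intro a ha b hb
    by_cases hab : a = b
    · subst hab
      constructor
      · intro h; exact absurd h (M.loopless.irrefl _)
      · intro h; exact absurd h (M.loopless.irrefl _)
    · have h1' : M.Adj a b := hcl a ha b hb hab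
      have h2' : M.Adj (φ a) (φ b) := by
        apply hTadj _ (hφT a ha) _ (hφT b hb)
        intro hc; exact hab (hinj ha hb hc)
      exact ⟨fun _ => h1', fun _ => h2'⟩
  have hsf : (D : Set V).Finite := D.finite_toSet
  have hsc : k ≤ (D : Set V).ncard := by rw [Set.ncard_coe_finset]; exact hcard
  obtain ⟨g, hg⟩ := extend_iso hM (D : Set V) hsf hsc φ hinj hadj
  refine ⟨f0.trans g.symm.toRelEmbedding, ?_⟩
  intro d hd
  have hd' : d ∈ D := hd
  have h2' : g d = φ d := hg d hd
  have h3' : φ d ∈ T := hφT d hd'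
  rw [hT] at h3'
  simp only [Finset.mem_image, Finset.mem_range] at h3'
  obtain ⟨i, _, hi⟩ := h3'
  refine ⟨i, ?_⟩
  show g.symm (f0 i) = d
  rw [hi, ← h2']
  exact g.symm_apply_apply d


lemma pick_subset {α : Type*} {s : Set α} {n : ℕ}
    (h : ¬(s.Finite ∧ s.ncard ≤ n)) :
    ∃ t : Finset α, ↑t ⊆ s ∧ t.card = n + 1 := by
  by_cases hfin : s.Finite
  · have hc : n + 1 ≤ s.ncard := by
      by_contra hc
      exact h ⟨hfin, by omega⟩
    have h2 : n + 1 ≤ hfin.toFinset.card := by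
      rwa [Set.ncard_eq_toFinset_card s hfin] at hc
    obtain ⟨t, hts, htc⟩ := Finset.exists_subset_card_eq h2
    exact ⟨t, fun x hx => hfin.mem_toFinset.mp (hts hx), htc⟩
  · exact Set.Infinite.exists_subset_card_eq hfin (n+1)

/-- P2Rel is the same as Good (for k ≥ 1). -/
theorem p2_iff_good (hk : 1 ≤ k) (hM : GeqHom M k) (hK : HasKInf M) (a b : V) :
    P2Rel M k a b ↔ Good M k a b := by
  constructor
  · rintro ⟨hne, hadj, hnp1⟩
    rw [P1Rel] at hnp1
    push_neg at hnp1
    obtain ⟨f, haf, hbig⟩ := hnp1 hne hadj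
    set S := {c | c ∈ Set.range f ∧ M.Adj b c} with hS
    have hbig' : ¬(S.Finite ∧ S.ncard ≤ k - 1) := by
      rintro ⟨hf, hle⟩
      have := hbig hf
      omega
    obtain ⟨C, hCS, hCcard⟩ : ∃ C : Finset V, ↑C ⊆ S ∧ C.card = (k - 1) + 1 := pick_subset hbig' 
    have hCk : C.card = k := by omega
    refine ⟨hne, hadj, C, hCk, ?_, ?_, ?_⟩
    · intro c hc c' hc' hcc
      exact kinf_adj f (hCS hc).1 (hCS hc').1 hcc
    · intro c hc
      have hcS := hCS hc
      have hca : c ≠ a := by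
        intro h
        rw [h] at hcS
        exact hadj (M.adj_symm hcS.2)
      exact kinf_adj f haf hcS.1 (Ne.symm hca)
    · intro c hc
      exact (hCS hc).2
  · rintro ⟨hne, hadj, C, hCcard, hCcl, haC, hbC⟩
    classical
    have haniC : a ∉ C := fun h => M.loopless.irrefl a (haC a h)
    set D := insert a C with hD
    have hDcl : ∀ c ∈ D, ∀ c' ∈ D, c ≠ c' → M.Adj c c' := by
      intro c hc c' hc' hcc
      rw [hD, Finset.mem_insert] at hc hc'
      rcases hc with rfl | hc
      · rcases hc' with rfl | hc'
        · exact absurd rfl hcc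
        · exact haC c' hc'
      · rcases hc' with rfl | hc'
        · exact M.adj_symm (haC c hc)
        · exact hCcl c hc c' hc' hcc
    have hDcard : k ≤ D.card := by
      rw [hD, Finset.card_insert_of_notMem haniC, hCcard]
      omega
    obtain ⟨f, hDf⟩ := clique_in_kinf hM hK D hDcl hDcard
    refine ⟨hne, hadj, ?_⟩
    rintro ⟨_, _, hP⟩
    obtain ⟨hfin, hle⟩ := hP f (hDf (by rw [hD]; exact Finset.mem_insert_self a C))
    have hsub : (C : Set V) ⊆ {c | c ∈ Set.range f ∧ M.Adj b c} := by
      intro c hc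
      exact ⟨hDf (by rw [hD]; exact Finset.mem_insert_of_mem hc), hbC c hc⟩
    have : k ≤ {c | c ∈ Set.range f ∧ M.Adj b c}.ncard := by
      calc k = (C : Set V).ncard := by rw [Set.ncard_coe_finset, hCcard]
      _ ≤ _ := Set.ncard_le_ncard hsub hfin
    omega

/-- the Good-partner set transported by transitivity -/
theorem good_inf_all (h1 : IsNHom M 1) {a : V}
    (ha : {b | Good M k a b}.Infinite) (v : V) : {b | Good M k v b}.Infinite := by
  obtain ⟨g, hg⟩ := vertex_trans h1 a v
  have hsub : (g '' {b | Good M k a b}) ⊆ {b | Good M k v b} := by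
    rintro _ ⟨b, hb, rfl⟩
    rw [← hg]
    exact good_map g hb
  exact Set.Infinite.mono hsub (ha.image (g.injective.injOn))

/-- the swap tool: if y and b have infinitely many agreeing vertices, and x relates to
them the same way, then (x,y) and (x,b) are in the same ordered pair orbit. -/
theorem swap_conj (hM : GeqHom M k) (hk : 3 ≤ k) {x y b : V}
    (hxy : x ≠ y) (hxb : x ≠ b) (hyb : y ≠ b)
    (hiff : M.Adj x y ↔ M.Adj x b) (hinf : (Agr M y b).Infinite) :
    ∃ g : M ≃g M, g x = x ∧ g y = b := by
  classical
  have hinf' : (Agr M y b \ {x, y, b}).Infinite :=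
    hinf.diff (Set.toFinite {x, y, b})
  obtain ⟨W, hWsub, hWcard⟩ := hinf'.exists_subset_card_eq (k - 2)
  set s : Set V := insert x (insert y ↑W) with hs
  have hxW : x ∉ (W : Set V) := fun h => (hWsub h).2 (by simp)
  have hyW : y ∉ (W : Set V) := fun h => (hWsub h).2 (by simp)
  have hbW : b ∉ (W : Set V) := fun h => (hWsub h).2 (by simp)
  have hWagr : ∀ w ∈ (W : Set V), M.Adj w y ↔ M.Adj w b := fun w hw => (hWsub hw).1
  have hsfin : s.Finite := by
    rw [hs]
    exact ((W.finite_toSet).insert y).insert x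
  have hscard : s.ncard = k := by
    rw [hs]
    rw [Set.ncard_insert_of_notMem (by
      simp only [Set.mem_insert_iff]
      push_neg
      exact ⟨hxy, hxW⟩) ((W.finite_toSet).insert y)]
    rw [Set.ncard_insert_of_notMem hyW W.finite_toSet]
    rw [Set.ncard_coe_finset, hWcard]
    omega
  set φ : V → V := fun z => if z = y then b else z with hφ
  have hφy : φ y = b := by simp [hφ]
  have hφother : ∀ z, z ≠ y → φ z = z := by intro z hz; simp [hφ, hz]
  have hinj : Set.InjOn φ s := by
    intro p hp q hq hpq
    by_cases hpy : p = y <;> by_cases hqy : q = y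
    · rw [hpy, hqy]
    · rw [hpy, hφy, hφother q hqy] at hpq
      exfalso
      rw [hs] at hq
      rcases hq with rfl | hq
      · exact hxb hpq.symm
      · rcases hq with rfl | hq
        · exact hqy rfl
        · exact hbW (hpq ▸ hq)
    · rw [hqy, hφy, hφother p hpy] at hpq
      exfalso
      rw [hs] at hp
      rcases hp with rfl | hp
      · exact hxb hpq
      · rcases hp with rfl | hp
        · exact hpy rfl
        · exact hbW (hpq ▸ hp)
    · rwa [hφother p hpy, hφother q hqy] at hpq
  have hadj : ∀ p ∈ s, ∀ q ∈ s, M.Adj (φ p) (φ q) ↔ M.Adj p q := by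
    have key : ∀ q ∈ s, q ≠ y → (M.Adj b q ↔ M.Adj y q) := by
      intro q hq hqy
      rw [hs] at hq
      rcases hq with rfl | hq
      · rw [M.adj_comm b q, M.adj_comm y q]
        exact hiff.symm
      · rcases hq with rfl | hq
        · exact absurd rfl hqy
        · rw [M.adj_comm b q, M.adj_comm y q]
          exact (hWagr q hq).symm
    intro p hp q hq
    by_cases hpy : p = y <;> by_cases hqy : q = y
    · rw [hpy, hqy, hφy]
      simp [M.loopless.irrefl]
    · rw [hpy, hφy, hφother q hqy]
      exact key q hq hqy
    · rw [hqy, hφy, hφother p hpy, M.adj_comm p b, M.adj_comm p y]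
      exact key p hp hpy
    · rw [hφother p hpy, hφother q hqy]
  obtain ⟨g, hg⟩ := extend_iso hM s hsfin (by omega) φ hinj hadj
  refine ⟨g, ?_, ?_⟩
  · rw [hg x (by rw [hs]; exact Set.mem_insert x _), hφother x hxy]
  · rw [hg y (by rw [hs]; right; exact Set.mem_insert y _), hφy]


/-- General conjugacy of "two marked vertices + homogeneous rest" configurations. -/
theorem config_pair_conj (hM : GeqHom M k) {x1 x2 u1 u2 : V} {C C' : Finset V}
    (hcard : C.card = C'.card) (hkle : k ≤ C.card + 2)
    (e12 e1C e2C eCC : Prop)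
    (hx12 : x1 ≠ x2) (hu12 : u1 ≠ u2)
    (hx1C : x1 ∉ C) (hx2C : x2 ∉ C) (hu1C : u1 ∉ C') (hu2C : u2 ∉ C')
    (hs12 : M.Adj x1 x2 ↔ e12) (ht12 : M.Adj u1 u2 ↔ e12)
    (hs1C : ∀ c ∈ C, M.Adj x1 c ↔ e1C) (ht1C : ∀ c ∈ C', M.Adj u1 c ↔ e1C)
    (hs2C : ∀ c ∈ C, M.Adj x2 c ↔ e2C) (ht2C : ∀ c ∈ C', M.Adj u2 c ↔ e2C)
    (hsCC : ∀ c ∈ C, ∀ c' ∈ C, c ≠ c' → (M.Adj c c' ↔ eCC))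
    (htCC : ∀ c ∈ C', ∀ c' ∈ C', c ≠ c' → (M.Adj c c' ↔ eCC)) :
    ∃ g : M ≃g M, g x1 = u1 ∧ g x2 = u2 := by
  classical
  set e : {z // z ∈ C} ≃ {z // z ∈ C'} := Finset.equivOfCardEq hcard with he
  set φ : V → V := fun z =>
    if z = x1 then u1 else if z = x2 then u2 else if h : z ∈ C then (e ⟨z, h⟩ : V) else z
    with hφ
  have hφ1 : φ x1 = u1 := by simp [hφ]
  have hφ2 : φ x2 = u2 := by simp [hφ, hx12.symm, Ne.symm hx12]
  have hφC : ∀ c (h : c ∈ C), φ c = (e ⟨c, h⟩ : V) := by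
    intro c h
    have h1 : c ≠ x1 := fun hc => hx1C (hc ▸ h)
    have h2 : c ≠ x2 := fun hc => hx2C (hc ▸ h)
    simp [hφ, h1, h2, h]
  have hφCmem : ∀ c ∈ C, φ c ∈ C' := by
    intro c h
    rw [hφC c h]
    exact (e ⟨c, h⟩).2
  set s : Set V := insert x1 (insert x2 ↑C) with hs
  have hsfin : s.Finite := ((C.finite_toSet).insert x2).insert x1
  have hscard : s.ncard = C.card + 2 := by
    rw [hs]
    rw [Set.ncard_insert_of_notMem (by
        simp only [Set.mem_insert_iff, Finset.mem_coe]
        push_neg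
        exact ⟨hx12, hx1C⟩) ((C.finite_toSet).insert x2),
      Set.ncard_insert_of_notMem (by simpa using hx2C) C.finite_toSet,
      Set.ncard_coe_finset]
  have hmem : ∀ p ∈ s, p = x1 ∨ p = x2 ∨ p ∈ C := by
    intro p hp
    rw [hs] at hp
    rcases hp with rfl | hp
    · exact Or.inl rfl
    · rcases hp with rfl | hp
      · exact Or.inr (Or.inl rfl)
      · exact Or.inr (Or.inr hp)
  have hinj : Set.InjOn φ s := by
    intro p hp q hq hpq
    rcases hmem p hp with hp1 | hp1 | hpC <;> rcases hmem q hq with hq1 | hq1 | hqC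
    · rw [hp1, hq1]
    · rw [hp1, hq1, hφ1, hφ2] at hpq
      exact absurd hpq hu12
    · rw [hp1, hφ1, hφC q hqC] at hpq
      exact absurd (show u1 ∈ C' from hpq ▸ (hφC q hqC ▸ hφCmem q hqC)) hu1C
    · rw [hp1, hq1, hφ2, hφ1] at hpq
      exact absurd hpq.symm hu12
    · rw [hp1, hq1]
    · rw [hp1, hφ2, hφC q hqC] at hpq
      exact absurd (show u2 ∈ C' from hpq ▸ (hφC q hqC ▸ hφCmem q hqC)) hu2C
    · rw [hq1, hφ1, hφC p hpC] at hpq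
      exact absurd (show u1 ∈ C' from hpq ▸ (hφC p hpC ▸ hφCmem p hpC)) hu1C
    · rw [hq1, hφ2, hφC p hpC] at hpq
      exact absurd (show u2 ∈ C' from hpq ▸ (hφC p hpC ▸ hφCmem p hpC)) hu2C
    · rw [hφC p hpC, hφC q hqC] at hpq
      have := e.injective (Subtype.ext hpq)
      exact congrArg Subtype.val this
  have hadj : ∀ p ∈ s, ∀ q ∈ s, M.Adj (φ p) (φ q) ↔ M.Adj p q := by
    intro p hp q hq
    by_cases hpq : p = q
    · rw [hpq]
      constructor
      · intro h; exact absurd h (M.loopless.irrefl _)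
      · intro h; exact absurd h (M.loopless.irrefl _)
    · rcases hmem p hp with hp1 | hp1 | hpC <;> rcases hmem q hq with hq1 | hq1 | hqC
      · rw [hp1, hq1] at hpq; exact absurd rfl hpq
      · rw [hp1, hq1, hφ1, hφ2, ht12, hs12]
      · rw [hp1, hφ1, hφC q hqC, ht1C _ (hφC q hqC ▸ hφCmem q hqC), hs1C q hqC]
      · rw [hp1, hq1, hφ2, hφ1, M.adj_comm u2 u1, M.adj_comm x2 x1, ht12, hs12]
      · rw [hp1, hq1] at hpq; exact absurd rfl hpq
      · rw [hp1, hφ2, hφC q hqC, ht2C _ (hφC q hqC ▸ hφCmem q hqC), hs2C q hqC]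
      · rw [hq1, hφC p hpC, hφ1, M.adj_comm _ u1, M.adj_comm p x1,
          ht1C _ (hφC p hpC ▸ hφCmem p hpC), hs1C p hpC]
      · rw [hq1, hφC p hpC, hφ2, M.adj_comm _ u2, M.adj_comm p x2,
          ht2C _ (hφC p hpC ▸ hφCmem p hpC), hs2C p hpC]
      · have hne' : φ p ≠ φ q := by
          intro hc
          exact hpq (hinj hp hq hc)
        rw [htCC _ (hφCmem p hpC) _ (hφCmem q hqC) hne', hsCC p hpC q hqC hpq]
  obtain ⟨g, hg⟩ := extend_iso hM s hsfin (by omega) φ hinj hadj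
  exact ⟨g, by rw [hg x1 (by rw [hs]; exact Set.mem_insert _ _), hφ1],
    by rw [hg x2 (by rw [hs]; right; exact Set.mem_insert _ _), hφ2]⟩


/-- clique predicate -/
def Clq (M : SimpleGraph V) (D : Finset V) : Prop := ∀ c ∈ D, ∀ c' ∈ D, c ≠ c' → M.Adj c c'

/-- independent set predicate -/
def Ind (M : SimpleGraph V) (D : Finset V) : Prop := ∀ c ∈ D, ∀ c' ∈ D, ¬ M.Adj c c'

/-- If one k-clique has all its pairs near-twins, then every pair inside any
clique of size ≥ k is a near-twin pair. -/
theorem clique_nt_all (hM : GeqHom M k) (hk2 : 2 ≤ k) {D0 : Finset V}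
    (hD0card : D0.card = k) (hD0cl : Clq M D0) (hD0nt : ∀ p ∈ D0, ∀ q ∈ D0, NT M p q)
    {D : Finset V} (hDcl : Clq M D) (hDcard : k ≤ D.card)
    {x y : V} (hx : x ∈ D) (hy : y ∈ D) (hxy : x ≠ y) : NT M x y := by
  classical
  obtain ⟨d1, hd1, d2, hd2, hd12⟩ := Finset.one_lt_card.mp (by omega : 1 < D0.card)
  obtain ⟨C, hCsub, hCcard⟩ := Finset.exists_subset_card_eq
    (show k - 2 ≤ ((D.erase x).erase y).card by
      rw [Finset.card_erase_of_mem (Finset.mem_erase.mpr ⟨Ne.symm hxy, hy⟩),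
        Finset.card_erase_of_mem hx]
      omega)
  have hCD : ∀ c ∈ C, c ∈ D ∧ c ≠ x ∧ c ≠ y := by
    intro c hc
    have h1 := hCsub hc
    rw [Finset.mem_erase, Finset.mem_erase] at h1
    exact ⟨h1.2.2, h1.2.1, h1.1⟩
  set C' := (D0.erase d1).erase d2 with hC'
  have hC'card : C'.card = k - 2 := by
    rw [hC', Finset.card_erase_of_mem (Finset.mem_erase.mpr ⟨Ne.symm hd12, hd2⟩),
      Finset.card_erase_of_mem hd1, hD0card]
    omega
  have hC'D : ∀ c ∈ C', c ∈ D0 ∧ c ≠ d1 ∧ c ≠ d2 := by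
    intro c hc
    rw [hC', Finset.mem_erase, Finset.mem_erase] at hc
    exact ⟨hc.2.2, hc.2.1, hc.1⟩
  obtain ⟨g, hg1, hg2⟩ := config_pair_conj hM (by rw [hCcard, hC'card])
    (by omega) True True True True hxy hd12
    (fun h => (hCD x h).2.1 rfl) (fun h => (hCD y h).2.2 rfl)
    (fun h => (hC'D d1 h).2.1 rfl) (fun h => (hC'D d2 h).2.2 rfl)
    (iff_true_intro (hDcl x hx y hy hxy))
    (iff_true_intro (hD0cl d1 hd1 d2 hd2 hd12))
    (fun c hc => iff_true_intro (hDcl x hx c (hCD c hc).1 (Ne.symm (hCD c hc).2.1)))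
    (fun c hc => iff_true_intro (hD0cl d1 hd1 c (hC'D c hc).1 (Ne.symm (hC'D c hc).2.1)))
    (fun c hc => iff_true_intro (hDcl y hy c (hCD c hc).1 (Ne.symm (hCD c hc).2.2)))
    (fun c hc => iff_true_intro (hD0cl d2 hd2 c (hC'D c hc).1 (Ne.symm (hC'D c hc).2.2)))
    (fun c hc c' hc' hne => iff_true_intro (hDcl c (hCD c hc).1 c' (hCD c' hc').1 hne))
    (fun c hc c' hc' hne => iff_true_intro (hD0cl c (hC'D c hc).1 c' (hC'D c' hc').1 hne))
  have := hD0nt d1 hd1 d2 hd2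
  rw [← hg1, ← hg2, nt_map_iff] at this
  exact this

/-- If one independent k-set has all its pairs near-twins, then every pair inside
any independent set of size ≥ k is a near-twin pair. -/
theorem indep_nt_all (hM : GeqHom M k) (hk2 : 2 ≤ k) {S0 : Finset V}
    (hS0card : S0.card = k) (hS0i : Ind M S0) (hS0nt : ∀ p ∈ S0, ∀ q ∈ S0, NT M p q)
    {S : Finset V} (hSi : Ind M S) (hScard : k ≤ S.card)
    {x y : V} (hx : x ∈ S) (hy : y ∈ S) (hxy : x ≠ y) : NT M x y := by
  classical
  obtain ⟨d1, hd1, d2, hd2, hd12⟩ := Finset.one_lt_card.mp (by omega : 1 < S0.card)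
  obtain ⟨C, hCsub, hCcard⟩ := Finset.exists_subset_card_eq
    (show k - 2 ≤ ((S.erase x).erase y).card by
      rw [Finset.card_erase_of_mem (Finset.mem_erase.mpr ⟨Ne.symm hxy, hy⟩),
        Finset.card_erase_of_mem hx]
      omega)
  have hCD : ∀ c ∈ C, c ∈ S ∧ c ≠ x ∧ c ≠ y := by
    intro c hc
    have h1 := hCsub hc
    rw [Finset.mem_erase, Finset.mem_erase] at h1
    exact ⟨h1.2.2, h1.2.1, h1.1⟩
  set C' := (S0.erase d1).erase d2 with hC'
  have hC'card : C'.card = k - 2 := by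
    rw [hC', Finset.card_erase_of_mem (Finset.mem_erase.mpr ⟨Ne.symm hd12, hd2⟩),
      Finset.card_erase_of_mem hd1, hS0card]
    omega
  have hC'D : ∀ c ∈ C', c ∈ S0 ∧ c ≠ d1 ∧ c ≠ d2 := by
    intro c hc
    rw [hC', Finset.mem_erase, Finset.mem_erase] at hc
    exact ⟨hc.2.2, hc.2.1, hc.1⟩
  obtain ⟨g, hg1, hg2⟩ := config_pair_conj hM (by rw [hCcard, hC'card])
    (by omega) False False False False hxy hd12
    (fun h => (hCD x h).2.1 rfl) (fun h => (hCD y h).2.2 rfl)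
    (fun h => (hC'D d1 h).2.1 rfl) (fun h => (hC'D d2 h).2.2 rfl)
    (iff_false_intro (hSi x hx y hy))
    (iff_false_intro (hS0i d1 hd1 d2 hd2))
    (fun c hc => iff_false_intro (hSi x hx c (hCD c hc).1))
    (fun c hc => iff_false_intro (hS0i d1 hd1 c (hC'D c hc).1))
    (fun c hc => iff_false_intro (hSi y hy c (hCD c hc).1))
    (fun c hc => iff_false_intro (hS0i d2 hd2 c (hC'D c hc).1))
    (fun c hc c' hc' _ => iff_false_intro (hSi c (hCD c hc).1 c' (hCD c' hc').1))
    (fun c hc c' hc' _ => iff_false_intro (hS0i c (hC'D c hc).1 c' (hC'D c' hc').1))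
  have := hS0nt d1 hd1 d2 hd2
  rw [← hg1, ← hg2, nt_map_iff] at this
  exact this

/-- any two ordered pairs of distinct vertices inside (possibly different) K∞'s
are conjugate -/
theorem kinf_pair_orbit (hM : GeqHom M k) (hk2 : 2 ≤ k)
    {f f' : (⊤ : SimpleGraph ℕ) ↪g M} {x y u v : V}
    (hx : x ∈ Set.range f) (hy : y ∈ Set.range f) (hxy : x ≠ y)
    (hu : u ∈ Set.range f') (hv : v ∈ Set.range f') (huv : u ≠ v) :
    ∃ g : M ≃g M, g x = u ∧ g y = v := by
  obtain ⟨C, hCsub, hCcard⟩ := ((kinf_range_infinite f).diff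
    (Set.toFinite {x, y})).exists_subset_card_eq (k - 2)
  obtain ⟨C', hC'sub, hC'card⟩ := ((kinf_range_infinite f').diff
    (Set.toFinite {u, v})).exists_subset_card_eq (k - 2)
  have hCf : ∀ c ∈ C, c ∈ Set.range f ∧ c ≠ x ∧ c ≠ y := by
    intro c hc
    have := hCsub hc
    refine ⟨this.1, ?_, ?_⟩ <;> intro h <;> exact this.2 (by simp [h])
  have hC'f : ∀ c ∈ C', c ∈ Set.range f' ∧ c ≠ u ∧ c ≠ v := by
    intro c hc
    have := hC'sub hc
    refine ⟨this.1, ?_, ?_⟩ <;> intro h <;> exact this.2 (by simp [h])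
  exact config_pair_conj hM (by rw [hCcard, hC'card]) (by omega) True True True True hxy huv
    (fun h => (hCf x h).2.1 rfl) (fun h => (hCf y h).2.2 rfl)
    (fun h => (hC'f u h).2.1 rfl) (fun h => (hC'f v h).2.2 rfl)
    (iff_true_intro (kinf_adj f hx hy hxy))
    (iff_true_intro (kinf_adj f' hu hv huv))
    (fun c hc => iff_true_intro (kinf_adj f hx (hCf c hc).1 (Ne.symm (hCf c hc).2.1)))
    (fun c hc => iff_true_intro (kinf_adj f' hu (hC'f c hc).1 (Ne.symm (hC'f c hc).2.1)))
    (fun c hc => iff_true_intro (kinf_adj f hy (hCf c hc).1 (Ne.symm (hCf c hc).2.2)))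
    (fun c hc => iff_true_intro (kinf_adj f' hv (hC'f c hc).1 (Ne.symm (hC'f c hc).2.2)))
    (fun c hc c' hc' hne => iff_true_intro (kinf_adj f (hCf c hc).1 (hCf c' hc').1 hne))
    (fun c hc c' hc' hne => iff_true_intro (kinf_adj f' (hC'f c hc).1 (hC'f c' hc').1 hne))

/-- any two ordered Good pairs are conjugate -/
theorem good_pair_orbit (hM : GeqHom M k) {x y u v : V}
    (h1 : Good M k x y) (h2 : Good M k u v) :
    ∃ g : M ≃g M, g x = u ∧ g y = v := by
  obtain ⟨hxy, hnadj, C, hCcard, hCcl, hxC, hyC⟩ := h1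
  obtain ⟨huv, hnadj', C', hC'card, hC'cl, huC, hvC⟩ := h2
  have hxnC : x ∉ C := fun h => M.loopless.irrefl x (hxC x h)
  have hynC : y ∉ C := fun h => M.loopless.irrefl y (hyC y h)
  have hunC : u ∉ C' := fun h => M.loopless.irrefl u (huC u h)
  have hvnC : v ∉ C' := fun h => M.loopless.irrefl v (hvC v h)
  exact config_pair_conj hM (by rw [hCcard, hC'card]) (by omega) False True True True hxy huv
    hxnC hynC hunC hvnC
    (iff_false_intro hnadj) (iff_false_intro hnadj')
    (fun c hc => iff_true_intro (hxC c hc)) (fun c hc => iff_true_intro (huC c hc))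
    (fun c hc => iff_true_intro (hyC c hc)) (fun c hc => iff_true_intro (hvC c hc))
    (fun c hc c' hc' hne => iff_true_intro (hCcl c hc c' hc' hne))
    (fun c hc c' hc' hne => iff_true_intro (hC'cl c hc c' hc' hne))


/-- From an infinite pairwise near-twin family, extract either a clique or an
independent set of any prescribed finite size. -/
theorem nt_extract {F : Set V} (hFinf : F.Infinite)
    (hFnt : ∀ p ∈ F, ∀ q ∈ F, NT M p q) {b0 : V} (hb0 : b0 ∈ F) (n : ℕ) :
    ((∃ D : Finset V, ↑D ⊆ F ∧ D.card = n ∧ Clq M D) ∧ (F ∩ {w | M.Adj w b0}).Infinite) ∨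
    (∃ S : Finset V, ↑S ⊆ F ∧ S.card = n ∧ Ind M S ∧ (F ∩ {w | M.Adj w b0}).Finite) := by
  classical
  by_cases hA : (F ∩ {w | M.Adj w b0}).Infinite
  · left
    set A := F ∩ {w | M.Adj w b0} with hAdef
    have hAF : A ⊆ F := Set.inter_subset_left
    have hsubF : (insert b0 A : Set V) ⊆ F := by
      intro z hz
      rcases hz with rfl | hz
      · exact hb0
      · exact hAF hz
    have key : ∀ m : ℕ, ∃ D : Finset V,
        ↑D ⊆ insert b0 A ∧ D.card = m + 1 ∧ Clq M D := by
      intro m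
      induction m with
      | zero =>
        refine ⟨{b0}, ?_, by simp, ?_⟩
        · intro z hz
          simp only [Finset.coe_singleton, Set.mem_singleton_iff] at hz
          rw [hz]
          exact Set.mem_insert b0 A
        · intro c hc c' hc' hne
          simp only [Finset.mem_singleton] at hc hc'
          exact absurd (hc.trans hc'.symm) hne
      | succ m ih =>
        obtain ⟨D, hDsub, hDcard, hDclq⟩ := ih
        have hpool : (A \ (↑D ∪ ⋃ d ∈ (D : Set V), Dis M d b0)).Infinite := by
          apply hA.diff
          apply Set.Finite.union D.finite_toSet
          apply Set.Finite.biUnion D.finite_toSet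
          intro d hd
          exact hFnt d (hsubF (hDsub hd)) b0 hb0
        obtain ⟨w, hw⟩ := hpool.nonempty
        have hwA : w ∈ A := hw.1
        have hwD : w ∉ (D : Set V) := fun h => hw.2 (Or.inl h)
        have hwDis : ∀ d ∈ (D : Set V), w ∉ Dis M d b0 := by
          intro d hd hcon
          exact hw.2 (Or.inr (Set.mem_biUnion hd hcon))
        have hwadj : ∀ d ∈ (D : Set V), M.Adj w d := by
          intro d hd
          have h1 := hwDis d hd
          simp only [Dis, Set.mem_setOf_eq, not_not] at h1
          exact h1.mpr hwA.2
        refine ⟨insert w D, ?_, ?_, ?_⟩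
        · intro z hz
          simp only [Finset.coe_insert, Set.mem_insert_iff] at hz
          rcases hz with rfl | hz
          · exact Set.mem_insert_of_mem b0 hwA
          · exact hDsub hz
        · rw [Finset.card_insert_of_notMem hwD, hDcard]
        · intro c hc c' hc' hne
          rw [Finset.mem_insert] at hc hc'
          rcases hc with hc | hc
          · rcases hc' with hc' | hc'
            · exact absurd (hc.trans hc'.symm) hne
            · rw [hc]; exact hwadj c' hc'
          · rcases hc' with hc' | hc'
            · rw [hc']; exact M.adj_symm (hwadj c hc)
            · exact hDclq c hc c' hc' hne
    obtain ⟨D, hDsub, hDcard, hDclq⟩ := key (n - 1)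
    by_cases hn : n = 0
    · exact ⟨⟨∅, by simp, by simp [hn], by intro c hc; simp at hc⟩, hA⟩
    · exact ⟨⟨D, hDsub.trans hsubF, by omega, hDclq⟩, hA⟩
  · right
    have hAfin : (F ∩ {w | M.Adj w b0}).Finite := Set.not_infinite.mp hA
    set B := F \ ((F ∩ {w | M.Adj w b0}) ∪ {b0}) with hBdef
    have hBinf : B.Infinite := hFinf.diff (hAfin.union (Set.finite_singleton b0))
    have hBF : B ⊆ F := Set.diff_subset
    have hBnadj : ∀ w ∈ B, ¬ M.Adj w b0 := by
      intro w hw hcon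
      exact hw.2 (Or.inl ⟨hw.1, hcon⟩)
    have hsubF : (insert b0 B : Set V) ⊆ F := by
      intro z hz
      rcases hz with rfl | hz
      · exact hb0
      · exact hBF hz
    have key : ∀ m : ℕ, ∃ S : Finset V,
        ↑S ⊆ insert b0 B ∧ S.card = m + 1 ∧ Ind M S := by
      intro m
      induction m with
      | zero =>
        refine ⟨{b0}, ?_, by simp, ?_⟩
        · intro z hz
          simp only [Finset.coe_singleton, Set.mem_singleton_iff] at hz
          rw [hz]
          exact Set.mem_insert b0 B
        · intro c hc c' hc'
          simp only [Finset.mem_singleton] at hc hc'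
          rw [hc, hc']
          exact M.loopless.irrefl b0
      | succ m ih =>
        obtain ⟨S, hSsub, hScard, hSind⟩ := ih
        have hpool : (B \ (↑S ∪ ⋃ d ∈ (S : Set V), Dis M d b0)).Infinite := by
          apply hBinf.diff
          apply Set.Finite.union S.finite_toSet
          apply Set.Finite.biUnion S.finite_toSet
          intro d hd
          exact hFnt d (hsubF (hSsub hd)) b0 hb0
        obtain ⟨w, hw⟩ := hpool.nonempty
        have hwB : w ∈ B := hw.1
        have hwS : w ∉ (S : Set V) := fun h => hw.2 (Or.inl h)
        have hwnadj : ∀ d ∈ (S : Set V), ¬ M.Adj w d := by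
          intro d hd hcon
          have h1 : w ∉ Dis M d b0 := fun hcon' => hw.2 (Or.inr (Set.mem_biUnion hd hcon'))
          simp only [Dis, Set.mem_setOf_eq, not_not] at h1
          exact hBnadj w hwB (h1.mp hcon)
        refine ⟨insert w S, ?_, ?_, ?_⟩
        · intro z hz
          simp only [Finset.coe_insert, Set.mem_insert_iff] at hz
          rcases hz with rfl | hz
          · exact Set.mem_insert_of_mem b0 hwB
          · exact hSsub hz
        · rw [Finset.card_insert_of_notMem hwS, hScard]
        · intro c hc c' hc'
          rw [Finset.mem_insert] at hc hc'
          rcases hc with hc | hc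
          · rcases hc' with hc' | hc'
            · rw [hc, hc']; exact M.loopless.irrefl w
            · rw [hc]; exact hwnadj c' hc'
          · rcases hc' with hc' | hc'
            · rw [hc']; exact fun h => hwnadj c hc (M.adj_symm h)
            · exact hSind c hc c' hc'
    obtain ⟨S, hSsub, hScard, hSind⟩ := key (n - 1)
    by_cases hn : n = 0
    · exact ⟨∅, by simp, by simp [hn], by intro c hc; simp at hc, hAfin⟩
    · exact ⟨S, hSsub.trans hsubF, by omega, hSind, hAfin⟩


/-- in a world where some NT k-clique exists, Good pairs are near-twins -/
theorem nt_of_good (hM : GeqHom M k) (hk2 : 2 ≤ k) {D0 : Finset V}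
    (hD0card : D0.card = k) (hD0cl : Clq M D0) (hD0nt : ∀ p ∈ D0, ∀ q ∈ D0, NT M p q)
    {v b : V} (h : Good M k v b) : NT M v b := by
  classical
  obtain ⟨hne, hnadj, C, hCcard, hCcl, hvC, hbC⟩ := h
  have hCne : C.Nonempty := Finset.card_pos.mp (by omega)
  obtain ⟨c0, hc0⟩ := hCne
  have hvnC : v ∉ C := fun h => M.loopless.irrefl v (hvC v h)
  have hbnC : b ∉ C := fun h => M.loopless.irrefl b (hbC b h)
  have hclv : Clq M (insert v C) := by
    intro p hp q hq hpq
    rw [Finset.mem_insert] at hp hq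
    rcases hp with hp | hp
    · rcases hq with hq | hq
      · exact absurd (hp.trans hq.symm) hpq
      · rw [hp]; exact hvC q hq
    · rcases hq with hq | hq
      · rw [hq]; exact M.adj_symm (hvC p hp)
      · exact hCcl p hp q hq hpq
  have hclb : Clq M (insert b C) := by
    intro p hp q hq hpq
    rw [Finset.mem_insert] at hp hq
    rcases hp with hp | hp
    · rcases hq with hq | hq
      · exact absurd (hp.trans hq.symm) hpq
      · rw [hp]; exact hbC q hq
    · rcases hq with hq | hq
      · rw [hq]; exact M.adj_symm (hbC p hp)
      · exact hCcl p hp q hq hpq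
  have h1 : NT M v c0 := clique_nt_all hM hk2 hD0card hD0cl hD0nt hclv
    (by rw [Finset.card_insert_of_notMem hvnC, hCcard]; omega)
    (Finset.mem_insert_self v C) (Finset.mem_insert_of_mem hc0)
    (fun h => M.loopless.irrefl v (h ▸ hvC c0 hc0))
  have h2 : NT M b c0 := clique_nt_all hM hk2 hD0card hD0cl hD0nt hclb
    (by rw [Finset.card_insert_of_notMem hbnC, hCcard]; omega)
    (Finset.mem_insert_self b C) (Finset.mem_insert_of_mem hc0)
    (fun h => M.loopless.irrefl b (h ▸ hbC c0 hc0))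
  exact nt_trans h1 (nt_symm h2)

/-- the combined package : an NT independent k-set exists, and every vertex has
an independent k-set of Good partners which are near-twins of it -/
def WIP (M : SimpleGraph V) (k : ℕ) : Prop :=
  (∃ S0 : Finset V, S0.card = k ∧ Ind M S0 ∧ ∀ p ∈ S0, ∀ q ∈ S0, NT M p q) ∧
  (∀ u : V, ∃ S : Finset V, (↑S : Set V) ⊆ {b | Good M k u b} ∧ S.card = k ∧
    Ind M S ∧ ∀ s ∈ S, NT M u s)

/-- an NT clique ignition yields the package -/
theorem clig_wip [Infinite V] (hM : GeqHom M k) (hk2 : 2 ≤ k)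
    (hGinf : ∀ v : V, {b | Good M k v b}.Infinite) {D0 : Finset V}
    (hD0card : D0.card = k) (hD0cl : Clq M D0) (hD0nt : ∀ p ∈ D0, ∀ q ∈ D0, NT M p q) :
    WIP M k := by
  have hJP : ∀ u : V, ∃ S : Finset V, (↑S : Set V) ⊆ {b | Good M k u b} ∧ S.card = k ∧
      Ind M S ∧ ∀ s ∈ S, NT M u s := by
    intro u
    set F := {b | Good M k u b} with hF
    have hFnt : ∀ p ∈ F, ∀ q ∈ F, NT M p q := by
      intro p hp q hq
      exact nt_trans (nt_symm (nt_of_good hM hk2 hD0card hD0cl hD0nt hp))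
        (nt_of_good hM hk2 hD0card hD0cl hD0nt hq)
    obtain ⟨b1, hb1⟩ := (hGinf u).nonempty
    rcases nt_extract (hGinf u) hFnt hb1 k with ⟨_, hAinf⟩ | ⟨S, hSsub, hScard, hSind, _⟩
    · exfalso
      apply hAinf
      have hnt1 : NT M b1 u := nt_symm (nt_of_good hM hk2 hD0card hD0cl hD0nt hb1)
      refine Set.Finite.subset hnt1 ?_
      intro w hw
      simp only [Dis, Set.mem_setOf_eq]
      intro hiff
      have hw1 : Good M k u w := hw.1
      have hw2 : M.Adj w b1 := hw.2
      exact hw1.2.1 (M.adj_symm (hiff.mp hw2))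
    · exact ⟨S, hSsub, hScard, hSind, fun s hs =>
        nt_of_good hM hk2 hD0card hD0cl hD0nt (hSsub hs)⟩
  obtain ⟨u0⟩ := (inferInstance : Nonempty V)
  obtain ⟨S, hSsub, hScard, hSind, hSnt⟩ := hJP u0
  refine ⟨⟨S, hScard, hSind, ?_⟩, hJP⟩
  intro p hp q hq
  exact nt_trans (nt_symm (hSnt p hp)) (hSnt q hq)

/-- a blocked non-edge yields the package -/
theorem blocked_nonedge_wip [Infinite V] (hM : GeqHom M k) (hk2 : 2 ≤ k)
    (h1 : IsNHom M 1) (hGinf : ∀ v : V, {b | Good M k v b}.Infinite) {x y : V}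
    (hblocked : ∀ b, Good M k x b → b ≠ y → Bw M y b) : WIP M k := by
  classical
  set F := {b | Good M k x b} \ {y} with hF
  have hFinf : F.Infinite := (hGinf x).diff (Set.finite_singleton y)
  have hFnt : ∀ p ∈ F, ∀ q ∈ F, NT M p q := by
    intro p hp q hq
    exact fact1 (hblocked p hp.1 hp.2) (hblocked q hq.1 hq.2)
  obtain ⟨b1, hb1⟩ := hFinf.nonempty
  rcases nt_extract hFinf hFnt hb1 k with ⟨⟨D, hDsub, hDcard, hDclq⟩, _⟩ |
    ⟨S, hSsub, hScard, hSind, _⟩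
  · exact clig_wip hM hk2 hGinf hDcard hDclq
      (fun p hp q hq => hFnt p (hDsub hp) q (hDsub hq))
  · -- independent branch : build site package and transport
    have hSgood : ∀ s ∈ S, Good M k x s := fun s hs => (hSsub hs).1
    have hSnt : ∀ s ∈ S, NT M x s := by
      intro s hs
      obtain ⟨s0, hs0S, hs0ne⟩ : ∃ s0 ∈ S, s0 ≠ s := by
        obtain ⟨a1, ha1, a2, ha2, ha12⟩ := Finset.one_lt_card.mp
          (show 1 < S.card by omega)
        by_cases h : a1 = s
        · exact ⟨a2, ha2, fun hc => ha12 (h.trans hc.symm)⟩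
        · exact ⟨a1, ha1, h⟩
      have hxnS : x ∉ S := fun h => (hSgood x h).1 rfl
      set T := insert x (S.erase s0) with hT
      have hsT : s ∈ T := Finset.mem_insert_of_mem (Finset.mem_erase.mpr ⟨Ne.symm hs0ne, hs⟩)
      have hTcard : T.card = k := by
        rw [hT, Finset.card_insert_of_notMem (fun h => hxnS (Finset.mem_of_mem_erase h)),
          Finset.card_erase_of_mem hs0S, hScard]
        omega
      have hTind : Ind M T := by
        intro p hp q hq
        rw [hT, Finset.mem_insert] at hp hq
        rcases hp with hp | hp
        · rcases hq with hq | hq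
          · rw [hp, hq]; exact M.loopless.irrefl x
          · rw [hp]; exact (hSgood q (Finset.mem_of_mem_erase hq)).2.1
        · rcases hq with hq | hq
          · rw [hq]
            exact fun h => (hSgood p (Finset.mem_of_mem_erase hp)).2.1 (M.adj_symm h)
          · exact hSind p (Finset.mem_of_mem_erase hp) q (Finset.mem_of_mem_erase hq)
      have hxs : x ≠ s := fun h => (hSgood s hs).1 h
      exact indep_nt_all hM hk2 hScard hSind
        (fun p hp q hq => hFnt p (hSsub hp) q (hSsub hq)) hTind (le_of_eq hTcard.symm)
        (Finset.mem_insert_self x _) hsT hxs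
    -- transport to every vertex
    have hJP : ∀ u : V, ∃ S' : Finset V, (↑S' : Set V) ⊆ {b | Good M k u b} ∧
        S'.card = k ∧ Ind M S' ∧ ∀ s ∈ S', NT M u s := by
      intro u
      obtain ⟨g, hg⟩ := vertex_trans h1 x u
      refine ⟨S.image g, ?_, ?_, ?_, ?_⟩
      · intro z hz
        simp only [Finset.coe_image, Set.mem_image, Finset.mem_coe] at hz
        obtain ⟨s, hs, rfl⟩ := hz
        rw [← hg]
        exact good_map g (hSgood s hs)
      · rw [Finset.card_image_of_injective _ g.injective, hScard]
      · intro p hp q hq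
        simp only [Finset.mem_image] at hp hq
        obtain ⟨p', hp', rfl⟩ := hp
        obtain ⟨q', hq', rfl⟩ := hq
        intro h
        exact hSind p' hp' q' hq' ((adj_map_iff g p' q').mp h)
      · intro s hs
        simp only [Finset.mem_image] at hs
        obtain ⟨s', hs', rfl⟩ := hs
        rw [← hg]
        exact nt_map g (hSnt s' hs')
    obtain ⟨u0⟩ := (inferInstance : Nonempty V)
    obtain ⟨S', hS'sub, hS'card, hS'ind, hS'nt⟩ := hJP u0
    refine ⟨⟨S', hS'card, hS'ind, ?_⟩, hJP⟩
    intro p hp q hq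
    exact nt_trans (nt_symm (hS'nt p hp)) (hS'nt q hq)

/-- a blocked edge yields the package -/
theorem blocked_edge_wip [Infinite V] (hM : GeqHom M k) (hk2 : 2 ≤ k)
    (hGinf : ∀ v : V, {b | Good M k v b}.Infinite) {x y : V}
    {f : (⊤ : SimpleGraph ℕ) ↪g M}
    (hblocked : ∀ c ∈ Set.range f, c ≠ x → c ≠ y → Bw M y c) : WIP M k := by
  obtain ⟨D0, hD0sub, hD0card⟩ := ((kinf_range_infinite f).diff
    (Set.toFinite {x, y})).exists_subset_card_eq k
  have hD0f : ∀ c ∈ D0, c ∈ Set.range f ∧ c ≠ x ∧ c ≠ y := by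
    intro c hc
    have := hD0sub hc
    refine ⟨this.1, ?_, ?_⟩ <;> intro h <;> exact this.2 (by simp [h])
  have hD0cl : Clq M D0 := fun c hc c' hc' hne =>
    kinf_adj f (hD0f c hc).1 (hD0f c' hc').1 hne
  have hD0nt : ∀ p ∈ D0, ∀ q ∈ D0, NT M p q := by
    intro p hp q hq
    exact fact1 (hblocked p (hD0f p hp).1 (hD0f p hp).2.1 (hD0f p hp).2.2)
      (hblocked q (hD0f q hq).1 (hD0f q hq).2.1 (hD0f q hq).2.2)
  exact clig_wip hM hk2 hGinf hD0card hD0cl hD0nt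


/-- trichotomy: in the package world, a non-adjacent non-near-twin pair is an
anti-twin pair -/
theorem trich [Infinite V] (hM : GeqHom M k) (hk3 : 3 ≤ k) (hwip : WIP M k)
    {u z : V} (hne : u ≠ z) (hnadj : ¬ M.Adj u z) (hnnt : ¬ NT M u z) : Bw M u z := by
  obtain ⟨S, hSsub, hScard, _, hSnt⟩ := hwip.2 z
  obtain ⟨b, hbS, hbu⟩ : ∃ b ∈ S, b ≠ u := by
    obtain ⟨a1, ha1, a2, ha2, ha12⟩ := Finset.one_lt_card.mp (show 1 < S.card by omega)
    by_cases h : a1 = u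
    · exact ⟨a2, ha2, fun hc => ha12 (h.trans hc.symm)⟩
    · exact ⟨a1, ha1, h⟩
  have hgood : Good M k z b := hSsub hbS
  have hntzb : NT M z b := hSnt b hbS
  by_cases hbw : Bw M u b
  · exact fact4 hntzb hbw
  · exfalso
    have hinf : (Agr M u b).Infinite := hbw
    obtain ⟨g, hgz, hgu⟩ := swap_conj hM hk3 (Ne.symm hne) hgood.1 (Ne.symm hbu)
      (iff_of_false (fun h => hnadj (M.adj_symm h)) hgood.2.1)
      (by rwa [agr_symm] at hinf)
    have : NT M (g z) (g u) ↔ NT M z u := nt_map_iff g z u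
    rw [hgz, hgu] at this
    exact hnnt (nt_symm (this.mp hntzb))

/-- the main kill: in the package world there is no anti-twin non-edge -/
theorem vii_half [Infinite V] (hM : GeqHom M k) (hk3 : 3 ≤ k) (hwip : WIP M k)
    {u v : V} {f : (⊤ : SimpleGraph ℕ) ↪g M}
    (hbw : Bw M u v)
    (hW1 : {d | d ∈ Set.range f ∧ NT M v d}.Infinite) : False := by
  classical
  obtain ⟨S, hSsub, hScard, hSind, hSnt⟩ := hwip.2 u
  obtain ⟨S0, hS0sub, hS0card⟩ := Finset.exists_subset_card_eq
    (show k - 1 ≤ S.card by omega)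
  set W1 := {d | d ∈ Set.range f ∧ NT M v d} with hW1def
  -- every member of S is an anti-twin of v
  have hBvm : ∀ m ∈ S, Bw M v m := by
    intro m hm
    exact fact4 (nt_symm (hSnt m hm)) (bw_symm hbw)
  -- every member of S is an anti-twin of every d ∈ W1
  have hBmd : ∀ m ∈ S, ∀ d ∈ W1, Bw M m d := by
    intro m hm d hd
    exact fact4 (nt_symm hd.2) (bw_symm (hBvm m hm))
  -- each member of S is adjacent to only finitely many members of W1
  have hfin : ∀ m ∈ S, {d | d ∈ W1 ∧ M.Adj m d}.Finite := by
    intro m hm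
    obtain ⟨d0, hd0⟩ := (hW1.diff (Set.finite_singleton m)).nonempty
    have hBmd0 : Bw M m d0 := hBmd m hm d0 hd0.1
    refine Set.Finite.subset (hBmd0.union (Set.finite_singleton d0)) ?_
    intro w hw
    by_cases hwd0 : w = d0
    · exact Or.inr hwd0
    · left
      simp only [Agr, Set.mem_setOf_eq]
      constructor
      · intro _
        exact kinf_adj f hw.1.1 hd0.1.1 hwd0
      · intro _
        exact M.adj_symm hw.2
  -- pick d ∈ W1 avoiding everything
  have hpool : (W1 \ ((↑S0 : Set V) ∪ ⋃ m ∈ (S0 : Set V), {d | d ∈ W1 ∧ M.Adj m d})).Infinite := by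
    apply hW1.diff
    apply Set.Finite.union S0.finite_toSet
    apply Set.Finite.biUnion S0.finite_toSet
    intro m hm
    exact hfin m (hS0sub hm)
  obtain ⟨d, hd⟩ := hpool.nonempty
  have hdW1 : d ∈ W1 := hd.1
  have hdS0 : d ∉ (S0 : Set V) := fun h => hd.2 (Or.inl h)
  have hdnadj : ∀ m ∈ (S0 : Set V), ¬ M.Adj m d := by
    intro m hm hcon
    exact hd.2 (Or.inr (Set.mem_biUnion hm ⟨hdW1, hcon⟩))
  -- the independent k-set {d} ∪ S0
  set S' := insert d S0 with hS'
  have hS'card : S'.card = k := by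
    rw [hS', Finset.card_insert_of_notMem hdS0, hS0card]
    omega
  have hS'ind : Ind M S' := by
    intro p hp q hq
    rw [hS', Finset.mem_insert] at hp hq
    rcases hp with hp | hp
    · rcases hq with hq | hq
      · rw [hp, hq]; exact M.loopless.irrefl d
      · rw [hp]; exact fun h => hdnadj q hq (M.adj_symm h)
    · rcases hq with hq | hq
      · rw [hq]; exact hdnadj p hp
      · exact hSind p (hS0sub hp) q (hS0sub hq)
  -- a member of S0
  obtain ⟨m1, hm1⟩ := Finset.card_pos.mp (show 0 < S0.card by omega)
  have hdm1 : d ≠ m1 := fun h => hdS0 (h ▸ hm1)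
  -- WIig gives NT d m1
  obtain ⟨Sig, hSigcard, hSigind, hSignt⟩ := hwip.1
  have hntdm1 : NT M d m1 := indep_nt_all hM (by omega) hSigcard hSigind hSignt hS'ind
    (le_of_eq hS'card.symm) (Finset.mem_insert_self d S0)
    (Finset.mem_insert_of_mem hm1) hdm1
  have hntvm1 : NT M v m1 := nt_trans hdW1.2 hntdm1
  exact fact2 hntvm1 (hBvm m1 (hS0sub hm1))

/-- no anti-twin pair at all in the package world -/
theorem bw_false [Infinite V] (hM : GeqHom M k) (hk3 : 3 ≤ k) (hK : HasKInf M)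
    (hwip : WIP M k) {u v : V}
    (hbw : Bw M u v) : False := by
  obtain ⟨f⟩ := hK
  set W1 := {d | d ∈ Set.range f ∧ NT M v d} with hW1def
  set W2 := {d | d ∈ Set.range f ∧ NT M u d} with hW2def
  have hW3 : (Set.range f \ (W1 ∪ W2)) ⊆ Agr M u v ∪ {u, v} := by
    intro d hd
    have hdr : d ∈ Set.range f := hd.1
    have hdnW1 : ¬ NT M v d := fun h => hd.2 (Or.inl ⟨hdr, h⟩)
    have hdnW2 : ¬ NT M u d := fun h => hd.2 (Or.inr ⟨hdr, h⟩)
    by_cases hdu : d = u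
    · right; left; exact hdu
    by_cases hdv : d = v
    · right; right; exact hdv
    have hadju : M.Adj d u := by
      by_contra hcon
      have hbwud : Bw M u d := trich hM hk3 hwip (fun h => hdu h.symm)
        (fun h => hcon (M.adj_symm h)) hdnW2
      exact hdnW1 (nt_symm (fact1 hbwud hbw))
    have hadjv : M.Adj d v := by
      by_contra hcon
      have hbwvd : Bw M v d := trich hM hk3 hwip (fun h => hdv h.symm)
        (fun h => hcon (M.adj_symm h)) hdnW1
      exact hdnW2 (nt_symm (fact1 hbwvd (bw_symm hbw)))
    left
    exact iff_of_true hadju hadjv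
  have hW3fin : (Set.range f \ (W1 ∪ W2)).Finite :=
    Set.Finite.subset (hbw.union (Set.toFinite {u, v})) hW3
  have hW12 : (W1 ∪ W2).Infinite := by
    intro hfin
    have : (Set.range f).Finite := by
      have : Set.range f ⊆ (Set.range f \ (W1 ∪ W2)) ∪ (W1 ∪ W2) := by
        intro z hz
        by_cases h : z ∈ W1 ∪ W2
        · exact Or.inr h
        · exact Or.inl ⟨hz, h⟩
      exact Set.Finite.subset (hW3fin.union hfin) this
    exact kinf_range_infinite f this
  rcases Set.infinite_union.mp hW12 with h | h
  · exact vii_half hM hk3 hwip hbw h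
  · exact vii_half hM hk3 hwip (bw_symm hbw) h


/-- every non-edge is conjugate (fixing x) to a Good pair based at x -/
theorem nonedge_to_good [Infinite V] (hM : GeqHom M k) (hk3 : 3 ≤ k) (h1 : IsNHom M 1)
    (hK : HasKInf M) (hGinf : ∀ v : V, {b | Good M k v b}.Infinite)
    {x y : V} (hxy : x ≠ y) (hnadj : ¬ M.Adj x y) :
    ∃ (b : V) (g : M ≃g M), Good M k x b ∧ g x = x ∧ g y = b := by
  by_cases hgood : Good M k x y
  · exact ⟨y, RelIso.refl M.Adj, hgood, rfl, rfl⟩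
  by_cases hb : ∃ b, Good M k x b ∧ b ≠ y ∧ ¬ Bw M y b
  · obtain ⟨b, hgb, hby, hbw⟩ := hb
    obtain ⟨g, hg1, hg2⟩ := swap_conj hM hk3 hxy hgb.1 (Ne.symm hby)
      (iff_of_false hnadj hgb.2.1) hbw
    exact ⟨b, g, hgb, hg1, hg2⟩
  · exfalso
    push_neg at hb
    have hblocked : ∀ b, Good M k x b → b ≠ y → Bw M y b := fun b h1' h2' => hb b h1' h2'
    have hwip : WIP M k := blocked_nonedge_wip hM (by omega) h1 hGinf hblocked
    obtain ⟨b1, hb1⟩ := ((hGinf x).diff (Set.finite_singleton y)).nonempty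
    exact bw_false hM hk3 hK hwip (hblocked b1 hb1.1 hb1.2)

/-- every edge is conjugate (fixing x) to an edge inside a K∞ -/
theorem edge_to_kinf [Infinite V] (hM : GeqHom M k) (hk3 : 3 ≤ k) (h1 : IsNHom M 1)
    (hK : HasKInf M) (hGinf : ∀ v : V, {b | Good M k v b}.Infinite)
    {x y : V} (hadj : M.Adj x y) :
    ∃ (c : V) (f : (⊤ : SimpleGraph ℕ) ↪g M) (g : M ≃g M),
      x ∈ Set.range f ∧ c ∈ Set.range f ∧ x ≠ c ∧ g x = x ∧ g y = c := by
  obtain ⟨f, hxf⟩ := exists_kinf_mem hK h1 x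
  by_cases hy : y ∈ Set.range f
  · exact ⟨y, f, RelIso.refl M.Adj, hxf, hy, hadj.ne, rfl, rfl⟩
  by_cases hc : ∃ c ∈ Set.range f, c ≠ x ∧ c ≠ y ∧ ¬ Bw M y c
  · obtain ⟨c, hcr, hcx, hcy, hbw⟩ := hc
    obtain ⟨g, hg1, hg2⟩ := swap_conj hM hk3 hadj.ne (Ne.symm hcx) (Ne.symm hcy)
      (iff_of_true hadj (kinf_adj f hxf hcr (Ne.symm hcx))) hbw
    exact ⟨c, f, g, hxf, hcr, Ne.symm hcx, hg1, hg2⟩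
  · exfalso
    push_neg at hc
    have hblocked : ∀ c ∈ Set.range f, c ≠ x → c ≠ y → Bw M y c :=
      fun c h1' h2' h3' => hc c h1' h2' h3'
    have hwip : WIP M k := blocked_edge_wip hM (by omega) hGinf hblocked
    obtain ⟨c1, hc1⟩ := ((kinf_range_infinite f).diff (Set.toFinite {x, y})).nonempty
    have hc1x : c1 ≠ x := fun h => hc1.2 (by simp [h])
    have hc1y : c1 ≠ y := fun h => hc1.2 (by simp [h])
    exact bw_false hM hk3 hK hwip (hblocked c1 hc1.1 hc1x hc1y)

/-- all ordered non-edges are conjugate -/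
theorem nonedge_orbit [Infinite V] (hM : GeqHom M k) (hk3 : 3 ≤ k) (h1 : IsNHom M 1)
    (hK : HasKInf M) (hGinf : ∀ v : V, {b | Good M k v b}.Infinite)
    {x y u v : V} (hxy : x ≠ y) (hnadj : ¬ M.Adj x y)
    (huv : u ≠ v) (hnadj' : ¬ M.Adj u v) :
    ∃ g : M ≃g M, g x = u ∧ g y = v := by
  obtain ⟨b1, g1, hgood1, hg1x, hg1y⟩ := nonedge_to_good hM hk3 h1 hK hGinf hxy hnadj
  obtain ⟨b2, g2, hgood2, hg2x, hg2y⟩ := nonedge_to_good hM hk3 h1 hK hGinf huv hnadj'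
  obtain ⟨h, hh1, hh2⟩ := good_pair_orbit hM hgood1 hgood2
  refine ⟨(g1.trans h).trans g2.symm, ?_, ?_⟩
  · show g2.symm (h (g1 x)) = u
    rw [hg1x, hh1]
    conv_lhs => rw [← hg2x]
    exact g2.symm_apply_apply u
  · show g2.symm (h (g1 y)) = v
    rw [hg1y, hh2]
    conv_lhs => rw [← hg2y]
    exact g2.symm_apply_apply v

/-- all ordered edges are conjugate -/
theorem edge_orbit [Infinite V] (hM : GeqHom M k) (hk3 : 3 ≤ k) (h1 : IsNHom M 1)
    (hK : HasKInf M) (hGinf : ∀ v : V, {b | Good M k v b}.Infinite)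
    {x y u v : V} (hadj : M.Adj x y) (hadj' : M.Adj u v) :
    ∃ g : M ≃g M, g x = u ∧ g y = v := by
  obtain ⟨c1, f1, g1, hxf1, hc1f1, hxc1, hg1x, hg1y⟩ := edge_to_kinf hM hk3 h1 hK hGinf hadj
  obtain ⟨c2, f2, g2, huf2, hc2f2, huc2, hg2x, hg2y⟩ := edge_to_kinf hM hk3 h1 hK hGinf hadj'
  obtain ⟨h, hh1, hh2⟩ := kinf_pair_orbit hM (by omega) hxf1 hc1f1 hxc1 huf2 hc2f2 huc2
  refine ⟨(g1.trans h).trans g2.symm, ?_, ?_⟩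
  · show g2.symm (h (g1 x)) = u
    rw [hg1x, hh1]
    conv_lhs => rw [← hg2x]
    exact g2.symm_apply_apply u
  · show g2.symm (h (g1 y)) = v
    rw [hg1y, hh2]
    conv_lhs => rw [← hg2y]
    exact g2.symm_apply_apply v

/-- in the infinite-Good world, M is 2-homogeneous -/
theorem is2hom [Infinite V] (hM : GeqHom M k) (hk3 : 3 ≤ k) (h1 : IsNHom M 1)
    (hK : HasKInf M) (hGinf : ∀ v : V, {b | Good M k v b}.Infinite) :
    IsNHom M 2 := by
  intro s t hs ht hsc htc f
  obtain ⟨x, y, hxy, hseq⟩ := Set.ncard_eq_two.mp hsc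
  have hxs : x ∈ s := by rw [hseq]; exact Set.mem_insert x {y}
  have hys : y ∈ s := by rw [hseq]; right; rfl
  set u : V := (f ⟨x, hxs⟩ : V) with hu
  set v : V := (f ⟨y, hys⟩ : V) with hv
  have huv : u ≠ v := by
    intro h
    exact hxy (congrArg Subtype.val (f.injective (Subtype.ext h)))
  have hadj_iff : M.Adj u v ↔ M.Adj x y := f.map_adj_iff
  have hmain : ∃ g : M ≃g M, g x = u ∧ g y = v := by
    by_cases hadj : M.Adj x y
    · exact edge_orbit hM hk3 h1 hK hGinf hadj (hadj_iff.mpr hadj)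
    · exact nonedge_orbit hM hk3 h1 hK hGinf hxy hadj huv
        (fun h => hadj (hadj_iff.mp h))
  obtain ⟨g, hgx, hgy⟩ := hmain
  refine ⟨g, ?_⟩
  intro z
  have hzall : ∀ w : V, w ∈ s → (w = x ∨ w = y) := by
    intro w hw
    rw [hseq] at hw
    exact hw
  have hz : (z : V) = x ∨ (z : V) = y := hzall z.1 z.2
  rcases hz with hzx | hzy
  · have hzeq : z = ⟨x, hxs⟩ := Subtype.ext hzx
    rw [hzeq]
    exact hgx
  · have hzeq : z = ⟨y, hys⟩ := Subtype.ext hzy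
    rw [hzeq]
    exact hgy

end StmtNine


theorem stmt9 {V : Type} [Countable V] [Infinite V] (M : SimpleGraph V) (k : ℕ)
    (hM : GeqHom M k) (h1 : IsNHom M 1) (h2 : ¬ IsNHom M 2) (hK : HasKInf M) :
    ∀ a : V, {b | P2Rel M k a b}.Finite := by
  intro a
  by_contra hfin
  have hinf : {b | P2Rel M k a b}.Infinite := hfin
  have hk3 : 3 ≤ k := by
    by_contra hlt
    exact h2 (hM 2 (by omega))
  have hseteq : {b | P2Rel M k a b} = {b | StmtNine.Good M k a b} := by
    ext b
    exact StmtNine.p2_iff_good (by omega) hM hK a b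
  have hGa : {b | StmtNine.Good M k a b}.Infinite := hseteq ▸ hinf
  have hGinf : ∀ v, {b | StmtNine.Good M k v b}.Infinite :=
    fun v => StmtNine.good_inf_all h1 hGa v
  exact h2 (StmtNine.is2hom hM hk3 h1 hK hGinf)
end

section
/- For every t ≥ 2, the graph H_{t,1} (the disjoint union of two copies of G_t) is ≥(2t+1)-homogeneous: every isomorphism between finite induced subgraphs of size at least 2t+1 extends to an automorphism of H_{t,1}. -/
open SimpleGraph

-- extension helper
lemma exists_equiv_extend {α : Type*} (A : Set α) (f : α → α) (hf : Set.InjOn f A)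
    (hc : Nonempty ((↥Aᶜ) ≃ (↥(f '' A)ᶜ))) : ∃ e : α ≃ α, ∀ a ∈ A, e a = f a := by
  classical
  obtain ⟨c⟩ := hc
  let e1 : ↥A ≃ ↥(f '' A) := Equiv.Set.imageOfInjOn f A hf
  refine ⟨(Equiv.Set.sumCompl A).symm.trans ((e1.sumCongr c).trans (Equiv.Set.sumCompl (f '' A))), ?_⟩
  intro a ha
  simp [Equiv.Set.sumCompl_symm_apply_of_mem ha, e1, Equiv.Set.imageOfInjOn]

lemma int_extend (A : Set ℤ) (hA : A.Finite) (f : ℤ → ℤ) (hf : Set.InjOn f A) :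
    ∃ e : ℤ ≃ ℤ, ∀ a ∈ A, e a = f a := by
  apply exists_equiv_extend A f hf
  have h1 : (Aᶜ : Set ℤ).Infinite := Set.Finite.infinite_compl hA
  have h2 : ((f '' A)ᶜ : Set ℤ).Infinite := Set.Finite.infinite_compl (hA.image f)
  have := h1.to_subtype
  have := h2.to_subtype
  obtain ⟨d1⟩ := nonempty_denumerable_iff.mpr (⟨inferInstance, inferInstance⟩ :
    Countable ↥(Aᶜ) ∧ Infinite ↥(Aᶜ))
  obtain ⟨d2⟩ := nonempty_denumerable_iff.mpr (⟨inferInstance, inferInstance⟩ :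
    Countable ↥((f '' A)ᶜ) ∧ Infinite ↥((f '' A)ᶜ))
  exact ⟨(@Denumerable.eqv _ d1).trans (@Denumerable.eqv _ d2).symm⟩

lemma fin_extend {t : ℕ} (A : Set (Fin t)) (f : Fin t → Fin t) (hf : Set.InjOn f A) :
    ∃ e : Fin t ≃ Fin t, ∀ a ∈ A, e a = f a := by
  classical
  apply exists_equiv_extend A f hf
  have h1 : Fintype.card ↥A = Fintype.card ↥(f '' A) :=
    Fintype.card_congr (Equiv.Set.imageOfInjOn f A hf)
  refine Fintype.card_eq.mp ?_
  rw [Fintype.card_compl_set, Fintype.card_compl_set, h1]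

/-- Automorphism of `Gt t` from a permutation of parts and per-part permutations. -/
def gtAuto {t : ℕ} (σ : ℤ ≃ ℤ) (τ : ℤ → Fin t ≃ Fin t) : Gt t ≃g Gt t where
  toFun x := (σ x.1, τ x.1 x.2)
  invFun y := (σ.symm y.1, (τ (σ.symm y.1)).symm y.2)
  left_inv x := by simp
  right_inv y := by simp
  map_rel_iff' := by
    intro x y
    show ¬ _ = _ ↔ ¬ _ = _
    simp

lemma gt_extend {t : ℕ} (_ht : 0 < t) (s : Set (ℤ × Fin t)) (hs : s.Finite)
    (h : ℤ × Fin t → ℤ × Fin t) (hinj : Set.InjOn h s)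
    (hpart : ∀ x ∈ s, ∀ y ∈ s, ((h x).1 = (h y).1 ↔ x.1 = y.1)) :
    ∃ g : Gt t ≃g Gt t, ∀ x ∈ s, g x = h x := by
  classical
  set A : Set ℤ := Prod.fst '' s with hA
  have hAfin : A.Finite := hs.image _
  -- partial map on parts
  have hwit : ∀ a ∈ A, ∃ x, x ∈ s ∧ x.1 = a := by
    intro a ha; obtain ⟨x, hx, rfl⟩ := ha; exact ⟨x, hx, rfl⟩
  set σ₀ : ℤ → ℤ := fun a => if h' : a ∈ A then (h (hwit a h').choose).1 else a with hσ₀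
  have hσ₀val : ∀ x ∈ s, σ₀ x.1 = (h x).1 := by
    intro x hx
    have hmem : x.1 ∈ A := ⟨x, hx, rfl⟩
    have hch := (hwit x.1 hmem).choose_spec
    rw [hσ₀]; simp only [dif_pos hmem]
    exact (hpart _ hch.1 _ hx).mpr hch.2
  have hσinj : Set.InjOn σ₀ A := by
    intro a ha b hb hab
    obtain ⟨x, hx, rfl⟩ := ha
    obtain ⟨y, hy, rfl⟩ := hb
    rw [hσ₀val x hx, hσ₀val y hy] at hab
    exact (hpart _ hx _ hy).mp hab
  obtain ⟨σ, hσ⟩ := int_extend A hAfin σ₀ hσinj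
  -- per-part permutations
  have hτ : ∀ a : ℤ, ∃ e : Fin t ≃ Fin t, ∀ i, (a, i) ∈ s → e i = (h (a, i)).2 := by
    intro a
    have hinj2 : Set.InjOn (fun i => (h (a, i)).2) {i : Fin t | (a, i) ∈ s} := by
      intro i hi j hj hij
      have h1 : (h (a, i)).1 = (h (a, j)).1 := (hpart _ hi _ hj).mpr rfl
      have h2 : h (a, i) = h (a, j) := Prod.ext h1 hij
      have h3 := hinj hi hj h2
      exact congrArg Prod.snd h3
    obtain ⟨e, he⟩ := fin_extend {i : Fin t | (a, i) ∈ s} (fun i => (h (a, i)).2) hinj2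
    exact ⟨e, fun i hi => he i hi⟩
  choose τ hτval using hτ
  refine ⟨gtAuto σ τ, ?_⟩
  rintro ⟨a, i⟩ hx
  show (σ a, τ a i) = h (a, i)
  rw [hτval a i hx, hσ a ⟨(a, i), hx, rfl⟩, hσ₀val (a, i) hx]

/-- Part coordinate of a vertex of the disjoint sum. -/
def cV {t : ℕ} : (ℤ × Fin t) ⊕ (ℤ × Fin t) → ℤ := Sum.elim Prod.fst Prod.fst

/-- Payload of a vertex of the disjoint sum. -/
def payV {t : ℕ} : (ℤ × Fin t) ⊕ (ℤ × Fin t) → ℤ × Fin t := Sum.elim id id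

lemma ht1_adj {t : ℕ} (x y : (ℤ × Fin t) ⊕ (ℤ × Fin t)) :
    (Gt t ⊕g Gt t).Adj x y ↔ (x.isLeft = y.isLeft ∧ cV x ≠ cV y) := by
  rcases x with x | x <;> rcases y with y | y <;>
    simp [SimpleGraph.sum, Gt, cV]

lemma payV_left {t : ℕ} {x : (ℤ × Fin t) ⊕ (ℤ × Fin t)} (h : x.isLeft = true) :
    Sum.inl (payV x) = x := by
  rcases x with x | x <;> simp_all [payV]

lemma payV_right {t : ℕ} {x : (ℤ × Fin t) ⊕ (ℤ × Fin t)} (h : x.isLeft = false) :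
    Sum.inr (payV x) = x := by
  rcases x with x | x <;> simp_all [payV]

lemma cV_payV {t : ℕ} (x : (ℤ × Fin t) ⊕ (ℤ × Fin t)) : (payV x).1 = cV x := by
  rcases x with x | x <;> rfl

lemma payV_inj {t : ℕ} (x y : (ℤ × Fin t) ⊕ (ℤ × Fin t))
    (h1 : x.isLeft = y.isLeft) (h2 : payV x = payV y) : x = y := by
  rcases x with x | x <;> rcases y with y | y <;> simp_all [payV]

/-- Automorphism of the disjoint sum preserving the two copies. -/
def sumStraight {t : ℕ} (g₁ g₂ : Gt t ≃g Gt t) : (Gt t ⊕g Gt t) ≃g (Gt t ⊕g Gt t) where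
  toEquiv := Equiv.sumCongr g₁.toEquiv g₂.toEquiv
  map_rel_iff' := by
    rintro (u | u) (v | v) <;>
      simp [SimpleGraph.sum, g₁.map_rel_iff, g₂.map_rel_iff]

/-- Automorphism of the disjoint sum swapping the two copies. -/
def sumCross {t : ℕ} (g₁ g₂ : Gt t ≃g Gt t) : (Gt t ⊕g Gt t) ≃g (Gt t ⊕g Gt t) where
  toEquiv := (Equiv.sumCongr g₁.toEquiv g₂.toEquiv).trans (Equiv.sumComm _ _)
  map_rel_iff' := by
    rintro (u | u) (v | v) <;>
      simp [SimpleGraph.sum, g₁.map_rel_iff, g₂.map_rel_iff]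
set_option maxHeartbeats 1600000 in
theorem stmt15 (t : ℕ) (ht : 2 ≤ t) :
    GeqHom (Gt t ⊕g Gt t) (2 * t + 1) := by
  classical
  intro n hn s u hsf huf hscard hucard f
  -- basic transfer lemmas
  have fadj : ∀ x y : ↥s, (Gt t ⊕g Gt t).Adj (f x).val (f y).val ↔ (Gt t ⊕g Gt t).Adj x.val y.val :=
    fun x y => f.map_adj_iff
  let R : Set ((ℤ × Fin t) ⊕ (ℤ × Fin t)) → _ → _ → Prop := fun w x y =>
    x = y ∨ (Gt t ⊕g Gt t).Adj x y ∨ ∃ z ∈ w, (Gt t ⊕g Gt t).Adj x z ∧ (Gt t ⊕g Gt t).Adj z y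
  have fR : ∀ x y : ↥s, R u (f x).val (f y).val ↔ R s x.val y.val := by
    intro x y
    constructor
    · rintro (h | h | ⟨z, hz, h1, h2⟩)
      · exact Or.inl (congrArg Subtype.val (f.injective (Subtype.ext h)))
      · exact Or.inr (Or.inl ((fadj x y).mp h))
      · refine Or.inr (Or.inr ⟨(f.symm ⟨z, hz⟩).val, (f.symm ⟨z, hz⟩).2, ?_, ?_⟩)
        · have := (fadj x (f.symm ⟨z, hz⟩)).mp (by rw [f.apply_symm_apply]; exact h1)
          exact this
        · have := (fadj (f.symm ⟨z, hz⟩) y).mp (by rw [f.apply_symm_apply]; exact h2)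
          exact this
    · rintro (h | h | ⟨z, hz, h1, h2⟩)
      · exact Or.inl (congrArg Subtype.val (congrArg f (Subtype.ext h)))
      · exact Or.inr (Or.inl ((fadj x y).mpr h))
      · exact Or.inr (Or.inr ⟨(f ⟨z, hz⟩).val, (f ⟨z, hz⟩).2,
          (fadj x ⟨z, hz⟩).mpr h1, (fadj ⟨z, hz⟩ y).mpr h2⟩)
  have K2 : ∀ (w : Set ((ℤ × Fin t) ⊕ (ℤ × Fin t))) (x y : (ℤ × Fin t) ⊕ (ℤ × Fin t)),
      x.isLeft ≠ y.isLeft → ¬ R w x y := by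
    rintro w x y hne (rfl | hadj | ⟨z, hz, h1, h2⟩)
    · exact hne rfl
    · exact hne ((ht1_adj _ _).mp hadj).1
    · exact hne (((ht1_adj _ _).mp h1).1.trans ((ht1_adj _ _).mp h2).1)
  have Rside : ∀ (w : Set ((ℤ × Fin t) ⊕ (ℤ × Fin t))) (x y : (ℤ × Fin t) ⊕ (ℤ × Fin t)),
      R w x y → x.isLeft = y.isLeft := by
    intro w x y h
    by_contra hc
    exact K2 w x y hc h
  let MP : Set ((ℤ × Fin t) ⊕ (ℤ × Fin t)) → Bool → Prop := fun w b =>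
    ∃ p ∈ w, p.isLeft = b ∧ ∃ q ∈ w, q.isLeft = b ∧ cV p ≠ cV q
  have K1 : ∀ (w : Set ((ℤ × Fin t) ⊕ (ℤ × Fin t))) (x y : (ℤ × Fin t) ⊕ (ℤ × Fin t)),
      x ∈ w → y ∈ w → x.isLeft = y.isLeft → MP w x.isLeft → R w x y := by
    intro w x y hx hy hside hmp
    obtain ⟨p, hp, hpb, q, hq, hqb, hpq⟩ := hmp
    by_cases hc : cV x = cV y
    · have hor : cV p ≠ cV x ∨ cV q ≠ cV x := by
        by_contra hcon
        push_neg at hcon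
        exact hpq (hcon.1.trans hcon.2.symm)
      obtain ⟨z, hz, hzb, hzc⟩ : ∃ z ∈ w, z.isLeft = x.isLeft ∧ cV z ≠ cV x := by
        rcases hor with h | h
        exacts [⟨p, hp, hpb, h⟩, ⟨q, hq, hqb, h⟩]
      refine Or.inr (Or.inr ⟨z, hz, (ht1_adj _ _).mpr ⟨hzb.symm, fun e => hzc e.symm⟩,
        (ht1_adj _ _).mpr ⟨hzb.trans hside, ?_⟩⟩)
      rw [← hc]
      exact hzc
    · exact Or.inr (Or.inl ((ht1_adj _ _).mpr ⟨hside, hc⟩))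
  have bigMP : ∀ w : Set ((ℤ × Fin t) ⊕ (ℤ × Fin t)), w.ncard = n → MP w true ∨ MP w false := by
    intro w hw
    by_contra hcon
    push_neg at hcon
    have hsame : ∀ x ∈ w, ∀ y ∈ w, x.isLeft = y.isLeft → cV x = cV y := by
      intro x hx y hy hxy
      by_contra hc
      cases hb : x.isLeft
      · exact hcon.2 ⟨x, hx, hb, y, hy, by rw [← hxy, hb], hc⟩
      · exact hcon.1 ⟨x, hx, hb, y, hy, by rw [← hxy, hb], hc⟩
    have hinj : Set.InjOn (Sum.map Prod.snd Prod.snd) w := by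
      rintro (x | x) hx (y | y) hy hxy
      · simp only [Sum.map_inl, Sum.inl.injEq] at hxy ⊢
        exact Prod.ext (hsame _ hx _ hy rfl) hxy
      · simp at hxy
      · simp at hxy
      · simp only [Sum.map_inr, Sum.inr.injEq] at hxy ⊢
        exact Prod.ext (hsame _ hx _ hy rfl) hxy
    have h1 : w.ncard = (Sum.map Prod.snd Prod.snd '' w).ncard :=
      (Set.ncard_image_of_injOn hinj).symm
    have h2 : (Sum.map Prod.snd Prod.snd '' w).ncard ≤ (Set.univ : Set (Fin t ⊕ Fin t)).ncard :=
      Set.ncard_le_ncard (Set.subset_univ _) Set.finite_univ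
    rw [Set.ncard_univ, Nat.card_eq_fintype_card] at h2
    simp only [Fintype.card_sum, Fintype.card_fin] at h2
    omega
  let Isol : Set ((ℤ × Fin t) ⊕ (ℤ × Fin t)) → _ → Prop := fun w x => ∀ z ∈ w, ¬ (Gt t ⊕g Gt t).Adj x z
  have fIsol : ∀ x : ↥s, Isol s x.val → Isol u (f x).val := by
    intro x hx z hz hadj
    have hz' : z = (f (f.symm ⟨z, hz⟩)).val := by rw [f.apply_symm_apply]
    rw [hz'] at hadj
    exact hx _ (f.symm ⟨z, hz⟩).2 ((fadj x (f.symm ⟨z, hz⟩)).mp hadj)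
  -- side coherence
  have C1 : ∃ b : Bool, ∀ x : ↥s, (f x).val.isLeft = (x.val.isLeft == b) := by
    have const : ∀ b : Bool, MP s b → ∀ x y : ↥s, x.val.isLeft = b → y.val.isLeft = b →
        (f x).val.isLeft = (f y).val.isLeft := by
      intro b hmp x y hx hy
      exact Rside u _ _ ((fR x y).mpr (K1 s x.val y.val x.2 y.2 (hx.trans hy.symm)
        (by rw [hx]; exact hmp)))
    have mpu : ∀ b : Bool, MP s b → ∀ x₀ : ↥s, x₀.val.isLeft = b →
        MP u ((f x₀).val.isLeft) := by
      intro b hmp x₀ hx₀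
      obtain ⟨p, hp, hpb, q, hq, hqb, hpq⟩ := id hmp
      have hadj : (Gt t ⊕g Gt t).Adj p q := (ht1_adj _ _).mpr ⟨hpb.trans hqb.symm, hpq⟩
      have hadj' : (Gt t ⊕g Gt t).Adj (f ⟨p, hp⟩).val (f ⟨q, hq⟩).val := (fadj _ _).mpr hadj
      have h1 := (ht1_adj _ _).mp hadj'
      have hfp : (f ⟨p, hp⟩).val.isLeft = (f x₀).val.isLeft :=
        const b hmp ⟨p, hp⟩ x₀ hpb hx₀
      exact ⟨_, (f ⟨p, hp⟩).2, hfp, _, (f ⟨q, hq⟩).2, h1.1.symm.trans hfp, h1.2⟩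
    by_cases hT : MP s true <;> by_cases hF : MP s false
    · obtain ⟨p, hp, hpb, -⟩ := id hT
      obtain ⟨p', hp', hpb', -⟩ := id hF
      have hneq : (f ⟨p, hp⟩).val.isLeft ≠ (f ⟨p', hp'⟩).val.isLeft := by
        intro heq
        have hall : ∀ y : ↥u, y.val.isLeft = (f ⟨p, hp⟩).val.isLeft := by
          intro y
          obtain ⟨x, rfl⟩ := f.surjective y
          cases hxb : x.val.isLeft
          · rw [const false hF x ⟨p', hp'⟩ hxb hpb', ← heq]
          · exact const true hT x ⟨p, hp⟩ hxb hpb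
        have hmpu : MP u ((f ⟨p, hp⟩).val.isLeft) := by
          rcases bigMP u hucard with h | h <;>
            · obtain ⟨P, hP, hPb, Q, hQ, hQb, hPQ⟩ := h
              exact ⟨P, hP, hall ⟨P, hP⟩, Q, hQ, hall ⟨Q, hQ⟩, hPQ⟩
        have hru : R u (f ⟨p, hp⟩).val (f ⟨p', hp'⟩).val :=
          K1 u _ _ (f ⟨p, hp⟩).2 (f ⟨p', hp'⟩).2 heq hmpu
        exact K2 s p p' (by rw [hpb, hpb']; simp) ((fR _ _).mp hru)
      refine ⟨(f ⟨p, hp⟩).val.isLeft, fun x => ?_⟩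
      cases hxb : x.val.isLeft
      · rw [const false hF x ⟨p', hp'⟩ hxb hpb']
        revert hneq
        cases (f ⟨p, hp⟩).val.isLeft <;> cases (f ⟨p', hp'⟩).val.isLeft <;> simp
      · rw [const true hT x ⟨p, hp⟩ hxb hpb]
        simp
    · -- left multipart, right single-part
      obtain ⟨p, hp, hpb, -⟩ := id hT
      have hmpu := mpu true hT ⟨p, hp⟩ hpb
      refine ⟨(f ⟨p, hp⟩).val.isLeft, fun x => ?_⟩
      cases hxb : x.val.isLeft
      · have hiso : Isol s x.val := by
          intro z hz hadj
          have h1 := (ht1_adj _ _).mp hadj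
          cases hzb : z.isLeft
          · exact hF ⟨x.val, x.2, hxb, z, hz, hzb, h1.2⟩
          · rw [hxb, hzb] at h1
            exact absurd h1.1 (by simp)
        have hiso' : Isol u (f x).val := fIsol x hiso
        have hne : (f x).val.isLeft ≠ (f ⟨p, hp⟩).val.isLeft := by
          intro heq
          obtain ⟨P, hP, hPb, Q, hQ, hQb, hPQ⟩ := hmpu
          by_cases hcP : cV (f x).val = cV P
          · exact hiso' Q hQ ((ht1_adj _ _).mpr ⟨heq.trans hQb.symm, hcP ▸ hPQ⟩)
          · exact hiso' P hP ((ht1_adj _ _).mpr ⟨heq.trans hPb.symm, hcP⟩)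
        revert hne
        cases (f x).val.isLeft <;> cases (f ⟨p, hp⟩).val.isLeft <;> simp
      · rw [const true hT x ⟨p, hp⟩ hxb hpb]
        simp
    · -- right multipart, left single-part
      obtain ⟨p, hp, hpb, -⟩ := id hF
      have hmpu := mpu false hF ⟨p, hp⟩ hpb
      refine ⟨!(f ⟨p, hp⟩).val.isLeft, fun x => ?_⟩
      cases hxb : x.val.isLeft
      · rw [const false hF x ⟨p, hp⟩ hxb hpb]
        cases (f ⟨p, hp⟩).val.isLeft <;> simp
      · have hiso : Isol s x.val := by
          intro z hz hadj
          have h1 := (ht1_adj _ _).mp hadj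
          cases hzb : z.isLeft
          · rw [hxb, hzb] at h1
            exact absurd h1.1 (by simp)
          · exact hT ⟨x.val, x.2, hxb, z, hz, hzb, h1.2⟩
        have hiso' : Isol u (f x).val := fIsol x hiso
        have hne : (f x).val.isLeft ≠ (f ⟨p, hp⟩).val.isLeft := by
          intro heq
          obtain ⟨P, hP, hPb, Q, hQ, hQb, hPQ⟩ := hmpu
          by_cases hcP : cV (f x).val = cV P
          · exact hiso' Q hQ ((ht1_adj _ _).mpr ⟨heq.trans hQb.symm, hcP ▸ hPQ⟩)
          · exact hiso' P hP ((ht1_adj _ _).mpr ⟨heq.trans hPb.symm, hcP⟩)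
        revert hne
        cases (f x).val.isLeft <;> cases (f ⟨p, hp⟩).val.isLeft <;> simp
    · exfalso
      rcases bigMP s hscard with h | h
      exacts [hT h, hF h]
  obtain ⟨b, hb⟩ := C1
  -- the partial map on vertices
  let h : ((ℤ × Fin t) ⊕ (ℤ × Fin t)) → ((ℤ × Fin t) ⊕ (ℤ × Fin t)) := fun v =>
    if hv : v ∈ s then (f ⟨v, hv⟩).val else v
  have hval : ∀ x : ↥s, h x.val = (f x).val := by
    rintro ⟨v, hv⟩
    exact dif_pos hv
  have hleft : ∀ x : ↥s, (h x.val).isLeft = (x.val.isLeft == b) := by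
    intro x
    rw [hval x]
    exact hb x
  have hinjh : ∀ x y : ↥s, h x.val = h y.val → x = y := by
    intro x y hxy
    rw [hval x, hval y] at hxy
    exact f.injective (Subtype.ext hxy)
  -- build the two halves
  have buildHalf : ∀ (em : (ℤ × Fin t) → ((ℤ × Fin t) ⊕ (ℤ × Fin t))),
      (∀ w w', (em w).isLeft = (em w').isLeft) →
      (∀ w, cV (em w) = w.1) →
      (Function.Injective em) →
      ∃ g : Gt t ≃g Gt t, ∀ w, em w ∈ s → g w = payV (h (em w)) := by
    intro em hemside hemc heminj
    set sE : Set (ℤ × Fin t) := em ⁻¹' s with hsE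
    have hsEfin : sE.Finite := hsf.preimage (Set.injOn_of_injective heminj)
    apply gt_extend (by omega) sE hsEfin
    · -- injectivity
      intro w hw w' hw' hww
      have hside : (h (em w)).isLeft = (h (em w')).isLeft := by
        rw [hleft ⟨em w, hw⟩, hleft ⟨em w', hw'⟩, hemside w w']
      have := payV_inj _ _ hside hww
      have := hinjh ⟨em w, hw⟩ ⟨em w', hw'⟩ this
      exact heminj (congrArg Subtype.val this)
    · -- part preservation
      intro w hw w' hw'
      rw [cV_payV, cV_payV]
      have hside : (h (em w)).isLeft = (h (em w')).isLeft := by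
        rw [hleft ⟨em w, hw⟩, hleft ⟨em w', hw'⟩, hemside w w']
      have hadjiff : (Gt t ⊕g Gt t).Adj (h (em w)) (h (em w')) ↔ (Gt t ⊕g Gt t).Adj (em w) (em w') := by
        rw [hval ⟨em w, hw⟩, hval ⟨em w', hw'⟩]
        exact fadj ⟨em w, hw⟩ ⟨em w', hw'⟩
      constructor
      · intro hc
        by_contra hne
        have hadj : (Gt t ⊕g Gt t).Adj (em w) (em w') := (ht1_adj _ _).mpr
          ⟨hemside w w', by rw [hemc, hemc]; exact hne⟩
        exact ((ht1_adj _ _).mp (hadjiff.mpr hadj)).2 hc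
      · intro hc
        by_contra hne
        have hadj : (Gt t ⊕g Gt t).Adj (h (em w)) (h (em w')) := (ht1_adj _ _).mpr ⟨hside, hne⟩
        have := ((ht1_adj _ _).mp (hadjiff.mp hadj)).2
        rw [hemc, hemc] at this
        exact this hc
  obtain ⟨gL, hgL⟩ := buildHalf Sum.inl (fun _ _ => rfl) (fun _ => rfl) Sum.inl_injective
  obtain ⟨gR, hgR⟩ := buildHalf Sum.inr (fun _ _ => rfl) (fun _ => rfl) Sum.inr_injective
  cases b
  · -- cross case
    refine ⟨sumCross gL gR, ?_⟩
    rintro ⟨v, hv⟩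
    rcases v with w | w
    · show Sum.inr (gL w) = _
      rw [hgL w hv, ← hval ⟨Sum.inl w, hv⟩]
      exact payV_right (by rw [hleft ⟨Sum.inl w, hv⟩]; rfl)
    · show Sum.inl (gR w) = _
      rw [hgR w hv, ← hval ⟨Sum.inr w, hv⟩]
      exact payV_left (by rw [hleft ⟨Sum.inr w, hv⟩]; rfl)
  · -- straight case
    refine ⟨sumStraight gL gR, ?_⟩
    rintro ⟨v, hv⟩
    rcases v with w | w
    · show Sum.inl (gL w) = _
      rw [hgL w hv, ← hval ⟨Sum.inl w, hv⟩]
      exact payV_left (by rw [hleft ⟨Sum.inl w, hv⟩]; rfl)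
    · show Sum.inr (gR w) = _
      rw [hgR w hv, ← hval ⟨Sum.inr w, hv⟩]
      exact payV_right (by rw [hleft ⟨Sum.inr w, hv⟩]; rfl)
end
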